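/- arXiv:2502.21204 — 3 statements merged into one kernel-verified Lean document; each statement's English description precedes it below -/
import Mathlib

section
/- Let T = (V,E) be a tree with |V| > 3 and no internal vertex of degree 2. Then the set { x ∈ ℝ^E : x_e ≥ 0 for all e ∈ E with neither endpoint of degree 3; −x_{{u,v}} + ∑_{w ∈ N(u)\{v}} x_{{u,w}} ≥ 0 for all internal u and v ∈ N(u); ∑_{e ∈ E_leaf(T)} x_e = 2 } equals the path polytope P_T. -/
open Classical SimpleGraph

noncomputable section

variable {V : Type*}

/-- A leaf: a vertex with exactly one neighbor. -/
def IsLeaf (G : SimpleGraph V) (v : V) : Prop := ∃! w, G.Adj v w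

/-- `e` is an edge on the (unique, for trees) path between `i` and `j`. -/
def onPath (G : SimpleGraph V) (i j : V) (e : Sym2 V) : Prop :=
  ∃ p : G.Walk i j, p.IsPath ∧ e ∈ p.edges

/-- The edge indicator vector `c^{i↔j}` of the path between `i` and `j`. -/
def pathVec (G : SimpleGraph V) (i j : V) : Sym2 V → ℝ :=
  fun e => if onPath G i j e then 1 else 0

/-- The path polytope `P_T`: the convex hull of the indicator vectors of the
paths between pairs of distinct leaves. -/
def pathPolytope (G : SimpleGraph V) : Set (Sym2 V → ℝ) :=
  convexHull ℝ {x | ∃ i j : V, i ≠ j ∧ IsLeaf G i ∧ IsLeaf G j ∧ x = pathVec G i j}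

/-- `E_leaf(T)`: edges incident to at least one leaf. -/
def leafEdges (G : SimpleGraph V) : Set (Sym2 V) :=
  {e | e ∈ G.edgeSet ∧ ∃ v ∈ e, IsLeaf G v}

/-- A face of `P`: the intersection of `P` with the boundary hyperplane of a valid
linear inequality. -/
def IsFaceOf {E : Type*} [AddCommGroup E] [Module ℝ E] (P F : Set E) : Prop :=
  ∃ (a : E →ₗ[ℝ] ℝ) (b : ℝ), (∀ x ∈ P, a x ≤ b) ∧ F = {x ∈ P | a x = b}

/-- The dimension of a polytope: the rank of the direction of its affine span. -/
def polyDim {E : Type*} [AddCommGroup E] [Module ℝ E] (P : Set E) : ℕ :=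
  Module.finrank ℝ (affineSpan ℝ P).direction

/-- A facet: a face of dimension `dim P − 1`. -/
def IsFacetOf {E : Type*} [AddCommGroup E] [Module ℝ E] (P F : Set E) : Prop :=
  IsFaceOf P F ∧ polyDim F + 1 = polyDim P

namespace PPAux

open Finset

set_option linter.unusedSectionVars false

variable [Fintype V] {G : SimpleGraph V}

/-- The vertex-inequality linear functional as a Finset sum. -/
def Lf (G : SimpleGraph V) [Fintype V] (x : Sym2 V → ℝ) (u v : V) : ℝ :=
  -x s(u,v) + ∑ w ∈ (G.neighborFinset u).erase v, x s(u,w)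

lemma coe_erase_nbr (u v : V) :
    (G.neighborSet u \ {v} : Set V) = ↑((G.neighborFinset u).erase v) := by
  ext w; simp [Set.mem_diff, and_comm]

lemma finsum_nbr (x : Sym2 V → ℝ) (u v : V) :
    ∑ᶠ w ∈ G.neighborSet u \ {v}, x s(u,w) = ∑ w ∈ (G.neighborFinset u).erase v, x s(u,w) := by
  rw [coe_erase_nbr, finsum_mem_coe_finset]

/-- Leaf edges as a Finset. -/
def LE (G : SimpleGraph V) [Fintype V] : Finset (Sym2 V) :=
  G.edgeFinset.filter (fun e => ∃ v ∈ e, IsLeaf G v)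

lemma leafEdges_coe : leafEdges G = ↑(LE G) := by
  ext e; simp [leafEdges, LE, SimpleGraph.mem_edgeFinset]

lemma finsum_leaf (x : Sym2 V → ℝ) :
    ∑ᶠ e ∈ leafEdges G, x e = ∑ e ∈ LE G, x e := by
  rw [leafEdges_coe, finsum_mem_coe_finset]

lemma leaf_iff_card {u : V} : IsLeaf G u ↔ (G.neighborFinset u).card = 1 := by
  rw [Finset.card_eq_one]
  constructor
  · rintro ⟨w, hw, hu⟩
    refine ⟨w, ?_⟩
    ext z
    simp only [SimpleGraph.mem_neighborFinset, Finset.mem_singleton]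
    exact ⟨fun h => hu z h, fun h => h ▸ hw⟩
  · rintro ⟨w, hw⟩
    refine ⟨w, ?_, fun z hz => ?_⟩
    · have : w ∈ G.neighborFinset u := hw ▸ Finset.mem_singleton_self w
      simpa using this
    · have : z ∈ G.neighborFinset u := by simpa using hz
      simpa [hw] using this

lemma ncard_nbr (u : V) : (G.neighborSet u).ncard = (G.neighborFinset u).card := by
  rw [SimpleGraph.neighborFinset_def]; simp [Set.ncard_eq_toFinset_card']

lemma mem_support_of_mem_edges {a b v : V} (p : G.Walk a b) {e : Sym2 V}
    (he : e ∈ p.edges) (hv : v ∈ e) : v ∈ p.support := by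
  induction e with
  | _ x y =>
    rcases Sym2.mem_iff.mp hv with rfl | rfl
    · exact p.fst_mem_support_of_mem_edges he
    · exact p.snd_mem_support_of_mem_edges he

/-- The neighbors of `u` along edges of the walk `p`. -/
def edgesAt (G : SimpleGraph V) [Fintype V] {i j : V} (p : G.Walk i j) (u : V) : Finset V :=
  (G.neighborFinset u).filter (fun w => s(u,w) ∈ p.edges)

lemma edgesAt_eq_empty {i j u : V} {p : G.Walk i j} (hu : u ∉ p.support) :
    edgesAt G p u = ∅ := by
  simp only [edgesAt]
  rw [Finset.filter_eq_empty_iff]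
  intro w _ hw
  exact hu (mem_support_of_mem_edges p hw (Sym2.mem_mk_left u w))

lemma card_edgesAt {i j : V} (p : G.Walk i j) (hp : p.IsPath) : ∀ u ∈ p.support,
    (edgesAt G p u).card = (if u = i then 0 else 1) + (if u = j then 0 else 1) := by
  induction p with
  | nil =>
    intro u hu
    simp only [SimpleGraph.Walk.support_nil, List.mem_singleton] at hu
    subst hu
    simp [edgesAt]
  | @cons i b j h q ih =>
    intro u hu
    rw [SimpleGraph.Walk.cons_isPath_iff] at hp
    obtain ⟨hq, hiq⟩ := hp
    have hij : i ≠ j := fun hij => hiq (hij ▸ q.end_mem_support)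
    by_cases hui : u = i
    · subst hui
      have : edgesAt G (SimpleGraph.Walk.cons h q) u = {b} := by
        ext w
        simp only [edgesAt, Finset.mem_filter, SimpleGraph.mem_neighborFinset,
          SimpleGraph.Walk.edges_cons, List.mem_cons, Finset.mem_singleton]
        constructor
        · rintro ⟨hadj, heq | hmem⟩
          · rcases Sym2.eq_iff.mp heq with ⟨-, rfl⟩ | ⟨rfl, rfl⟩
            · rfl
            · rfl
          · exact absurd (mem_support_of_mem_edges q hmem (Sym2.mem_mk_left u w)) hiq
        · rintro rfl
          exact ⟨h, Or.inl rfl⟩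
      rw [this]
      simp [hij]
    · have huq : u ∈ q.support := by
        rw [SimpleGraph.Walk.support_cons] at hu
        rcases List.mem_cons.mp hu with rfl | h'
        · exact absurd rfl hui
        · exact h'
      by_cases hub : u = b
      · subst hub
        have hinotin : i ∉ edgesAt G q u := by
          intro hmem
          simp only [edgesAt, Finset.mem_filter] at hmem
          exact hiq (mem_support_of_mem_edges q hmem.2 (Sym2.mem_mk_right u i))
        have : edgesAt G (SimpleGraph.Walk.cons h q) u = insert i (edgesAt G q u) := by
          ext w
          simp only [edgesAt, Finset.mem_filter, SimpleGraph.mem_neighborFinset,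
            SimpleGraph.Walk.edges_cons, List.mem_cons, Finset.mem_insert]
          constructor
          · rintro ⟨hadj, heq | hmem⟩
            · rcases Sym2.eq_iff.mp heq with ⟨rfl, rfl⟩ | ⟨h1, rfl⟩
              · exact absurd rfl hui
              · exact Or.inl rfl
            · exact Or.inr ⟨hadj, hmem⟩
          · rintro (rfl | ⟨hadj, hmem⟩)
            · exact ⟨h.symm, Or.inl (Sym2.eq_swap)⟩
            · exact ⟨hadj, Or.inr hmem⟩
        rw [this, Finset.card_insert_of_notMem hinotin, ih hq u huq]
        by_cases h2 : u = j <;> simp [h2, hui, Ne.symm hij]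
      · have : edgesAt G (SimpleGraph.Walk.cons h q) u = edgesAt G q u := by
          ext w
          simp only [edgesAt, Finset.mem_filter, SimpleGraph.mem_neighborFinset,
            SimpleGraph.Walk.edges_cons, List.mem_cons]
          constructor
          · rintro ⟨hadj, heq | hmem⟩
            · rcases Sym2.eq_iff.mp heq with ⟨rfl, rfl⟩ | ⟨rfl, rfl⟩
              · exact absurd rfl hui
              · exact absurd rfl hub
            · exact ⟨hadj, hmem⟩
          · rintro ⟨hadj, hmem⟩
            exact ⟨hadj, Or.inr hmem⟩
        rw [this, ih hq u huq]
        simp [hui, hub]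

def NN (G : SimpleGraph V) (x : Sym2 V → ℝ) : Prop := ∀ e ∈ G.edgeSet, 0 ≤ x e

def VI (G : SimpleGraph V) [Fintype V] (x : Sym2 V → ℝ) : Prop :=
  ∀ u, ¬IsLeaf G u → ∀ v ∈ G.neighborFinset u, 0 ≤ Lf G x u v

lemma path_eq (hG : G.IsTree) {a b : V} {p p' : G.Walk a b} (hp : p.IsPath) (hp' : p'.IsPath) :
    p = p' :=
  congrArg Subtype.val (isAcyclic_iff_path_unique.mp hG.2 (⟨p, hp⟩ : G.Path a b) ⟨p', hp'⟩)

lemma not_mem_support_of_ne (hG : G.IsTree) {w d i c : V} (hd : G.Adj w d) (p' : G.Walk d i)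
    (hp : (SimpleGraph.Walk.cons hd p').IsPath) (hc : G.Adj c w) (hcd : c ≠ d) :
    c ∉ (SimpleGraph.Walk.cons hd p').support := by
  intro hcs
  rw [SimpleGraph.Walk.support_cons] at hcs
  rcases List.mem_cons.mp hcs with rfl | hcsup
  · exact hc.ne rfl
  · rw [SimpleGraph.Walk.cons_isPath_iff] at hp
    obtain ⟨hp', hwp⟩ := hp
    have htUpath : (p'.takeUntil c hcsup).IsPath := hp'.takeUntil hcsup
    have hwnotin : w ∉ (p'.takeUntil c hcsup).support :=
      fun hw => hwp (p'.support_takeUntil_subset hcsup hw)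
    have hP2 : (SimpleGraph.Walk.cons hd (p'.takeUntil c hcsup)).IsPath :=
      (SimpleGraph.Walk.cons_isPath_iff _ _).mpr ⟨htUpath, hwnotin⟩
    have hP1 : (SimpleGraph.Walk.cons hc.symm SimpleGraph.Walk.nil).IsPath := by
      rw [SimpleGraph.Walk.cons_isPath_iff]
      exact ⟨SimpleGraph.Walk.IsPath.nil, by simp [hc.ne']⟩
    have heq := path_eq hG hP2 hP1
    have hsup := congrArg SimpleGraph.Walk.support heq
    rw [SimpleGraph.Walk.support_cons, SimpleGraph.Walk.support_cons,
      SimpleGraph.Walk.support_nil, (p'.takeUntil c hcsup).support_eq_cons] at hsup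
    simp only [List.cons.injEq] at hsup
    exact hcd hsup.2.1.symm

lemma exists_next {x : Sym2 V → ℝ} (hx0 : NN G x) (hxV : VI G x) {w d : V} (hwd : G.Adj w d)
    (hw : ¬ IsLeaf G w) (hpos : 0 < x s(w,d)) :
    ∃ c ∈ (G.neighborFinset w).erase d, 0 < x s(w,c) ∧
      ∀ v ∈ (G.neighborFinset w).erase d, Lf G x w v = 0 → v = c := by
  have hnbr : ∀ z ∈ G.neighborFinset w, 0 ≤ x s(w,z) := by
    intro z hz
    exact hx0 _ (by rwa [SimpleGraph.mem_edgeSet, ← SimpleGraph.mem_neighborFinset])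
  have hd : d ∈ G.neighborFinset w := by rwa [SimpleGraph.mem_neighborFinset]
  by_cases hT : ∃ v ∈ (G.neighborFinset w).erase d, Lf G x w v = 0
  · obtain ⟨c, hcmem, hc0⟩ := hT
    have hcnbr : c ∈ G.neighborFinset w := Finset.mem_of_mem_erase hcmem
    have hcd : c ≠ d := Finset.ne_of_mem_erase hcmem
    have hdc : d ∈ (G.neighborFinset w).erase c := Finset.mem_erase.mpr ⟨fun h => hcd h.symm, hd⟩
    have hsum : x s(w,c) = ∑ z ∈ (G.neighborFinset w).erase c, x s(w,z) := by
      have := hc0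
      simp only [Lf] at this
      linarith
    have hxc : 0 < x s(w,c) := by
      have h1 : x s(w,d) ≤ ∑ z ∈ (G.neighborFinset w).erase c, x s(w,z) :=
        Finset.single_le_sum (fun z hz => hnbr z (Finset.mem_of_mem_erase hz)) hdc
      linarith
    refine ⟨c, hcmem, hxc, fun v hvmem hv0 => ?_⟩
    by_contra hvc
    have hvnbr : v ∈ G.neighborFinset w := Finset.mem_of_mem_erase hvmem
    have hvd : v ≠ d := Finset.ne_of_mem_erase hvmem
    have hsv : x s(w,v) = ∑ z ∈ (G.neighborFinset w).erase v, x s(w,z) := by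
      simp only [Lf] at hv0; linarith
    have hsub1 : ({c, d} : Finset V) ⊆ (G.neighborFinset w).erase v := by
      intro z hz
      rcases Finset.mem_insert.mp hz with rfl | hz
      · exact Finset.mem_erase.mpr ⟨fun h => hvc h.symm, hcnbr⟩
      · rw [Finset.mem_singleton] at hz; subst hz
        exact Finset.mem_erase.mpr ⟨fun h => hvd h.symm, hd⟩
    have hsub2 : ({v, d} : Finset V) ⊆ (G.neighborFinset w).erase c := by
      intro z hz
      rcases Finset.mem_insert.mp hz with rfl | hz
      · exact Finset.mem_erase.mpr ⟨hvc, hvnbr⟩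
      · rw [Finset.mem_singleton] at hz; subst hz
        exact Finset.mem_erase.mpr ⟨fun h => hcd h.symm, hd⟩
    have h1 : x s(w,c) + x s(w,d) ≤ ∑ z ∈ (G.neighborFinset w).erase v, x s(w,z) := by
      have := Finset.sum_le_sum_of_subset_of_nonneg hsub1
        (fun z hz _ => hnbr z (Finset.mem_of_mem_erase hz))
      rwa [Finset.sum_pair hcd] at this
    have h2 : x s(w,v) + x s(w,d) ≤ ∑ z ∈ (G.neighborFinset w).erase c, x s(w,z) := by
      have := Finset.sum_le_sum_of_subset_of_nonneg hsub2
        (fun z hz _ => hnbr z (Finset.mem_of_mem_erase hz))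
      rwa [Finset.sum_pair hvd] at this
    linarith
  · push_neg at hT
    have hVd := hxV w hw d hd
    simp only [Lf] at hVd
    have hsum : 0 < ∑ z ∈ (G.neighborFinset w).erase d, x s(w,z) := by linarith
    have : ∃ c ∈ (G.neighborFinset w).erase d, 0 < x s(w,c) := by
      by_contra hall
      push_neg at hall
      have : ∑ z ∈ (G.neighborFinset w).erase d, x s(w,z) ≤ 0 :=
        Finset.sum_nonpos hall
      linarith
    obtain ⟨c, hcmem, hxc⟩ := this
    exact ⟨c, hcmem, hxc, fun v hvmem hv0 => absurd hv0 (hT v hvmem)⟩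

/-- All edges of the walk carry positive `x`. -/
def posOn (x : Sym2 V → ℝ) {a b : V} (p : G.Walk a b) : Prop := ∀ e ∈ p.edges, 0 < x e

/-- Carefulness invariant: tight vertex inequalities at interior vertices point along the walk. -/
def CInv (x : Sym2 V → ℝ) {a b : V} (p : G.Walk a b) : Prop :=
  ∀ u ∈ p.support, ¬IsLeaf G u → u ≠ a → u ≠ b →
    ∀ v ∈ G.neighborFinset u, Lf G x u v = 0 → s(u,v) ∈ p.edges

lemma step {x : Sym2 V → ℝ} (hG : G.IsTree) (hx0 : NN G x) (hxV : VI G x) {w i : V}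
    (p : G.Walk w i) (hp : p.IsPath) (hlen : 1 ≤ p.length) (hpos : posOn x p)
    (hCI : CInv x p) (hw : ¬ IsLeaf G w) :
    ∃ (c : V) (h' : G.Adj c w), (SimpleGraph.Walk.cons h' p).IsPath ∧
      posOn x (SimpleGraph.Walk.cons h' p) ∧ CInv x (SimpleGraph.Walk.cons h' p) := by
  cases p with
  | nil => simp at hlen
  | @cons w d i hd p' =>
    have hposd : 0 < x s(w,d) := hpos _ (by simp)
    obtain ⟨c, hcmem, hxc, huniq⟩ := exists_next hx0 hxV hd hw hposd
    have hcd : c ≠ d := Finset.ne_of_mem_erase hcmem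
    have hcadj : G.Adj w c := by
      have := Finset.mem_of_mem_erase hcmem
      rwa [SimpleGraph.mem_neighborFinset] at this
    have hcnot : c ∉ (SimpleGraph.Walk.cons hd p').support :=
      not_mem_support_of_ne hG hd p' hp hcadj.symm hcd
    refine ⟨c, hcadj.symm, (SimpleGraph.Walk.cons_isPath_iff _ _).mpr ⟨hp, hcnot⟩, ?_, ?_⟩
    · intro e he
      rw [SimpleGraph.Walk.edges_cons, List.mem_cons] at he
      rcases he with rfl | he
      · rwa [Sym2.eq_swap]
      · exact hpos e he
    · intro u hu hleaf huc hui v hv h0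
      rw [SimpleGraph.Walk.support_cons, List.mem_cons] at hu
      rcases hu with rfl | hu
      · exact absurd rfl huc
      · rw [SimpleGraph.Walk.edges_cons, List.mem_cons]
        by_cases huw : u = w
        · subst huw
          by_cases hvd : v = d
          · subst hvd
            exact Or.inr (by simp)
          · have : v = c := huniq v (Finset.mem_erase.mpr ⟨hvd, hv⟩) h0
            subst this
            exact Or.inl Sym2.eq_swap
        · exact Or.inr (hCI u hu hleaf huw hui v hv h0)

lemma extend {x : Sym2 V → ℝ} (hG : G.IsTree) (hx0 : NN G x) (hxV : VI G x) :
    ∀ n : ℕ, ∀ (w i : V) (p : G.Walk w i), p.IsPath → 1 ≤ p.length →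
      posOn x p → CInv x p → Fintype.card V ≤ n + p.support.length →
      ∃ (j : V) (q : G.Walk j i), IsLeaf G j ∧ q.IsPath ∧ 1 ≤ q.length ∧
        posOn x q ∧ CInv x q := by
  intro n
  induction n with
  | zero =>
    intro w i p hp hlen hpos hCI hcard
    by_cases hw : IsLeaf G w
    · exact ⟨w, p, hw, hp, hlen, hpos, hCI⟩
    · exfalso
      obtain ⟨c, h', hq, _, _⟩ := step hG hx0 hxV p hp hlen hpos hCI hw
      have hnodup := hq.support_nodup
      have hle := hnodup.length_le_card
      rw [SimpleGraph.Walk.support_cons, List.length_cons] at hle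
      omega
  | succ n ih =>
    intro w i p hp hlen hpos hCI hcard
    by_cases hw : IsLeaf G w
    · exact ⟨w, p, hw, hp, hlen, hpos, hCI⟩
    · obtain ⟨c, h', hq, hqpos, hqCI⟩ := step hG hx0 hxV p hp hlen hpos hCI hw
      refine ih c i (SimpleGraph.Walk.cons h' p) hq (by simp) hqpos hqCI ?_
      rw [SimpleGraph.Walk.support_cons, List.length_cons]
      omega

-- ### stage 5
lemma Lf_eq {x : Sym2 V → ℝ} {u v : V} (hv : v ∈ G.neighborFinset u) :
    Lf G x u v = (∑ z ∈ G.neighborFinset u, x s(u,z)) - 2 * x s(u,v) := by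
  have h := Finset.add_sum_erase _ (fun z => x s(u,z)) hv
  simp only [Lf]
  linarith

lemma deg3_nonneg {x : Sym2 V → ℝ} (hxV : VI G x) {u v : V} (h : G.Adj u v)
    (h3 : (G.neighborFinset u).card = 3) : 0 ≤ x s(u,v) := by
  have hu : ¬ IsLeaf G u := by
    rw [leaf_iff_card]; omega
  have hv : v ∈ G.neighborFinset u := by rwa [SimpleGraph.mem_neighborFinset]
  have h2 : ((G.neighborFinset u).erase v).card = 2 := by
    rw [Finset.card_erase_of_mem hv, h3]
  obtain ⟨a, b, hab, hpair⟩ := Finset.card_eq_two.mp h2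
  have ha : a ∈ (G.neighborFinset u).erase v := hpair ▸ Finset.mem_insert_self a {b}
  have hb : b ∈ (G.neighborFinset u).erase v := by rw [hpair]; simp
  have hav : a ≠ v := Finset.ne_of_mem_erase ha
  have hbv : b ≠ v := Finset.ne_of_mem_erase hb
  have hanbr : a ∈ G.neighborFinset u := Finset.mem_of_mem_erase ha
  have hbnbr : b ∈ G.neighborFinset u := Finset.mem_of_mem_erase hb
  have hins : G.neighborFinset u = insert v {a, b} := by
    rw [← hpair, Finset.insert_erase hv]
  have hS : (∑ z ∈ G.neighborFinset u, x s(u,z))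
      = x s(u,v) + (x s(u,a) + x s(u,b)) := by
    rw [hins, Finset.sum_insert (by simp [Ne.symm hav, Ne.symm hbv]), Finset.sum_pair hab]
  have hVa := hxV u hu a hanbr
  have hVb := hxV u hu b hbnbr
  rw [Lf_eq hanbr] at hVa
  rw [Lf_eq hbnbr] at hVb
  linarith

lemma zero_of_leafsum_zero (hG : G.IsTree) {x : Sym2 V → ℝ} (hx0 : NN G x) (hxV : VI G x)
    (hsum : ∑ e ∈ LE G, x e = 0) : ∀ e ∈ G.edgeSet, x e = 0 := by
  have hLE0 : ∀ e ∈ LE G, x e = 0 := by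
    intro e he
    refine (Finset.sum_eq_zero_iff_of_nonneg ?_).mp hsum e he
    intro f hf
    exact hx0 f (by simpa using (Finset.mem_filter.mp hf).1)
  intro e he
  by_contra hne
  have hpos : 0 < x e := lt_of_le_of_ne (hx0 e he) (Ne.symm hne)
  induction e with
  | _ a b =>
    have hadj : G.Adj a b := he
    have hp0 : (SimpleGraph.Walk.cons hadj.symm SimpleGraph.Walk.nil).IsPath := by
      rw [SimpleGraph.Walk.cons_isPath_iff]
      exact ⟨SimpleGraph.Walk.IsPath.nil, by simp [hadj.ne']⟩
    have hpos0 : posOn x (SimpleGraph.Walk.cons hadj.symm (SimpleGraph.Walk.nil : G.Walk a a)) := by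
      intro f hf
      simp only [SimpleGraph.Walk.edges_cons, SimpleGraph.Walk.edges_nil,
        List.mem_singleton] at hf
      subst hf
      rwa [Sym2.eq_swap]
    have hCI0 : CInv x (SimpleGraph.Walk.cons hadj.symm (SimpleGraph.Walk.nil : G.Walk a a)) := by
      intro u hu hleaf hub hua
      rw [SimpleGraph.Walk.support_cons, SimpleGraph.Walk.support_nil] at hu
      rcases List.mem_cons.mp hu with rfl | hu
      · exact absurd rfl hub
      · rw [List.mem_singleton] at hu
        exact absurd hu hua
    obtain ⟨j, q, hj, hq, hqlen, hqpos, _⟩ :=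
      extend hG hx0 hxV (Fintype.card V) b a _ hp0 (by simp) hpos0 hCI0 (by omega)
    cases q with
    | nil => simp at hqlen
    | @cons j b1 a h1 q1 =>
      have hfe : x s(j, b1) = 0 := by
        apply hLE0
        simp only [LE, Finset.mem_filter, SimpleGraph.mem_edgeFinset]
        exact ⟨h1, j, Sym2.mem_mk_left j b1, hj⟩
      have := hqpos s(j,b1) (by simp)
      linarith

lemma leaves_not_adj (hG : G.IsTree) (hcard : 3 < Fintype.card V) {i j : V} (hij : i ≠ j)
    (hi : IsLeaf G i) (hj : IsLeaf G j) : ¬ G.Adj i j := by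
  intro hadj
  have hz : ∃ z : V, z ≠ i ∧ z ≠ j := by
    by_contra hall
    push_neg at hall
    have hsub : (Finset.univ : Finset V) ⊆ {i, j} := by
      intro z _
      rcases Classical.em (z = i) with rfl | hzi
      · simp
      · simp [hall z hzi]
    have := Finset.card_le_card hsub
    have h2 : ({i, j} : Finset V).card ≤ 2 := Finset.card_insert_le _ _ |>.trans (by simp)
    simp only [Finset.card_univ] at this
    omega
  obtain ⟨z, hzi, hzj⟩ := hz
  obtain ⟨r0⟩ := hG.1.preconnected z i
  obtain ⟨r, hr⟩ := r0.toPath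
  have hisup : i ∈ r.support := SimpleGraph.Walk.end_mem_support r
  have hcard_i : (edgesAt G r i).card = 1 := by
    rw [card_edgesAt r hr i hisup]
    simp [Ne.symm hzi]
  obtain ⟨c, hc⟩ := Finset.card_eq_one.mp hcard_i
  have hcmem : c ∈ edgesAt G r i := hc ▸ Finset.mem_singleton_self c
  have hcadj : G.Adj i c ∧ s(i,c) ∈ r.edges := by
    simpa [edgesAt] using hcmem
  have hcj : c = j := by
    obtain ⟨w, hw, huniq⟩ := hi
    rw [huniq c hcadj.1, huniq j hadj]
  rw [hcj] at hcadj
  have hjsup : j ∈ r.support := mem_support_of_mem_edges r hcadj.2 (Sym2.mem_mk_right i j)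
  have hcard_j : (edgesAt G r j).card = 2 := by
    rw [card_edgesAt r hr j hjsup]
    simp [Ne.symm hzj, Ne.symm hij]
  have hle : (edgesAt G r j).card ≤ (G.neighborFinset j).card :=
    Finset.card_le_card (Finset.filter_subset _ _)
  rw [hcard_j, leaf_iff_card.mp hj] at hle
  omega

-- ### stage 6
lemma onPath_iff (hG : G.IsTree) {a b : V} (q : G.Walk a b) (hq : q.IsPath) (e : Sym2 V) :
    onPath G a b e ↔ e ∈ q.edges :=
  ⟨fun ⟨p, hp, he⟩ => (path_eq hG hp hq) ▸ he, fun he => ⟨q, hq, he⟩⟩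

lemma pathVec_eq (hG : G.IsTree) {a b : V} (q : G.Walk a b) (hq : q.IsPath) (e : Sym2 V) :
    pathVec G a b e = if e ∈ q.edges then 1 else 0 := by
  simp only [pathVec]
  exact if_congr (onPath_iff hG q hq e) rfl rfl

lemma pathVec_off (e : Sym2 V) (he : e ∉ G.edgeSet) {a b : V} : pathVec G a b e = 0 := by
  rw [pathVec, if_neg]
  rintro ⟨p, hp, hmem⟩
  exact he (p.edges_subset_edgeSet hmem)

lemma pathVec_nonneg {a b : V} (e : Sym2 V) : 0 ≤ pathVec G a b e := by
  rw [pathVec]; split <;> norm_num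

lemma Lf_comb (x y : Sym2 V → ℝ) (r s : ℝ) (u v : V) :
    Lf G (fun e => r * x e + s * y e) u v = r * Lf G x u v + s * Lf G y u v := by
  simp only [Lf, Finset.sum_add_distrib]
  rw [mul_add, mul_add, Finset.mul_sum, Finset.mul_sum]
  ring

lemma Lf_pathVec (hG : G.IsTree) {a b : V} (ha : IsLeaf G a) (hb : IsLeaf G b)
    (q : G.Walk a b) (hq : q.IsPath) {u : V} (hu : ¬ IsLeaf G u) {v : V}
    (hv : v ∈ G.neighborFinset u) :
    Lf G (pathVec G a b) u v = if u ∈ q.support ∧ s(u,v) ∉ q.edges then 2 else 0 := by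
  have hsum : ∑ w ∈ (G.neighborFinset u).erase v, pathVec G a b s(u,w)
      = ((edgesAt G q u).erase v).card := by
    have h1 : ∀ w ∈ (G.neighborFinset u).erase v, pathVec G a b s(u,w)
        = if s(u,w) ∈ q.edges then 1 else 0 := fun w _ => pathVec_eq hG q hq _
    have h2 : ((G.neighborFinset u).erase v).filter (fun w => s(u,w) ∈ q.edges)
        = (edgesAt G q u).erase v := by
      ext w
      simp only [Finset.mem_filter, Finset.mem_erase, edgesAt]
      tauto
    rw [Finset.sum_congr rfl h1, Finset.sum_boole, h2]
  by_cases hus : u ∈ q.support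
  · have hua : u ≠ a := fun h => hu (h ▸ ha)
    have hub : u ≠ b := fun h => hu (h ▸ hb)
    have hcard2 : (edgesAt G q u).card = 2 := by
      rw [card_edgesAt q hq u hus]; simp [hua, hub]
    by_cases hve : s(u,v) ∈ q.edges
    · have hvmem : v ∈ edgesAt G q u := Finset.mem_filter.mpr ⟨hv, hve⟩
      rw [Lf, hsum, Finset.card_erase_of_mem hvmem, hcard2, pathVec_eq hG q hq, if_pos hve]
      simp [hus, hve]
    · have hvmem : v ∉ edgesAt G q u := by
        simp only [edgesAt, Finset.mem_filter]
        tauto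
      rw [Lf, hsum, Finset.erase_eq_of_notMem hvmem, hcard2, pathVec_eq hG q hq, if_neg hve]
      simp [hus, hve]
  · have hempty : edgesAt G q u = ∅ := edgesAt_eq_empty hus
    have hve : s(u,v) ∉ q.edges := fun h =>
      hus (mem_support_of_mem_edges q h (Sym2.mem_mk_left u v))
    rw [Lf, hsum, hempty, pathVec_eq hG q hq, if_neg hve]
    simp [hus]

lemma leafsum_pathVec (hG : G.IsTree) (hcard : 3 < Fintype.card V) {a b : V} (hab : a ≠ b)
    (ha : IsLeaf G a) (hb : IsLeaf G b) (q : G.Walk a b) (hq : q.IsPath) :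
    ∑ e ∈ LE G, pathVec G a b e = 2 := by
  obtain ⟨wa, hwa, hwauniq⟩ := ha
  obtain ⟨wb, hwb, hwbuniq⟩ := hb
  have key : ∀ (c : V), c ∈ q.support →
      ∀ wc, G.Adj c wc → (∀ y, G.Adj c y → y = wc) →
      (edgesAt G q c).card = 1 → edgesAt G q c = {wc} := by
    intro c hcs wc hwc huniq hcard1
    obtain ⟨d, hd⟩ := Finset.card_eq_one.mp hcard1
    have hdmem : d ∈ edgesAt G q c := hd ▸ Finset.mem_singleton_self d
    simp only [edgesAt, Finset.mem_filter, SimpleGraph.mem_neighborFinset] at hdmem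
    have : d = wc := huniq d hdmem.1
    rwa [this] at hd
  have hacard : (edgesAt G q a).card = 1 := by
    rw [card_edgesAt q hq a q.start_mem_support]; simp [hab]
  have hbcard : (edgesAt G q b).card = 1 := by
    rw [card_edgesAt q hq b q.end_mem_support]; simp [Ne.symm hab]
  have hkeya : edgesAt G q a = {wa} := key a q.start_mem_support wa hwa hwauniq hacard
  have hkeyb : edgesAt G q b = {wb} := key b q.end_mem_support wb hwb hwbuniq hbcard
  have hea : s(a, wa) ∈ q.edges := by
    have : wa ∈ edgesAt G q a := hkeya ▸ Finset.mem_singleton_self wa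
    exact (Finset.mem_filter.mp this).2
  have heb : s(b, wb) ∈ q.edges := by
    have : wb ∈ edgesAt G q b := hkeyb ▸ Finset.mem_singleton_self wb
    exact (Finset.mem_filter.mp this).2
  have hne : s(a, wa) ≠ s(b, wb) := by
    intro heq
    rcases Sym2.eq_iff.mp heq with ⟨h1, -⟩ | ⟨h1, h2⟩
    · exact hab h1
    · exact leaves_not_adj hG hcard hab ⟨wa, hwa, hwauniq⟩ ⟨wb, hwb, hwbuniq⟩ (h2 ▸ hwa)
  have hfilter : (LE G).filter (fun e => e ∈ q.edges) = {s(a,wa), s(b,wb)} := by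
    ext e
    simp only [Finset.mem_filter, LE, SimpleGraph.mem_edgeFinset, Finset.mem_insert,
      Finset.mem_singleton]
    constructor
    · rintro ⟨⟨hee, v, hve, hvleaf⟩, heq⟩
      have hvs : v ∈ q.support := mem_support_of_mem_edges q heq hve
      have hvab : v = a ∨ v = b := by
        by_contra hcon
        push_neg at hcon
        have h2 : (edgesAt G q v).card = 2 := by
          rw [card_edgesAt q hq v hvs]; simp [hcon.1, hcon.2]
        have hle : (edgesAt G q v).card ≤ (G.neighborFinset v).card :=
          Finset.card_le_card (Finset.filter_subset _ _)
        rw [h2, leaf_iff_card.mp hvleaf] at hle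
        omega
      rcases hvab with rfl | rfl
      · obtain ⟨w, rfl⟩ := Sym2.mem_iff_exists.mp hve
        have hadj : G.Adj v w := by rwa [SimpleGraph.mem_edgeSet] at hee
        have hwmem : w ∈ edgesAt G q v := Finset.mem_filter.mpr
          ⟨(SimpleGraph.mem_neighborFinset _ _ _).mpr hadj, heq⟩
        rw [hkeya, Finset.mem_singleton] at hwmem
        exact Or.inl (by rw [hwmem])
      · obtain ⟨w, rfl⟩ := Sym2.mem_iff_exists.mp hve
        have hadj : G.Adj v w := by rwa [SimpleGraph.mem_edgeSet] at hee
        have hwmem : w ∈ edgesAt G q v := Finset.mem_filter.mpr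
          ⟨(SimpleGraph.mem_neighborFinset _ _ _).mpr hadj, heq⟩
        rw [hkeyb, Finset.mem_singleton] at hwmem
        exact Or.inr (by rw [hwmem])
    · rintro (rfl | rfl)
      · exact ⟨⟨hwa, a, Sym2.mem_mk_left a wa, ⟨wa, hwa, hwauniq⟩⟩, hea⟩
      · exact ⟨⟨hwb, b, Sym2.mem_mk_left b wb, ⟨wb, hwb, hwbuniq⟩⟩, heb⟩
  have hcalc : ∑ e ∈ LE G, pathVec G a b e
      = (((LE G).filter (fun e => e ∈ q.edges)).card : ℝ) := by
    have h1 : ∀ e ∈ LE G, pathVec G a b e = if e ∈ q.edges then 1 else 0 :=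
      fun e _ => pathVec_eq hG q hq e
    rw [Finset.sum_congr rfl h1, Finset.sum_boole]
  rw [hcalc, hfilter, Finset.card_insert_of_notMem (by simp [hne]), Finset.card_singleton]
  norm_num

-- ### stage 7
def Good (G : SimpleGraph V) [Fintype V] (x : Sym2 V → ℝ) : Prop :=
  (∀ e, e ∉ G.edgeSet → x e = 0) ∧
  (∀ u v : V, G.Adj u v → (G.neighborFinset u).card ≠ 3 → (G.neighborFinset v).card ≠ 3 →
    0 ≤ x s(u,v)) ∧
  VI G x ∧ (∑ e ∈ LE G, x e = 2)

lemma NN_of_good {x : Sym2 V → ℝ} (hx : Good G x) : NN G x := by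
  intro e he
  induction e with
  | _ a b =>
    have hadj : G.Adj a b := he
    by_cases h3a : (G.neighborFinset a).card = 3
    · exact deg3_nonneg hx.2.2.1 hadj h3a
    · by_cases h3b : (G.neighborFinset b).card = 3
      · rw [Sym2.eq_swap]
        exact deg3_nonneg hx.2.2.1 hadj.symm h3b
      · exact hx.2.1 a b hadj h3a h3b

lemma good_pathVec (hG : G.IsTree) (hcard : 3 < Fintype.card V) {i j : V} (hij : i ≠ j)
    (hi : IsLeaf G i) (hj : IsLeaf G j) : Good G (pathVec G i j) := by
  obtain ⟨q, hq, -⟩ := hG.existsUnique_path i j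
  refine ⟨fun e he => pathVec_off e he, fun u v _ _ _ => pathVec_nonneg _,
    fun u hu v hv => ?_, leafsum_pathVec hG hcard hij hi hj q hq⟩
  rw [Lf_pathVec hG hi hj q hq hu hv]
  split <;> norm_num

lemma good_convex : Convex ℝ {x : Sym2 V → ℝ | Good G x} := by
  intro x hx y hy r s hr hs hrs
  obtain ⟨hx1, hx2, hx3, hx4⟩ := hx
  obtain ⟨hy1, hy2, hy3, hy4⟩ := hy
  have happ : ∀ e, (r • x + s • y) e = r * x e + s * y e := fun e => rfl
  refine ⟨fun e he => ?_, fun u v huv h3u h3v => ?_, fun u hu v hv => ?_, ?_⟩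
  · rw [happ, hx1 e he, hy1 e he]; ring
  · rw [happ]
    have := hx2 u v huv h3u h3v
    have := hy2 u v huv h3u h3v
    positivity
  · have hfun : (r • x + s • y) = fun e => r * x e + s * y e := funext happ
    rw [hfun, Lf_comb]
    have := hx3 u hu v hv
    have := hy3 u hu v hv
    positivity
  · have : ∑ e ∈ LE G, (r • x + s • y) e = r * (∑ e ∈ LE G, x e) + s * (∑ e ∈ LE G, y e) := by
      rw [Finset.mul_sum, Finset.mul_sum, ← Finset.sum_add_distrib]
      exact Finset.sum_congr rfl fun e _ => happ e
    rw [this, hx4, hy4]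
    linarith

-- ### stage 8
def Nm (G : SimpleGraph V) [Fintype V] (x : Sym2 V → ℝ) : ℕ :=
  (G.edgeFinset.filter (fun e => x e ≠ 0)).card +
  ((Finset.univ : Finset (V × V)).filter
    (fun p => G.Adj p.1 p.2 ∧ ¬IsLeaf G p.1 ∧ Lf G x p.1 p.2 ≠ 0)).card

lemma main_ind (hG : G.IsTree) (hcard : 3 < Fintype.card V) :
    ∀ n : ℕ, ∀ x : Sym2 V → ℝ, Good G x → Nm G x ≤ n → x ∈ pathPolytope G := by
  intro n
  induction n with
  | zero =>
    intro x hx hN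
    exfalso
    have h1 : (G.edgeFinset.filter (fun e => x e ≠ 0)).card = 0 := by
      have := hN; unfold Nm at this; omega
    have h2 : ∀ e ∈ LE G, x e = 0 := by
      intro e he
      by_contra hne
      have : e ∈ G.edgeFinset.filter (fun e => x e ≠ 0) :=
        Finset.mem_filter.mpr ⟨Finset.mem_of_mem_filter e he, hne⟩
      rw [Finset.card_eq_zero.mp h1] at this
      simp at this
    have := hx.2.2.2
    rw [Finset.sum_eq_zero h2] at this
    norm_num at this
  | succ n ih =>
    intro x hx hN
    have hNN := NN_of_good hx
    have hVI := hx.2.2.1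
    have hexists : ∃ e ∈ LE G, x e ≠ 0 := by
      by_contra hall
      push_neg at hall
      have h0 : ∑ e ∈ LE G, x e = 0 := Finset.sum_eq_zero hall
      have := hx.2.2.2
      rw [h0] at this
      norm_num at this
    obtain ⟨e0, he0, hne0⟩ := hexists
    have he0E : e0 ∈ G.edgeSet := by
      have := (Finset.mem_filter.mp he0).1
      simpa using this
    have hpos0 : 0 < x e0 := lt_of_le_of_ne (hNN e0 he0E) (Ne.symm hne0)
    obtain ⟨v0, hv0e, hv0leaf⟩ := (Finset.mem_filter.mp he0).2
    obtain ⟨w0, rfl⟩ := Sym2.mem_iff_exists.mp hv0e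
    have hadj0 : G.Adj v0 w0 := by rwa [SimpleGraph.mem_edgeSet] at he0E
    have hp0 : (SimpleGraph.Walk.cons hadj0.symm (SimpleGraph.Walk.nil : G.Walk v0 v0)).IsPath := by
      rw [SimpleGraph.Walk.cons_isPath_iff]
      exact ⟨SimpleGraph.Walk.IsPath.nil, by simp [hadj0.ne']⟩
    have hpos0' : posOn x (SimpleGraph.Walk.cons hadj0.symm (SimpleGraph.Walk.nil : G.Walk v0 v0)) := by
      intro f hf
      simp only [SimpleGraph.Walk.edges_cons, SimpleGraph.Walk.edges_nil,
        List.mem_singleton] at hf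
      subst hf
      rwa [Sym2.eq_swap]
    have hCI0 : CInv x (SimpleGraph.Walk.cons hadj0.symm (SimpleGraph.Walk.nil : G.Walk v0 v0)) := by
      intro u hu hleaf hub hua
      rw [SimpleGraph.Walk.support_cons, SimpleGraph.Walk.support_nil] at hu
      rcases List.mem_cons.mp hu with rfl | hu
      · exact absurd rfl hub
      · rw [List.mem_singleton] at hu
        exact absurd hu hua
    obtain ⟨j, q, hj, hq, hqlen, hqpos, hqCI⟩ :=
      extend hG hNN hVI (Fintype.card V) w0 v0 _ hp0 (by simp) hpos0' hCI0 (by omega)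
    have hjv0 : j ≠ v0 := by
      rintro rfl
      rw [SimpleGraph.Walk.isPath_iff_eq_nil] at hq
      subst hq
      simp at hqlen
    set c := pathVec G j v0 with hcdef
    have hcind : ∀ e, c e = if e ∈ q.edges then 1 else 0 := pathVec_eq hG q hq
    have hcare : ∀ u ∈ q.support, ¬IsLeaf G u → ∀ v ∈ G.neighborFinset u,
        Lf G x u v = 0 → s(u,v) ∈ q.edges := by
      intro u hus hu v hv h0
      exact hqCI u hus hu (fun h => hu (h ▸ hj)) (fun h => hu (h ▸ hv0leaf)) v hv h0
    set T : Finset (V × V) := Finset.univ.filter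
      (fun p : V × V => p.1 ∈ q.support ∧ ¬IsLeaf G p.1 ∧ p.2 ∈ G.neighborFinset p.1 ∧
        s(p.1,p.2) ∉ q.edges) with hT
    set Lam : Finset ℝ := q.edges.toFinset.image x ∪ T.image (fun p => Lf G x p.1 p.2 / 2)
      with hLam
    have hEne : q.edges.toFinset.Nonempty := by
      have hne : q.edges ≠ [] := by
        intro h
        have hl := q.length_edges
        rw [h] at hl
        simp at hl
        omega
      obtain ⟨e, hee⟩ := List.exists_mem_of_ne_nil _ hne
      exact ⟨e, List.mem_toFinset.mpr hee⟩
    have hLamne : Lam.Nonempty := Finset.Nonempty.mono Finset.subset_union_left (hEne.image x)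
    set lam := Lam.min' hLamne with hlamdef
    have hlam_mem := Lam.min'_mem hLamne
    have hmem_pos : ∀ r ∈ Lam, 0 < r := by
      intro r hr
      rcases Finset.mem_union.mp hr with hr | hr
      · obtain ⟨e, he, rfl⟩ := Finset.mem_image.mp hr
        exact hqpos e (List.mem_toFinset.mp he)
      · obtain ⟨pr, hpr, rfl⟩ := Finset.mem_image.mp hr
        obtain ⟨h1, h2, h3, h4⟩ := (Finset.mem_filter.mp hpr).2
        have hge := hVI pr.1 h2 pr.2 h3
        have hne : Lf G x pr.1 pr.2 ≠ 0 := fun h0 => h4 (hcare pr.1 h1 h2 pr.2 h3 h0)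
        have : 0 < Lf G x pr.1 pr.2 := lt_of_le_of_ne hge (Ne.symm hne)
        linarith
    have hlam_pos : 0 < lam := hmem_pos _ hlam_mem
    have hlam_edge : ∀ e ∈ q.edges, lam ≤ x e := fun e he =>
      Lam.min'_le _ (Finset.mem_union_left _ (Finset.mem_image_of_mem x (List.mem_toFinset.mpr he)))
    have hlam_T : ∀ u v, u ∈ q.support → ¬IsLeaf G u → v ∈ G.neighborFinset u →
        s(u,v) ∉ q.edges → 2 * lam ≤ Lf G x u v := by
      intro u v h1 h2 h3 h4
      have hmem : Lf G x u v / 2 ∈ Lam := Finset.mem_union_right _ (Finset.mem_image.mpr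
        ⟨(u,v), Finset.mem_filter.mpr ⟨Finset.mem_univ _, h1, h2, h3, h4⟩, rfl⟩)
      have := Lam.min'_le _ hmem
      linarith
    have hLfc : ∀ u, ¬IsLeaf G u → ∀ v ∈ G.neighborFinset u,
        Lf G c u v = if u ∈ q.support ∧ s(u,v) ∉ q.edges then 2 else 0 :=
      fun u hu v hv => Lf_pathVec hG hj hv0leaf q hq hu hv
    have hcsum : ∑ e ∈ LE G, c e = 2 := leafsum_pathVec hG hcard hjv0 hj hv0leaf q hq
    have hcgen : c ∈ pathPolytope G :=
      subset_convexHull ℝ _ ⟨j, v0, hjv0, hj, hv0leaf, rfl⟩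
    by_cases hlam1 : 1 ≤ lam
    · -- x equals the path vector
      have hzNN : NN G (fun e => x e - c e) := by
        intro e he
        by_cases heq : e ∈ q.edges
        · have h1 := hlam_edge e heq
          have h2 : c e = 1 := by rw [hcind, if_pos heq]
          simp only [h2]
          linarith
        · have h2 : c e = 0 := by rw [hcind, if_neg heq]
          have := hNN e he
          simp only [h2]
          linarith
      have hzVI : VI G (fun e => x e - c e) := by
        intro u hu v hv
        have hform : (fun e => x e - c e) = fun e => 1 * x e + (-1) * c e :=
          funext fun e => by ring
        rw [hform, Lf_comb, hLfc u hu v hv]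
        by_cases hcase : u ∈ q.support ∧ s(u,v) ∉ q.edges
        · rw [if_pos hcase]
          have := hlam_T u v hcase.1 hu hv hcase.2
          linarith
        · rw [if_neg hcase]
          have := hVI u hu v hv
          linarith
      have hzsum : ∑ e ∈ LE G, (x e - c e) = 0 := by
        rw [Finset.sum_sub_distrib, hx.2.2.2, hcsum]
        ring
      have hz0 := zero_of_leafsum_zero hG hzNN hzVI hzsum
      have hxc : x = c := by
        funext e
        by_cases he : e ∈ G.edgeSet
        · have := hz0 e he
          linarith
        · rw [hx.1 e he, hcdef, pathVec_off e he]
      rw [hxc]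
      exact hcgen
    · push_neg at hlam1
      have h1l : 0 < 1 - lam := by linarith
      set y : Sym2 V → ℝ := fun e => (1 - lam)⁻¹ * (x e - lam * c e) with hydef
      have hyform : y = fun e => (1-lam)⁻¹ * x e + (-((1-lam)⁻¹ * lam)) * c e :=
        funext fun e => by rw [hydef]; ring
      have hyNN : ∀ e ∈ G.edgeSet, 0 ≤ y e := by
        intro e he
        rw [hydef]
        by_cases heq : e ∈ q.edges
        · have h1 := hlam_edge e heq
          have h2 : c e = 1 := by rw [hcind, if_pos heq]
          simp only [h2]
          have : (0:ℝ) ≤ (1-lam)⁻¹ := by positivity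
          have h3 : 0 ≤ x e - lam * 1 := by linarith
          exact mul_nonneg this h3
        · have h2 : c e = 0 := by rw [hcind, if_neg heq]
          have := hNN e he
          simp only [h2]
          have h4 : (0:ℝ) ≤ (1-lam)⁻¹ := by positivity
          have h3 : 0 ≤ x e - lam * 0 := by linarith
          exact mul_nonneg h4 h3
      have hyVI : VI G y := by
        intro u hu v hv
        rw [hyform, Lf_comb, hLfc u hu v hv]
        have h4 : (0:ℝ) ≤ (1-lam)⁻¹ := by positivity
        by_cases hcase : u ∈ q.support ∧ s(u,v) ∉ q.edges
        · rw [if_pos hcase]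
          have h5 := hlam_T u v hcase.1 hu hv hcase.2
          have heq : (1-lam)⁻¹ * Lf G x u v + (-((1-lam)⁻¹ * lam)) * 2
              = (1-lam)⁻¹ * (Lf G x u v - 2 * lam) := by ring
          rw [heq]
          exact mul_nonneg h4 (by linarith)
        · rw [if_neg hcase]
          have h5 := hVI u hu v hv
          have heq : (1-lam)⁻¹ * Lf G x u v + (-((1-lam)⁻¹ * lam)) * 0
              = (1-lam)⁻¹ * Lf G x u v := by ring
          rw [heq]
          exact mul_nonneg h4 h5
      have hyGood : Good G y := by
        refine ⟨?_, fun u v huv _ _ => hyNN _ ((SimpleGraph.mem_edgeSet G).mpr huv), hyVI, ?_⟩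
        · intro e he
          have hc0 : c e = 0 := by rw [hcdef, pathVec_off e he]
          rw [hydef]
          simp only [hx.1 e he, hc0]
          ring
        · have hsum : ∑ e ∈ LE G, y e
              = (1-lam)⁻¹ * ((∑ e ∈ LE G, x e) - lam * (∑ e ∈ LE G, c e)) := by
            calc ∑ e ∈ LE G, y e = ∑ e ∈ LE G, (1-lam)⁻¹ * (x e - lam * c e) := rfl
              _ = (1-lam)⁻¹ * ∑ e ∈ LE G, (x e - lam * c e) := by
                    rw [← Finset.mul_sum]
              _ = (1-lam)⁻¹ * ((∑ e ∈ LE G, x e) - lam * ∑ e ∈ LE G, c e) := by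
                    rw [Finset.sum_sub_distrib, ← Finset.mul_sum]
          rw [hsum, hx.2.2.2, hcsum]
          field_simp
      have hsub1 : G.edgeFinset.filter (fun e => y e ≠ 0)
          ⊆ G.edgeFinset.filter (fun e => x e ≠ 0) := by
        intro e he
        obtain ⟨heE, hyne⟩ := Finset.mem_filter.mp he
        refine Finset.mem_filter.mpr ⟨heE, fun hx0 => hyne ?_⟩
        have heq : e ∉ q.edges := by
          intro hmm
          have := hqpos e hmm
          rw [hx0] at this
          exact lt_irrefl 0 this
        have hc0 : c e = 0 := by rw [hcind, if_neg heq]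
        rw [hydef]
        simp only [hx0, hc0]
        ring
      have hsub2 : (Finset.univ.filter
            (fun p : V×V => G.Adj p.1 p.2 ∧ ¬IsLeaf G p.1 ∧ Lf G y p.1 p.2 ≠ 0))
          ⊆ (Finset.univ.filter
            (fun p : V×V => G.Adj p.1 p.2 ∧ ¬IsLeaf G p.1 ∧ Lf G x p.1 p.2 ≠ 0)) := by
        intro pr hpr
        obtain ⟨h1, h2, h3⟩ := (Finset.mem_filter.mp hpr).2
        refine Finset.mem_filter.mpr ⟨Finset.mem_univ _, h1, h2, fun hx0 => h3 ?_⟩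
        have hvnbr : pr.2 ∈ G.neighborFinset pr.1 := by
          rwa [SimpleGraph.mem_neighborFinset]
        have hLc0 : Lf G c pr.1 pr.2 = 0 := by
          rw [hLfc pr.1 h2 pr.2 hvnbr, if_neg]
          rintro ⟨hsup, hnotedge⟩
          exact hnotedge (hcare pr.1 hsup h2 pr.2 hvnbr hx0)
        rw [hyform, Lf_comb, hx0, hLc0]
        ring
      have hstrict : Nm G y < Nm G x := by
        rcases Finset.mem_union.mp hlam_mem with hmem | hmem
        · obtain ⟨e1, he1, heq1⟩ := Finset.mem_image.mp hmem
          have he1q : e1 ∈ q.edges := List.mem_toFinset.mp he1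
          have he1E : e1 ∈ G.edgeFinset :=
            (SimpleGraph.mem_edgeFinset).mpr (q.edges_subset_edgeSet he1q)
          have hxpos : 0 < x e1 := hqpos e1 he1q
          have hxne : x e1 ≠ 0 := ne_of_gt hxpos
          have hy0 : y e1 = 0 := by
            have hc1 : c e1 = 1 := by rw [hcind, if_pos he1q]
            have hxl : x e1 = lam := by rw [hlamdef]; exact heq1
            rw [hydef]
            simp only [hc1, hxl]
            ring
          have hinx : e1 ∈ G.edgeFinset.filter (fun e => x e ≠ 0) :=
            Finset.mem_filter.mpr ⟨he1E, hxne⟩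
          have hnoty : e1 ∉ G.edgeFinset.filter (fun e => y e ≠ 0) := by
            intro hmem2
            exact (Finset.mem_filter.mp hmem2).2 hy0
          have hlt1 : (G.edgeFinset.filter (fun e => y e ≠ 0)).card
              < (G.edgeFinset.filter (fun e => x e ≠ 0)).card :=
            Finset.card_lt_card ((Finset.ssubset_iff_of_subset hsub1).mpr ⟨e1, hinx, hnoty⟩)
          have hle2 := Finset.card_le_card hsub2
          unfold Nm
          omega
        · obtain ⟨pr, hpr, heq1⟩ := Finset.mem_image.mp hmem
          obtain ⟨h1, h2, h3, h4⟩ := (Finset.mem_filter.mp hpr).2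
          have hadjpr : G.Adj pr.1 pr.2 := by rwa [SimpleGraph.mem_neighborFinset] at h3
          have hLx : Lf G x pr.1 pr.2 = 2 * lam := by
            rw [hlamdef, ← heq1]; ring
          have hLxne : Lf G x pr.1 pr.2 ≠ 0 := by
            rw [hLx]; positivity
          have hLy0 : Lf G y pr.1 pr.2 = 0 := by
            have hLc2 : Lf G c pr.1 pr.2 = 2 := by
              rw [hLfc pr.1 h2 pr.2 h3, if_pos ⟨h1, h4⟩]
            rw [hyform, Lf_comb, hLx, hLc2]
            ring
          have hinx : pr ∈ Finset.univ.filter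
              (fun p : V×V => G.Adj p.1 p.2 ∧ ¬IsLeaf G p.1 ∧ Lf G x p.1 p.2 ≠ 0) :=
            Finset.mem_filter.mpr ⟨Finset.mem_univ _, hadjpr, h2, hLxne⟩
          have hnoty : pr ∉ Finset.univ.filter
              (fun p : V×V => G.Adj p.1 p.2 ∧ ¬IsLeaf G p.1 ∧ Lf G y p.1 p.2 ≠ 0) := by
            intro hmem2
            exact (Finset.mem_filter.mp hmem2).2.2.2 hLy0
          have hlt2 := Finset.card_lt_card ((Finset.ssubset_iff_of_subset hsub2).mpr
            ⟨pr, hinx, hnoty⟩)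
          have hle1 := Finset.card_le_card hsub1
          unfold Nm
          omega
      have hyP := ih y hyGood (by omega)
      have hcomb : x = lam • c + (1 - lam) • y := by
        funext e
        simp only [Pi.add_apply, Pi.smul_apply, smul_eq_mul, hydef]
        field_simp
        ring
      rw [hcomb]
      exact (convex_convexHull ℝ _) hcgen hyP (le_of_lt hlam_pos) (by linarith) (by ring)


end PPAux

/-- For a tree with more than 3 vertices and no internal vertex of degree
2, the path polytope (inside `ℝ^E`, i.e. with coordinates vanishing off the edge set) is cut
out by: `x_e ≥ 0` for edges with neither endpoint of degree 3, the inequalities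
`−x_{u,v} + ∑_{w ∈ N(u)∖{v}} x_{u,w} ≥ 0` for internal `u` and `v ∈ N(u)`, and the equation
`∑_{e ∈ E_leaf} x_e = 2`. -/
theorem pathPolytope_halfspace_representation [Fintype V] (G : SimpleGraph V)
    (hG : G.IsTree) (hcard : 3 < Fintype.card V)
    (hdeg2 : ∀ u, ¬ IsLeaf G u → (G.neighborSet u).ncard ≠ 2) :
    {x : Sym2 V → ℝ |
        (∀ e, e ∉ G.edgeSet → x e = 0) ∧
        (∀ u v : V, G.Adj u v → (G.neighborSet u).ncard ≠ 3 → (G.neighborSet v).ncard ≠ 3 →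
          0 ≤ x s(u, v)) ∧
        (∀ u, ¬ IsLeaf G u → ∀ v ∈ G.neighborSet u,
          0 ≤ - x s(u, v) + ∑ᶠ w ∈ G.neighborSet u \ {v}, x s(u, w)) ∧
        (∑ᶠ e ∈ leafEdges G, x e = 2)}
      = pathPolytope G := by
  classical
  have hset : {x : Sym2 V → ℝ |
        (∀ e, e ∉ G.edgeSet → x e = 0) ∧
        (∀ u v : V, G.Adj u v → (G.neighborSet u).ncard ≠ 3 → (G.neighborSet v).ncard ≠ 3 →
          0 ≤ x s(u, v)) ∧
        (∀ u, ¬ IsLeaf G u → ∀ v ∈ G.neighborSet u,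
          0 ≤ - x s(u, v) + ∑ᶠ w ∈ G.neighborSet u \ {v}, x s(u, w)) ∧
        (∑ᶠ e ∈ leafEdges G, x e = 2)} = {x : Sym2 V → ℝ | PPAux.Good G x} := by
    ext x
    simp only [Set.mem_setOf_eq]
    constructor
    · rintro ⟨h1, h2, h3, h4⟩
      refine ⟨h1, ?_, ?_, ?_⟩
      · intro u v huv h3u h3v
        exact h2 u v huv (by rwa [PPAux.ncard_nbr]) (by rwa [PPAux.ncard_nbr])
      · intro u hu v hv
        have hv' : v ∈ G.neighborSet u := by
          rwa [SimpleGraph.mem_neighborSet, ← SimpleGraph.mem_neighborFinset]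
        have := h3 u hu v hv'
        rw [PPAux.finsum_nbr] at this
        exact this
      · rw [← PPAux.finsum_leaf]
        exact h4
    · rintro ⟨h1, h2, h3, h4⟩
      refine ⟨h1, ?_, ?_, ?_⟩
      · intro u v huv h3u h3v
        refine h2 u v huv ?_ ?_
        · rwa [← PPAux.ncard_nbr]
        · rwa [← PPAux.ncard_nbr]
      · intro u hu v hv
        have hv' : v ∈ G.neighborFinset u := by
          rwa [SimpleGraph.mem_neighborFinset, ← SimpleGraph.mem_neighborSet]
        have := h3 u hu v hv'
        rw [PPAux.finsum_nbr]
        exact this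
      · rw [PPAux.finsum_leaf]
        exact h4
  rw [hset]
  apply Set.Subset.antisymm
  · intro x hx
    exact PPAux.main_ind hG hcard (PPAux.Nm G x) x hx le_rfl
  · rw [pathPolytope]
    apply convexHull_min
    · rintro c ⟨i, j, hij, hi, hj, rfl⟩
      exact PPAux.good_pathVec hG hcard hij hi hj
    · exact PPAux.good_convex
end
end

section
/- Let T = (V,E) be a tree with at least 3 edges and no internal vertex of degree 2, and let {u,v} ∈ E with deg(u) ≠ 3 and deg(v) ≠ 3. Then F_T^{{u,v}} := conv{ c^{i↔j} : i,j distinct leaves, {u,v} ∉ i↔j } equals P_T ∩ { x : x_{{u,v}} = 0 } and is a facet of P_T, i.e., has dimension |E| − 2. -/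
open Classical SimpleGraph

noncomputable section

variable {V : Type*}

/-- unique paths property -/
def UPath (H : SimpleGraph V) : Prop :=
  ∀ ⦃x y : V⦄ (p q : H.Walk x y), p.IsPath → q.IsPath → p = q

lemma upath_of_acyclic {H : SimpleGraph V} (h : H.IsAcyclic) : UPath H := by
  intro x y p q hp hq
  have := isAcyclic_iff_path_unique.1 h (⟨p, hp⟩ : H.Path x y) ⟨q, hq⟩
  exact congrArg Subtype.val this

lemma onPath_iff {H : SimpleGraph V} (hup : UPath H) {i j : V} {p : H.Walk i j}
    (hp : p.IsPath) {e : Sym2 V} : onPath H i j e ↔ e ∈ p.edges := by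
  constructor
  · rintro ⟨q, hq, he⟩; rwa [hup q p hq hp] at he
  · intro he; exact ⟨p, hp, he⟩

lemma pathVec_eq_ind {H : SimpleGraph V} (hup : UPath H) {i j : V} {p : H.Walk i j}
    (hp : p.IsPath) : pathVec H i j = fun e => if e ∈ p.edges then 1 else 0 := by
  funext e
  simp only [pathVec, onPath_iff hup hp]

lemma pathVec_symm (H : SimpleGraph V) (i j : V) : pathVec H i j = pathVec H j i := by
  funext e
  have : onPath H i j e ↔ onPath H j i e := by
    constructor <;> rintro ⟨p, hp, he⟩
    · exact ⟨p.reverse, (Walk.isPath_reverse_iff p).2 hp, by simpa using he⟩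
    · exact ⟨p.reverse, (Walk.isPath_reverse_iff p).2 hp, by simpa using he⟩
  simp only [pathVec, this]

lemma pathVec_self (H : SimpleGraph V) (i : V) : pathVec H i i = 0 := by
  funext e
  simp only [pathVec, Pi.zero_apply, ite_eq_right_iff]
  rintro ⟨p, hp, he⟩
  rw [Walk.isPath_iff_eq_nil] at hp
  subst hp
  simp at he

lemma pathVec_nonneg (H : SimpleGraph V) (i j : V) (e : Sym2 V) : 0 ≤ pathVec H i j e := by
  unfold pathVec; split <;> norm_num

lemma pathVec_zero_or_one (H : SimpleGraph V) (i j : V) (e : Sym2 V) :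
    pathVec H i j e = 0 ∨ pathVec H i j e = 1 := by
  unfold pathVec; split <;> simp

lemma pathVec_eq_zero_of_unreachable {H : SimpleGraph V} {i j : V}
    (h : ¬ H.Reachable i j) : pathVec H i j = 0 := by
  funext e
  simp only [pathVec, Pi.zero_apply, ite_eq_right_iff]
  rintro ⟨p, _, _⟩
  exact absurd ⟨p⟩ h

/-- splitting along an interior vertex -/
lemma pathVec_split {H : SimpleGraph V} (hup : UPath H) {i j m : V} {p : H.Walk i j}
    (hp : p.IsPath) (hm : m ∈ p.support) :
    pathVec H i j = pathVec H i m + pathVec H m j := by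
  have hsp := p.take_spec hm
  have h1 : (p.takeUntil m hm).IsPath := hp.takeUntil hm
  have h2 : (p.dropUntil m hm).IsPath := hp.dropUntil hm
  have hed : p.edges = (p.takeUntil m hm).edges ++ (p.dropUntil m hm).edges := by
    conv_lhs => rw [← hsp]
    exact Walk.edges_append _ _
  have hnd : p.edges.Nodup := hp.isTrail.edges_nodup
  rw [hed] at hnd
  have hdisj := List.disjoint_of_nodup_append hnd
  funext e
  rw [pathVec_eq_ind hup hp, pathVec_eq_ind hup h1, pathVec_eq_ind hup h2]
  simp only [Pi.add_apply, hed, List.mem_append]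
  by_cases ha : e ∈ (p.takeUntil m hm).edges <;>
    by_cases hb : e ∈ (p.dropUntil m hm).edges <;>
    simp [ha, hb]
  exact absurd hb (hdisj ha)


/-- In a path starting at `x`, there is at most one edge through `x`. -/
lemma edge_start_unique {H : SimpleGraph V} {x y : V} {p : H.Walk x y}
    (hp : p.IsPath) {e₁ e₂ : Sym2 V} (h1 : e₁ ∈ p.edges) (h2 : e₂ ∈ p.edges)
    (hx1 : x ∈ e₁) (hx2 : x ∈ e₂) : e₁ = e₂ := by
  cases p with
  | nil => simp at h1
  | cons h q =>
    rename_i b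
    rw [Walk.cons_isPath_iff] at hp
    have key : ∀ e ∈ (Walk.cons h q).edges, x ∈ e → e = s(x, b) := by
      intro e he hxe
      rw [Walk.edges_cons, List.mem_cons] at he
      rcases he with rfl | he
      · rfl
      · obtain ⟨z, rfl⟩ := Sym2.mem_iff_exists.1 hxe
        exact absurd (Walk.fst_mem_support_of_mem_edges q he) hp.2
    rw [key e₁ h1 hx1, key e₂ h2 hx2]

lemma IsPath.concat' {H : SimpleGraph V} {a x z : V} {p : H.Walk a x}
    (hp : p.IsPath) (h : H.Adj x z) (hz : z ∉ p.support) : (p.concat h).IsPath := by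
  have : p.concat h = (Walk.cons h.symm p.reverse).reverse := by
    rw [Walk.reverse_cons, Walk.reverse_reverse, Walk.concat_eq_append]
  rw [this, Walk.isPath_reverse_iff, Walk.cons_isPath_iff]
  exact ⟨(Walk.isPath_reverse_iff p).2 hp, by simpa using hz⟩

/-- if `z` is a neighbor of the endpoint `x` lying on the path, then the edge `zx` is on it. -/
lemma edge_mem_of_nbr_mem_support {H : SimpleGraph V} (hup : UPath H) {y x z : V}
    {p : H.Walk y x} (hp : p.IsPath) (hz : z ∈ p.support) (hadj : H.Adj z x) :
    s(z, x) ∈ p.edges := by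
  have hq : (p.dropUntil z hz).IsPath := hp.dropUntil hz
  have hr : (Walk.cons hadj Walk.nil : H.Walk z x).IsPath := by
    rw [Walk.cons_isPath_iff]
    exact ⟨Walk.IsPath.nil, by simpa using hadj.ne⟩
  have := hup _ _ hq hr
  have hmem : s(z, x) ∈ (p.dropUntil z hz).edges := by rw [this]; simp
  exact Walk.edges_dropUntil_subset p hz hmem

/-- non-leaf with a neighbor has two distinct neighbors -/
lemma two_nbrs_of_not_leaf {H : SimpleGraph V} {x c : V} (hc : H.Adj x c)
    (hx : ¬ IsLeaf H x) : ∃ z₁ z₂, H.Adj x z₁ ∧ H.Adj x z₂ ∧ z₁ ≠ z₂ := by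
  by_contra hcon
  push_neg at hcon
  exact hx ⟨c, hc, fun y hy => by
    by_contra hne
    exact hne (hcon y c hy hc)⟩

/-- B3: beyond any neighbor `a` of `m` there is a leaf reachable avoiding `m`. -/
lemma exists_leaf_beyond {H : SimpleGraph V} [Fintype V] (hup : UPath H)
    {m a : V} (hadj : H.Adj m a) :
    ∃ ℓ, IsLeaf H ℓ ∧ ∃ w : H.Walk a ℓ, w.IsPath ∧ m ∉ w.support := by
  suffices key : ∀ n (x : V) (w : H.Walk a x), w.IsPath → m ∉ w.support →
      Fintype.card V - w.length ≤ n →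
      ∃ ℓ, IsLeaf H ℓ ∧ ∃ w' : H.Walk a ℓ, w'.IsPath ∧ m ∉ w'.support by
    refine key (Fintype.card V) a Walk.nil Walk.IsPath.nil (by simpa using hadj.ne) (by omega)
  intro n
  induction n with
  | zero =>
    intro x w hw hm hn
    exfalso
    have hp : (Walk.cons hadj w).IsPath := Walk.IsPath.cons hw hm
    have := hp.length_lt
    rw [Walk.length_cons] at this
    omega
  | succ n ih =>
    intro x w hw hm hn
    by_cases hleaf : IsLeaf H x
    · exact ⟨x, hleaf, w, hw, hm⟩
    · have hp : (Walk.cons hadj w).IsPath := Walk.IsPath.cons hw hm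
      -- x has a neighbor
      have hxm : x ≠ m := by
        intro h; subst h; exact hm (w.end_mem_support)
      have hxnbr : ∃ c, H.Adj x c := by
        cases hrev : (Walk.cons hadj w).reverse with
        | nil =>
          exfalso
          have := congrArg Walk.length hrev
          simp at this
        | cons h q => exact ⟨_, h⟩
      obtain ⟨c, hc⟩ := hxnbr
      obtain ⟨z₁, z₂, hz₁, hz₂, hne⟩ := two_nbrs_of_not_leaf hc hleaf
      have hone : ¬ (z₁ ∈ (Walk.cons hadj w).support ∧ z₂ ∈ (Walk.cons hadj w).support) := by
        rintro ⟨m1, m2⟩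
        have e1 := edge_mem_of_nbr_mem_support hup hp m1 hz₁.symm
        have e2 := edge_mem_of_nbr_mem_support hup hp m2 hz₂.symm
        have := edge_start_unique ((Walk.isPath_reverse_iff _).2 hp)
          (by rw [Walk.edges_reverse, List.mem_reverse]; exact e1)
          (by rw [Walk.edges_reverse, List.mem_reverse]; exact e2)
          (by simp) (by simp)
        rw [Sym2.eq_iff] at this
        rcases this with ⟨h, -⟩ | ⟨h, h'⟩
        · exact hne h
        · exact hz₁.ne h.symm
      have hz : ∃ z, H.Adj x z ∧ z ∉ (Walk.cons hadj w).support := by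
        by_cases h1 : z₁ ∈ (Walk.cons hadj w).support
        · exact ⟨z₂, hz₂, fun h2 => hone ⟨h1, h2⟩⟩
        · exact ⟨z₁, hz₁, h1⟩
      obtain ⟨z, hzadj, hzs⟩ := hz
      have hzw : z ∉ w.support := fun hc => hzs (by simp [hc])
      have hzm : z ≠ m := by
        intro h; subst h; exact hzs (Walk.start_mem_support _)
      refine ih z (w.concat hzadj) (IsPath.concat' hw hzadj hzw) ?_ ?_
      · rw [Walk.support_concat]
        simp only [List.concat_eq_append, List.mem_append, List.mem_singleton]
        rintro (h | h)
        · exact hm h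
        · exact hzm h.symm
      · rw [Walk.length_concat]
        omega

/-- B1: if x,y lie in different branches at m, every path x→y passes through m. -/
lemma mem_support_of_branches {H : SimpleGraph V} (hup : UPath H) {m a b x y : V}
    (ha : H.Adj m a) (hb : H.Adj m b) (hab : a ≠ b)
    (wa : H.Walk a x) (hwa : m ∉ wa.support)
    (wb : H.Walk b y) (hwb : m ∉ wb.support)
    (p : H.Walk x y) (hp : p.IsPath) : m ∈ p.support := by
  by_contra hmp
  have hbig : m ∉ ((wa.append p).append wb.reverse).support := by
    rw [Walk.mem_support_append_iff, Walk.mem_support_append_iff]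
    push_neg
    refine ⟨⟨hwa, hmp⟩, by simpa using hwb⟩
  set q := ((wa.append p).append wb.reverse).toPath with hq
  have hmq : m ∉ (q : H.Walk a b).support :=
    fun hc => hbig (Walk.support_toPath_subset _ hc)
  have hr : (Walk.cons ha.symm (Walk.cons hb Walk.nil) : H.Walk a b).IsPath := by
    rw [Walk.cons_isPath_iff, Walk.cons_isPath_iff]
    refine ⟨⟨Walk.IsPath.nil, by simpa using hb.ne⟩, ?_⟩
    simp only [Walk.support_cons, Walk.support_nil, List.mem_cons, List.mem_singleton,
      List.not_mem_nil, or_false]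
    push_neg
    exact ⟨ha.ne', hab⟩
  have := hup (q : H.Walk a b) _ q.2 hr
  rw [this] at hmq
  simp at hmq

/-- distinctness of vertices in different branches -/
lemma ne_of_branches {H : SimpleGraph V} (hup : UPath H) {m a b x y : V}
    (ha : H.Adj m a) (hb : H.Adj m b) (hab : a ≠ b)
    (wa : H.Walk a x) (hwa : m ∉ wa.support)
    (wb : H.Walk b y) (hwb : m ∉ wb.support) : x ≠ y := by
  rintro rfl
  have := mem_support_of_branches hup ha hb hab wa hwa wb hwb Walk.nil Walk.IsPath.nil
  rw [Walk.mem_support_nil_iff] at this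
  subst this
  exact hwa (wa.end_mem_support)

/-- B2: first step towards i from m -/
lemma exists_first_step {H : SimpleGraph V} {m i : V} (hne : i ≠ m)
    (hr : H.Reachable m i) :
    ∃ a, H.Adj m a ∧ ∃ w : H.Walk a i, w.IsPath ∧ m ∉ w.support := by
  obtain ⟨w0⟩ := hr
  set p := w0.toPath with hp
  cases hpc : (p : H.Walk m i) with
  | nil => exact absurd rfl hne
  | cons h q =>
    refine ⟨_, h, q, ?_, ?_⟩
    · have := p.2
      rw [hpc, Walk.cons_isPath_iff] at this
      exact this.1
    · have := p.2
      rw [hpc, Walk.cons_isPath_iff] at this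
      exact this.2
/-- generator set of the span `S_H` -/
def genSet (H : SimpleGraph V) : Set (Sym2 V → ℝ) :=
  {x | ∃ i j : V, i ≠ j ∧ IsLeaf H i ∧ IsLeaf H j ∧ x = pathVec H i j}

lemma pathVec_leaf_mem_span {H : SimpleGraph V} [Fintype V] (hup : UPath H)
    (Hdeg : ∀ w, ¬ IsLeaf H w → (H.neighborSet w).ncard ≠ 2) {i m : V}
    (hi : IsLeaf H i) (hr : H.Reachable i m) :
    pathVec H i m ∈ Submodule.span ℝ (genSet H) := by
  by_cases him : i = m
  · subst him; rw [pathVec_self]; exact zero_mem _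
  obtain ⟨a, ha, q, hq, hqm⟩ := exists_first_step him hr.symm
  by_cases hlm : IsLeaf H m
  · exact Submodule.subset_span ⟨i, m, him, hi, hlm, rfl⟩
  · have hfin : (H.neighborSet m).Finite := Set.toFinite _
    have hcard : 3 ≤ (H.neighborSet m).ncard := by
      obtain ⟨z₁, z₂, hz₁, hz₂, hne⟩ := two_nbrs_of_not_leaf ha hlm
      have h1 : 1 < (H.neighborSet m).ncard :=
        (Set.one_lt_ncard_iff hfin).2 ⟨z₁, z₂, hz₁, hz₂, hne⟩
      have := Hdeg m hlm
      omega
    have hamem : a ∈ H.neighborSet m := ha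
    have hdiff : 1 < ((H.neighborSet m) \ {a}).ncard := by
      have := Set.ncard_diff_singleton_add_one hamem hfin
      omega
    obtain ⟨b, c, hbmem, hcmem, hbc⟩ := (Set.one_lt_ncard_iff hfin.diff).1 hdiff
    have hb : H.Adj m b := hbmem.1
    have hc : H.Adj m c := hcmem.1
    have hba : b ≠ a := by simpa using hbmem.2
    have hca : c ≠ a := by simpa using hcmem.2
    obtain ⟨j, hj, wb, hwb, hwbm⟩ := exists_leaf_beyond hup hb
    obtain ⟨k, hk, wc, hwc, hwcm⟩ := exists_leaf_beyond hup hc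
    have hij : i ≠ j := ne_of_branches hup ha hb hba.symm q hqm wb hwbm
    have hik : i ≠ k := ne_of_branches hup ha hc hca.symm q hqm wc hwcm
    have hjk : j ≠ k := ne_of_branches hup hb hc hbc wb hwbm wc hwcm
    -- paths through m
    set pij := (q.reverse.append (Walk.cons ha.symm (Walk.cons hb wb))).toPath with hpij
    set pik := (q.reverse.append (Walk.cons ha.symm (Walk.cons hc wc))).toPath with hpik
    set pjk := (wb.reverse.append (Walk.cons hb.symm (Walk.cons hc wc))).toPath with hpjk
    have hmij : m ∈ (pij : H.Walk i j).support :=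
      mem_support_of_branches hup ha hb hba.symm q hqm wb hwbm _ pij.2
    have hmik : m ∈ (pik : H.Walk i k).support :=
      mem_support_of_branches hup ha hc hca.symm q hqm wc hwcm _ pik.2
    have hmjk : m ∈ (pjk : H.Walk j k).support :=
      mem_support_of_branches hup hb hc hbc wb hwbm wc hwcm _ pjk.2
    have e1 : pathVec H i j = pathVec H i m + pathVec H m j := pathVec_split hup pij.2 hmij
    have e2 : pathVec H i k = pathVec H i m + pathVec H m k := pathVec_split hup pik.2 hmik
    have e3 : pathVec H j k = pathVec H j m + pathVec H m k := pathVec_split hup pjk.2 hmjk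
    have hkey : pathVec H i j + pathVec H i k - pathVec H j k = (2:ℝ) • pathVec H i m := by
      rw [e1, e2, e3, pathVec_symm H m j]
      module
    have hfinal : pathVec H i m =
        (2⁻¹:ℝ) • (pathVec H i j + pathVec H i k - pathVec H j k) := by
      rw [hkey, smul_smul]
      norm_num
    rw [hfinal]
    refine Submodule.smul_mem _ _ (sub_mem (add_mem ?_ ?_) ?_) <;>
      apply Submodule.subset_span
    · exact ⟨i, j, hij, hi, hj, rfl⟩
    · exact ⟨i, k, hik, hi, hk, rfl⟩
    · exact ⟨j, k, hjk, hj, hk, rfl⟩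
lemma single_edge_mem_span {H : SimpleGraph V} [Fintype V] (hup : UPath H)
    (Hdeg : ∀ w, ¬ IsLeaf H w → (H.neighborSet w).ncard ≠ 2) {a b : V} (hab : H.Adj a b) :
    Pi.single s(a,b) (1:ℝ) ∈ Submodule.span ℝ (genSet H) := by
  obtain ⟨ℓ, hℓ, w, hw, hbw⟩ := exists_leaf_beyond hup hab.symm
  set q := w.reverse with hqdef
  have hq : q.IsPath := (Walk.isPath_reverse_iff w).2 hw
  have hbq : b ∉ q.support := by rwa [hqdef, Walk.support_reverse, List.mem_reverse]
  set p := q.concat hab with hpdef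
  have hp : p.IsPath := IsPath.concat' hq hab hbq
  have hedges : p.edges = q.edges ++ [s(a,b)] := by
    rw [hpdef, Walk.edges_concat, List.concat_eq_append]
  have hnotin : s(a,b) ∉ q.edges := fun hc =>
    hbq (Walk.snd_mem_support_of_mem_edges q hc)
  have hrepr : Pi.single s(a,b) (1:ℝ) = pathVec H ℓ b - pathVec H ℓ a := by
    funext e
    rw [Pi.sub_apply, pathVec_eq_ind hup hp, pathVec_eq_ind hup hq]
    by_cases he : e = s(a,b)
    · subst he
      simp [hedges, hnotin, Pi.single_apply]
    · have : (e ∈ p.edges) ↔ (e ∈ q.edges) := by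
        rw [hedges]; simp [he]
      by_cases heq : e ∈ q.edges <;> simp [Pi.single_apply, he, this, heq]
  rw [hrepr]
  exact sub_mem (pathVec_leaf_mem_span hup Hdeg hℓ ⟨p⟩)
    (pathVec_leaf_mem_span hup Hdeg hℓ ⟨q⟩)

def singleSet (T : Set (Sym2 V)) : Set (Sym2 V → ℝ) :=
  {y | ∃ f ∈ T, y = Pi.single f (1:ℝ)}

lemma mem_span_singleSet [Fintype V] {T : Set (Sym2 V)} {x : Sym2 V → ℝ}
    (hx : ∀ e ∉ T, x e = 0) : x ∈ Submodule.span ℝ (singleSet T) := by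
  classical
  have hxsum : x = ∑ e : Sym2 V, x e • (Pi.single e (1:ℝ) : Sym2 V → ℝ) := by
    funext e'
    rw [Finset.sum_apply]
    simp [Pi.single_apply, mul_ite]
  rw [hxsum]
  apply Submodule.sum_mem
  intro e _
  by_cases he : e ∈ T
  · exact Submodule.smul_mem _ _ (Submodule.subset_span ⟨e, he, rfl⟩)
  · rw [hx e he, zero_smul]; exact zero_mem _

lemma span_genSet_eq {H : SimpleGraph V} [Fintype V] (hup : UPath H)
    (Hdeg : ∀ w, ¬ IsLeaf H w → (H.neighborSet w).ncard ≠ 2) :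
    Submodule.span ℝ (genSet H) = Submodule.span ℝ (singleSet H.edgeSet) := by
  apply le_antisymm
  · rw [Submodule.span_le]
    rintro x ⟨i, j, -, -, -, rfl⟩
    apply mem_span_singleSet
    intro e he
    unfold pathVec
    rw [if_neg]
    rintro ⟨p, hp, hep⟩
    exact he (Walk.edges_subset_edgeSet p hep)
  · rw [Submodule.span_le]
    rintro y ⟨f, hf, rfl⟩
    revert hf
    induction f using Sym2.ind with
    | _ a b =>
      intro hf
      exact single_edge_mem_span hup Hdeg (H.mem_edgeSet.mp hf)

lemma finrank_span_singleSet [Fintype V] (T : Set (Sym2 V)) :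
    Module.finrank ℝ (Submodule.span ℝ (singleSet T)) = T.ncard := by
  classical
  have himg : singleSet T = (fun f : Sym2 V => Pi.single f (1:ℝ)) '' T := by
    ext y
    constructor
    · rintro ⟨f, hf, rfl⟩; exact ⟨f, hf, rfl⟩
    · rintro ⟨f, hf, rfl⟩; exact ⟨f, hf, rfl⟩
  have hbase : LinearIndependent ℝ (fun f : Sym2 V => Pi.single f (1:ℝ)) := by
    have := (Pi.basisFun ℝ (Sym2 V)).linearIndependent
    convert this using 1
    funext f
    rw [Pi.basisFun_apply]
  have hli := hbase.comp (Subtype.val : T → Sym2 V) Subtype.val_injective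
  have hcard := finrank_span_eq_card hli
  rw [Set.range_comp, Subtype.range_coe] at hcard
  rw [himg, hcard, ← Nat.card_coe_set_eq, Nat.card_eq_fintype_card]
lemma dimA {W : Type*} [AddCommGroup W] [Module ℝ W] [FiniteDimensional ℝ W]
    (s : Set W) (φ : W →ₗ[ℝ] ℝ) (c : ℝ) (hc : c ≠ 0) (hs : ∀ x ∈ s, φ x = c)
    {x₀ : W} (hx₀ : x₀ ∈ s) :
    Module.finrank ℝ (vectorSpan ℝ s) + 1 = Module.finrank ℝ (Submodule.span ℝ s) := by
  have hker : vectorSpan ℝ s ≤ LinearMap.ker φ := by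
    rw [vectorSpan_def, Submodule.span_le]
    rintro z hz
    obtain ⟨y, hy, y', hy', rfl⟩ := hz
    simp only [SetLike.mem_coe, LinearMap.mem_ker, vsub_eq_sub, map_sub, hs y hy, hs y' hy',
      sub_self]
  have hx0ne : x₀ ≠ 0 := by
    intro h
    apply hc
    rw [← hs x₀ hx₀, h, map_zero]
  have hsup : vectorSpan ℝ s ⊔ Submodule.span ℝ {x₀} = Submodule.span ℝ s := by
    apply le_antisymm
    · apply sup_le
      · rw [vectorSpan_def, Submodule.span_le]
        rintro z ⟨y, hy, y', hy', rfl⟩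
        exact sub_mem (Submodule.subset_span hy) (Submodule.subset_span hy')
      · exact Submodule.span_mono (Set.singleton_subset_iff.2 hx₀)
    · rw [Submodule.span_le]
      intro y hy
      have : y = (y - x₀) + x₀ := by abel
      rw [this]
      refine add_mem (Submodule.mem_sup_left ?_) (Submodule.mem_sup_right ?_)
      · exact Submodule.subset_span (Set.vsub_mem_vsub hy hx₀)
      · exact Submodule.subset_span rfl
  have hinf : vectorSpan ℝ s ⊓ Submodule.span ℝ {x₀} = ⊥ := by
    rw [eq_bot_iff]
    rintro z hz
    rw [Submodule.mem_inf] at hz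
    obtain ⟨h1, h2⟩ := hz
    obtain ⟨t, rfl⟩ := Submodule.mem_span_singleton.1 h2
    have : φ (t • x₀) = 0 := hker h1
    rw [map_smul, hs x₀ hx₀, smul_eq_mul] at this
    have ht : t = 0 := by
      rcases mul_eq_zero.1 this with h | h
      · exact h
      · exact absurd h hc
    simp [ht]
  have := Submodule.finrank_sup_add_finrank_inf_eq (vectorSpan ℝ s) (Submodule.span ℝ {x₀})
  rw [hsup, hinf, finrank_bot, finrank_span_singleton hx0ne, add_zero] at this
  omega

lemma isLeaf_iff_ncard {H : SimpleGraph V} [Fintype V] {w : V} :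
    IsLeaf H w ↔ (H.neighborSet w).ncard = 1 := by
  rw [Set.ncard_eq_one]
  constructor
  · rintro ⟨n, hn, hun⟩
    exact ⟨n, Set.eq_singleton_iff_unique_mem.2 ⟨hn, fun y hy => hun y hy⟩⟩
  · rintro ⟨n, hn⟩
    have := Set.eq_singleton_iff_unique_mem.1 hn
    exact ⟨n, this.1, fun y hy => this.2 y hy⟩

lemma leaf_support_endpoint {H : SimpleGraph V} {x y w : V} {p : H.Walk x y}
    (hp : p.IsPath) (hw : w ∈ p.support) (hleaf : IsLeaf H w) : w = x ∨ w = y := by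
  by_contra hcon
  push_neg at hcon
  obtain ⟨hwx, hwy⟩ := hcon
  obtain ⟨n, hn, hun⟩ := hleaf
  have hsp := p.take_spec hw
  have hed : p.edges = (p.takeUntil w hw).edges ++ (p.dropUntil w hw).edges := by
    conv_lhs => rw [← hsp]
    exact Walk.edges_append _ _
  have hnd : p.edges.Nodup := hp.isTrail.edges_nodup
  rw [hed] at hnd
  have hdisj := List.disjoint_of_nodup_append hnd
  -- edge at w inside takeUntil
  have h1 : ∃ z, H.Adj w z ∧ s(w, z) ∈ (p.takeUntil w hw).edges := by
    cases hq : (p.takeUntil w hw).reverse with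
    | nil =>
      exfalso
      apply hwx
      have := congrArg Walk.length hq
      simp only [Walk.length_reverse, Walk.length_nil] at this
      exact (Walk.eq_of_length_eq_zero this).symm
    | cons h q =>
      rename_i b
      refine ⟨b, h, ?_⟩
      have : s(w, b) ∈ (p.takeUntil w hw).reverse.edges := by rw [hq]; simp
      rwa [Walk.edges_reverse, List.mem_reverse] at this
  have h2 : ∃ z, H.Adj w z ∧ s(w, z) ∈ (p.dropUntil w hw).edges := by
    cases hq : (p.dropUntil w hw) with
    | nil => exact absurd rfl hwy
    | cons h q =>
      rename_i b
      refine ⟨b, h, ?_⟩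
      simp
  obtain ⟨z₁, hz₁, he₁⟩ := h1
  obtain ⟨z₂, hz₂, he₂⟩ := h2
  have : z₁ = z₂ := by rw [hun z₁ hz₁, hun z₂ hz₂]
  subst this
  exact hdisj he₁ he₂

lemma first_edge {H : SimpleGraph V} {i j : V} (p : H.Walk i j) (hne : i ≠ j) :
    ∃ y, H.Adj i y ∧ s(i, y) ∈ p.edges := by
  cases p with
  | nil => exact absurd rfl hne
  | cons h q => exact ⟨_, h, by simp⟩

lemma not_both_leaves {G : SimpleGraph V} (hG : G.IsTree) (hE : 3 ≤ G.edgeSet.ncard)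
    {i j : V} (hadj : G.Adj i j) (hi : IsLeaf G i) (hj : IsLeaf G j) : False := by
  obtain ⟨ni, hni, huni⟩ := hi
  obtain ⟨nj, hnj, hunj⟩ := hj
  have hnij : ni = j := (huni j hadj).symm
  have hnji : nj = i := (hunj i hadj.symm).symm
  have hall : ∀ w, w = i ∨ w = j := by
    intro w
    obtain ⟨p0⟩ := hG.isConnected.preconnected i w
    obtain ⟨p, hp⟩ := (⟨p0.toPath.1, p0.toPath.2⟩ : ∃ p : G.Walk i w, p.IsPath)
    cases p with
    | nil => exact Or.inl rfl
    | cons h q =>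
      rename_i b
      have hbj : b = j := by rw [huni b h, hnij]
      subst hbj
      cases q with
      | nil => exact Or.inr rfl
      | cons h' q' =>
        rename_i z
        exfalso
        have hzi : z = i := by rw [hunj z h', hnji]
        rw [Walk.cons_isPath_iff] at hp
        apply hp.2
        subst hzi
        simp [Walk.start_mem_support]
  have hsub : G.edgeSet ⊆ {s(i, j)} := by
    intro e he
    revert he
    induction e using Sym2.ind with
    | _ a b =>
      intro he
      rw [mem_edgeSet] at he
      rcases hall a with rfl | rfl <;> rcases hall b with rfl | rfl
      · exact absurd rfl he.ne
      · exact Set.mem_singleton _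
      · rw [Sym2.eq_swap]; exact Set.mem_singleton _
      · exact absurd rfl he.ne
  have := Set.ncard_le_ncard hsub (Set.finite_singleton _)
  rw [Set.ncard_singleton] at this
  omega
lemma sum_leafEdges_pathVec {G : SimpleGraph V} [Fintype V] (hG : G.IsTree)
    (hE : 3 ≤ G.edgeSet.ncard) {i j : V} (hij : i ≠ j) (hi : IsLeaf G i) (hj : IsLeaf G j) :
    ∑ e ∈ (Set.toFinite (leafEdges G)).toFinset, pathVec G i j e = 2 := by
  classical
  have hup : UPath G := upath_of_acyclic hG.2
  obtain ⟨p0⟩ := hG.isConnected.preconnected i j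
  have hp : (p0.toPath : G.Walk i j).IsPath := p0.toPath.2
  set p := (p0.toPath : G.Walk i j) with hpdef
  obtain ⟨ni, hni, huni⟩ := hi
  obtain ⟨nj, hnj, hunj⟩ := hj
  have hne2 : s(i, ni) ≠ s(j, nj) := by
    intro h
    rw [Sym2.eq_iff] at h
    rcases h with ⟨h1, h2⟩ | ⟨h1, h2⟩
    · exact hij h1
    · exact not_both_leaves hG hE (h2 ▸ hni) ⟨ni, hni, huni⟩ ⟨nj, hnj, hunj⟩
  have hfilter : ((Set.toFinite (leafEdges G)).toFinset.filter (fun e => e ∈ p.edges))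
      = {s(i, ni), s(j, nj)} := by
    ext e
    simp only [Finset.mem_filter, Set.Finite.mem_toFinset, Finset.mem_insert,
      Finset.mem_singleton]
    constructor
    · rintro ⟨⟨heE, w, hwe, hwleaf⟩, hep⟩
      obtain ⟨z, rfl⟩ := Sym2.mem_iff_exists.1 hwe
      have hws : w ∈ p.support := Walk.fst_mem_support_of_mem_edges p hep
      rcases leaf_support_endpoint hp hws hwleaf with rfl | rfl
      · left
        have : G.Adj w z := (G.mem_edgeSet).1 heE
        rw [huni z this]
      · right
        have : G.Adj w z := (G.mem_edgeSet).1 heE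
        rw [hunj z this]
    · rintro (rfl | rfl)
      · refine ⟨⟨(G.mem_edgeSet).2 hni, i, by simp, ⟨ni, hni, huni⟩⟩, ?_⟩
        obtain ⟨y, hy, hmem⟩ := first_edge p hij
        rwa [huni y hy] at hmem
      · refine ⟨⟨(G.mem_edgeSet).2 hnj, j, by simp, ⟨nj, hnj, hunj⟩⟩, ?_⟩
        obtain ⟨y, hy, hmem⟩ := first_edge p.reverse (Ne.symm hij)
        rw [hunj y hy] at hmem
        rwa [Walk.edges_reverse, List.mem_reverse] at hmem
  rw [pathVec_eq_ind hup hp]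
  rw [Finset.sum_boole]
  rw [hfilter]
  rw [Finset.card_insert_of_notMem (by simp [hne2]), Finset.card_singleton]
  norm_num

lemma isAcyclic_deleteEdges {G : SimpleGraph V} (h : G.IsAcyclic) (s : Set (Sym2 V)) :
    (G.deleteEdges s).IsAcyclic := by
  intro w c hc
  have hsub : ∀ e ∈ c.edges, e ∈ G.edgeSet := by
    intro e he
    have := Walk.edges_subset_edgeSet c he
    rw [edgeSet_deleteEdges] at this
    exact this.1
  exact h (c.transfer G hsub) (hc.transfer hsub)

lemma pathVec_transfer {G : SimpleGraph V} {s : Set (Sym2 V)} (hupG : UPath G)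
    (hupG' : UPath (G.deleteEdges s)) {i j : V} (p' : (G.deleteEdges s).Walk i j)
    (hp' : p'.IsPath) : pathVec G i j = pathVec (G.deleteEdges s) i j := by
  have hsub : ∀ e ∈ p'.edges, e ∈ G.edgeSet := by
    intro e he
    have := Walk.edges_subset_edgeSet p' he
    rw [edgeSet_deleteEdges] at this
    exact this.1
  funext e
  rw [pathVec_eq_ind hupG (hp'.transfer hsub), pathVec_eq_ind hupG' hp',
    Walk.edges_transfer]
lemma hull_inter (G : SimpleGraph V) (u v : V) :
    convexHull ℝ {x : Sym2 V → ℝ | ∃ i j : V, i ≠ j ∧ IsLeaf G i ∧ IsLeaf G j ∧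
        ¬ onPath G i j s(u, v) ∧ x = pathVec G i j}
      = pathPolytope G ∩ {x | x s(u, v) = 0} := by
  apply Set.Subset.antisymm
  · apply convexHull_min
    · rintro x ⟨i, j, hij, hi, hj, hnp, rfl⟩
      constructor
      · exact subset_convexHull ℝ _ ⟨i, j, hij, hi, hj, rfl⟩
      · simp only [Set.mem_setOf_eq, pathVec, if_neg hnp]
    · refine (convex_convexHull ℝ _).inter (convex_hyperplane ?_ 0)
      exact ⟨fun a b => rfl, fun c a => rfl⟩
  · rintro x ⟨hxP, hx0⟩
    rw [pathPolytope, convexHull_eq] at hxP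
    obtain ⟨ι, t, w, z, hw0, hw1, hz, hcm⟩ := hxP
    rw [Finset.centerMass_eq_of_sum_1 _ _ hw1] at hcm
    have hx0' : ∑ i ∈ t, w i * z i s(u, v) = 0 := by
      have := congrFun hcm s(u, v)
      rw [Finset.sum_apply] at this
      simp only [Pi.smul_apply, smul_eq_mul] at this
      rw [this]
      exact hx0
    have hznn : ∀ i ∈ t, 0 ≤ z i s(u, v) := by
      intro i hi
      obtain ⟨i₀, j₀, -, -, -, heq⟩ := hz i hi
      rw [heq]
      exact pathVec_nonneg G i₀ j₀ _
    have hterm : ∀ i ∈ t, w i * z i s(u, v) = 0 :=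
      (Finset.sum_eq_zero_iff_of_nonneg
        (fun i hi => mul_nonneg (hw0 i hi) (hznn i hi))).1 hx0'
    set t' := t.filter (fun i => z i s(u, v) = 0) with ht'
    have hwzero : ∀ i ∈ t, i ∉ t' → w i = 0 := by
      intro i hi hni
      have hz0 : z i s(u, v) ≠ 0 := by
        intro hc
        exact hni (Finset.mem_filter.2 ⟨hi, hc⟩)
      rcases mul_eq_zero.1 (hterm i hi) with h | h
      · exact h
      · exact absurd h hz0
    have hsum' : ∑ i ∈ t', w i = 1 := by
      rw [← hw1]
      exact Finset.sum_subset (Finset.filter_subset _ _) hwzero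
    have hvec : ∑ i ∈ t', w i • z i = x := by
      rw [← hcm]
      exact Finset.sum_subset (Finset.filter_subset _ _)
        (fun i hi hni => by rw [hwzero i hi hni, zero_smul])
    have hmem : ∀ i ∈ t', z i ∈ {x : Sym2 V → ℝ | ∃ i j : V, i ≠ j ∧ IsLeaf G i ∧
        IsLeaf G j ∧ ¬ onPath G i j s(u, v) ∧ x = pathVec G i j} := by
      intro i hi
      have hit := Finset.mem_filter.1 hi
      obtain ⟨i₀, j₀, hij₀, hi₀, hj₀, heq⟩ := hz i hit.1
      refine ⟨i₀, j₀, hij₀, hi₀, hj₀, ?_, heq⟩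
      intro hon
      have := hit.2
      rw [heq] at this
      simp only [pathVec, if_pos hon] at this
      norm_num at this
    have := Finset.centerMass_mem_convexHull t'
      (fun i hi => hw0 i (Finset.filter_subset _ _ hi)) (by rw [hsum']; norm_num)
      hmem
    rwa [Finset.centerMass_eq_of_sum_1 _ _ hsum', hvec] at this
lemma nbr_G'_other {G : SimpleGraph V} {u v w : V} (hwu : w ≠ u) (hwv : w ≠ v) :
    (G.deleteEdges {s(u,v)}).neighborSet w = G.neighborSet w := by
  ext y
  simp only [mem_neighborSet, deleteEdges_adj, Set.mem_singleton_iff]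
  constructor
  · rintro ⟨h, -⟩; exact h
  · intro h
    refine ⟨h, ?_⟩
    intro hc
    rw [Sym2.eq_iff] at hc
    rcases hc with ⟨rfl, -⟩ | ⟨rfl, -⟩
    · exact hwu rfl
    · exact hwv rfl

lemma nbr_G'_u {G : SimpleGraph V} {u v : V} (huv : G.Adj u v) :
    (G.deleteEdges {s(u,v)}).neighborSet u = G.neighborSet u \ {v} := by
  ext y
  simp only [mem_neighborSet, deleteEdges_adj, Set.mem_singleton_iff, Set.mem_diff]
  constructor
  · rintro ⟨h, hne⟩
    refine ⟨h, ?_⟩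
    rintro rfl
    exact hne rfl
  · rintro ⟨h, hne⟩
    refine ⟨h, ?_⟩
    intro hc
    rw [Sym2.eq_iff] at hc
    rcases hc with ⟨-, rfl⟩ | ⟨rfl, -⟩
    · exact hne rfl
    · exact huv.ne rfl

lemma nbr_G'_v {G : SimpleGraph V} {u v : V} (huv : G.Adj u v) :
    (G.deleteEdges {s(u,v)}).neighborSet v = G.neighborSet v \ {u} := by
  have h : ({s(u,v)} : Set (Sym2 V)) = {s(v,u)} := by rw [Sym2.eq_swap]
  rw [h]
  exact nbr_G'_u huv.symm

lemma nbrcard_G'_end {G : SimpleGraph V} [Fintype V] {u v : V} (huv : G.Adj u v)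
    (hdeg2 : ∀ w, ¬ IsLeaf G w → (G.neighborSet w).ncard ≠ 2)
    (hu : (G.neighborSet u).ncard ≠ 3) :
    ((G.deleteEdges {s(u,v)}).neighborSet u).ncard = 0 ∨
      3 ≤ ((G.deleteEdges {s(u,v)}).neighborSet u).ncard := by
  rw [nbr_G'_u huv]
  have hvmem : v ∈ G.neighborSet u := huv
  have hfin : (G.neighborSet u).Finite := Set.toFinite _
  by_cases hl : IsLeaf G u
  · left
    have h1 := isLeaf_iff_ncard.1 hl
    obtain ⟨a, ha⟩ := Set.ncard_eq_one.1 h1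
    rw [ha, Set.mem_singleton_iff] at hvmem
    rw [ha, hvmem]
    simp
  · right
    have h1 : (G.neighborSet u).ncard ≠ 1 := fun hc => hl (isLeaf_iff_ncard.2 hc)
    have hpos : 0 < (G.neighborSet u).ncard := (Set.ncard_pos hfin).2 ⟨v, hvmem⟩
    have h2 := hdeg2 u hl
    rw [Set.ncard_diff_singleton_of_mem hvmem]
    omega

lemma main_glue {G : SimpleGraph V} [Fintype V] (hG : G.IsTree) (hE : 3 ≤ G.edgeSet.ncard)
    (hdeg2 : ∀ w, ¬ IsLeaf G w → (G.neighborSet w).ncard ≠ 2)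
    {u v : V} (huv : G.Adj u v)
    (hu : (G.neighborSet u).ncard ≠ 3) (hv : (G.neighborSet v).ncard ≠ 3) :
    Submodule.span ℝ {x : Sym2 V → ℝ | ∃ i j : V, i ≠ j ∧ IsLeaf G i ∧ IsLeaf G j ∧
        ¬ onPath G i j s(u, v) ∧ x = pathVec G i j}
      = Submodule.span ℝ (genSet (G.deleteEdges {s(u,v)})) := by
  set G' := G.deleteEdges {s(u,v)} with hG'
  have hupG : UPath G := upath_of_acyclic hG.2
  have hupG' : UPath G' := upath_of_acyclic (isAcyclic_deleteEdges hG.2 _)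
  have hcard_u : (G'.neighborSet u).ncard = 0 ∨ 3 ≤ (G'.neighborSet u).ncard := by
    rw [hG']
    exact nbrcard_G'_end huv hdeg2 hu
  have hcard_v : (G'.neighborSet v).ncard = 0 ∨ 3 ≤ (G'.neighborSet v).ncard := by
    have h : ({s(u,v)} : Set (Sym2 V)) = {s(v,u)} := by rw [Sym2.eq_swap]
    rw [hG', h]
    exact nbrcard_G'_end huv.symm hdeg2 hv
  have hnlu : ¬ IsLeaf G' u := by
    rw [isLeaf_iff_ncard]
    rcases hcard_u with h | h <;> omega
  have hnlv : ¬ IsLeaf G' v := by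
    rw [isLeaf_iff_ncard]
    rcases hcard_v with h | h <;> omega
  have hleafiff : ∀ w, w ≠ u → w ≠ v → (IsLeaf G' w ↔ IsLeaf G w) := by
    intro w hwu hwv
    rw [isLeaf_iff_ncard, isLeaf_iff_ncard, hG', nbr_G'_other hwu hwv]
  apply le_antisymm
  · rw [Submodule.span_le]
    rintro x ⟨i, j, hij, hi, hj, hnp, rfl⟩
    obtain ⟨p0⟩ := hG.isConnected.preconnected i j
    set p := (p0.toPath : G.Walk i j) with hpdef
    have hp : p.IsPath := p0.toPath.2
    have huvp : s(u,v) ∉ p.edges := fun hc => hnp ⟨p, hp, hc⟩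
    have hsub : ∀ e ∈ p.edges, e ∈ G'.edgeSet := by
      intro e he
      rw [hG', edgeSet_deleteEdges]
      exact ⟨Walk.edges_subset_edgeSet p he, fun hc => huvp (hc ▸ he)⟩
    have hp' : (p.transfer G' hsub).IsPath := hp.transfer hsub
    have hpv : pathVec G i j = pathVec G' i j := pathVec_transfer hupG hupG' _ hp'
    have hiu : ∀ k, IsLeaf G k → (k = i ∨ k = j) → k ≠ u ∧ k ≠ v := by
      rintro k hk hkij
      obtain ⟨nk, hnk, hunk⟩ := hk
      have hke : ∃ y, G.Adj k y ∧ s(k, y) ∈ p.edges := by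
        rcases hkij with rfl | rfl
        · exact first_edge p hij
        · obtain ⟨y, hy, hmem⟩ := first_edge p.reverse (Ne.symm hij)
          rw [Walk.edges_reverse, List.mem_reverse] at hmem
          exact ⟨y, hy, hmem⟩
      obtain ⟨y, hy, hmem⟩ := hke
      constructor
      · rintro rfl
        have : y = v := by rw [hunk y hy, (hunk v huv).symm]
        rw [this] at hmem
        exact huvp hmem
      · rintro rfl
        have : y = u := by rw [hunk y hy, (hunk u huv.symm).symm]
        rw [this, Sym2.eq_swap] at hmem
        exact huvp hmem
    obtain ⟨hiu', hiv'⟩ := hiu i ⟨_, hi.choose_spec.1, hi.choose_spec.2⟩ (Or.inl rfl)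
    obtain ⟨hju', hjv'⟩ := hiu j ⟨_, hj.choose_spec.1, hj.choose_spec.2⟩ (Or.inr rfl)
    rw [hpv]
    exact Submodule.subset_span
      ⟨i, j, hij, (hleafiff i hiu' hiv').2 hi, (hleafiff j hju' hjv').2 hj, rfl⟩
  · rw [Submodule.span_le]
    rintro y ⟨i, j, hij, hi', hj', rfl⟩
    by_cases hreach : G'.Reachable i j
    · obtain ⟨p0⟩ := hreach
      set p' := (p0.toPath : G'.Walk i j) with hpdef
      have hp' : p'.IsPath := p0.toPath.2
      have hpv : pathVec G i j = pathVec G' i j := pathVec_transfer hupG hupG' _ hp'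
      have hsub : ∀ e ∈ p'.edges, e ∈ G.edgeSet := by
        intro e he
        have := Walk.edges_subset_edgeSet p' he
        rw [hG', edgeSet_deleteEdges] at this
        exact this.1
      have huvp : s(u,v) ∉ p'.edges := by
        intro hc
        have := Walk.edges_subset_edgeSet p' hc
        rw [hG', edgeSet_deleteEdges] at this
        exact this.2 rfl
      have hnp : ¬ onPath G i j s(u,v) := by
        rintro ⟨q, hq, hqe⟩
        rw [hupG q (p'.transfer G hsub) hq (hp'.transfer hsub)] at hqe
        rw [Walk.edges_transfer] at hqe
        exact huvp hqe
      have hiu' : i ≠ u := fun hc => hnlu (hc ▸ hi')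
      have hiv' : i ≠ v := fun hc => hnlv (hc ▸ hi')
      have hju' : j ≠ u := fun hc => hnlu (hc ▸ hj')
      have hjv' : j ≠ v := fun hc => hnlv (hc ▸ hj')
      rw [← hpv]
      exact Submodule.subset_span
        ⟨i, j, hij, (hleafiff i hiu' hiv').1 hi', (hleafiff j hju' hjv').1 hj', hnp, rfl⟩
    · rw [pathVec_eq_zero_of_unreachable hreach]
      exact zero_mem _
lemma Hdeg_G' {G : SimpleGraph V} [Fintype V]
    (hdeg2 : ∀ w, ¬ IsLeaf G w → (G.neighborSet w).ncard ≠ 2)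
    {u v : V} (huv : G.Adj u v)
    (hu : (G.neighborSet u).ncard ≠ 3) (hv : (G.neighborSet v).ncard ≠ 3) :
    ∀ w, ¬ IsLeaf (G.deleteEdges {s(u,v)}) w →
      ((G.deleteEdges {s(u,v)}).neighborSet w).ncard ≠ 2 := by
  intro w hw
  by_cases hwu : w = u
  · subst hwu
    rcases nbrcard_G'_end huv hdeg2 hu with h | h <;> omega
  by_cases hwv : w = v
  · rw [hwv]
    have h : ({s(u,v)} : Set (Sym2 V)) = {s(v,u)} := by rw [Sym2.eq_swap]
    rw [h]
    rcases nbrcard_G'_end huv.symm hdeg2 hv with h' | h' <;> omega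
  rw [nbr_G'_other hwu hwv]
  apply hdeg2 w
  intro hc
  apply hw
  rw [isLeaf_iff_ncard, nbr_G'_other hwu hwv, ← isLeaf_iff_ncard]
  exact hc


/-- For a tree with at least 3 edges and no internal vertex of degree 2,
and an edge `{u,v}` with `deg u ≠ 3 ≠ deg v`, the convex hull of the path vectors avoiding
`{u,v}` equals `P_T ∩ {x_{u,v} = 0}` and is a facet of `P_T` of dimension `|E| − 2`. -/
theorem facet_F [Fintype V] (G : SimpleGraph V)
    (hG : G.IsTree) (hE : 3 ≤ G.edgeSet.ncard)
    (hdeg2 : ∀ w, ¬ IsLeaf G w → (G.neighborSet w).ncard ≠ 2)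
    (u v : V) (huv : G.Adj u v)
    (hu : (G.neighborSet u).ncard ≠ 3) (hv : (G.neighborSet v).ncard ≠ 3) :
    convexHull ℝ {x : Sym2 V → ℝ | ∃ i j : V, i ≠ j ∧ IsLeaf G i ∧ IsLeaf G j ∧
        ¬ onPath G i j s(u, v) ∧ x = pathVec G i j}
      = pathPolytope G ∩ {x | x s(u, v) = 0} ∧
    IsFacetOf (pathPolytope G)
      (convexHull ℝ {x : Sym2 V → ℝ | ∃ i j : V, i ≠ j ∧ IsLeaf G i ∧ IsLeaf G j ∧
        ¬ onPath G i j s(u, v) ∧ x = pathVec G i j}) ∧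
    polyDim (convexHull ℝ {x : Sym2 V → ℝ | ∃ i j : V, i ≠ j ∧ IsLeaf G i ∧ IsLeaf G j ∧
        ¬ onPath G i j s(u, v) ∧ x = pathVec G i j}) + 2 = G.edgeSet.ncard := by
  classical
  have hupG : UPath G := upath_of_acyclic hG.2
  have hupG' : UPath (G.deleteEdges {s(u,v)}) :=
    upath_of_acyclic (isAcyclic_deleteEdges hG.2 _)
  set genF := {x : Sym2 V → ℝ | ∃ i j : V, i ≠ j ∧ IsLeaf G i ∧ IsLeaf G j ∧
        ¬ onPath G i j s(u, v) ∧ x = pathVec G i j} with hgenF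
  have hgenP : pathPolytope G = convexHull ℝ (genSet G) := rfl
  -- span computations
  have hspanP : Submodule.span ℝ (genSet G) = Submodule.span ℝ (singleSet G.edgeSet) :=
    span_genSet_eq hupG hdeg2
  have hspanF : Submodule.span ℝ genF
      = Submodule.span ℝ (singleSet ((G.deleteEdges {s(u,v)}).edgeSet)) := by
    rw [hgenF, main_glue hG hE hdeg2 huv hu hv]
    exact span_genSet_eq hupG' (Hdeg_G' hdeg2 huv hu hv)
  have hedge' : (G.deleteEdges {s(u,v)}).edgeSet = G.edgeSet \ {s(u,v)} :=
    edgeSet_deleteEdges _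
  have huvE : s(u,v) ∈ G.edgeSet := huv
  have hEfin : G.edgeSet.Finite := Set.toFinite _
  have hcardF : (G.edgeSet \ {s(u,v)}).ncard + 1 = G.edgeSet.ncard :=
    Set.ncard_diff_singleton_add_one huvE hEfin
  have hrankP : Module.finrank ℝ (Submodule.span ℝ (genSet G)) = G.edgeSet.ncard := by
    rw [hspanP, finrank_span_singleSet]
  have hrankF : Module.finrank ℝ (Submodule.span ℝ genF) + 1 = G.edgeSet.ncard := by
    rw [hspanF, hedge', finrank_span_singleSet, hcardF]
  -- nonemptiness of genF
  have hFne : genF.Nonempty := by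
    by_contra hc
    rw [Set.not_nonempty_iff_eq_empty] at hc
    rw [hc, Submodule.span_empty, finrank_bot] at hrankF
    omega
  obtain ⟨x₀, hx₀⟩ := hFne
  have hx₀P : x₀ ∈ genSet G := by
    obtain ⟨i, j, hij, hi, hj, -, heq⟩ := hx₀
    exact ⟨i, j, hij, hi, hj, heq⟩
  -- the functional φ
  set Lfin := (Set.toFinite (leafEdges G)).toFinset with hLfin
  set φ : (Sym2 V → ℝ) →ₗ[ℝ] ℝ := ∑ e ∈ Lfin, LinearMap.proj e with hφ
  have hφapp : ∀ x : Sym2 V → ℝ, φ x = ∑ e ∈ Lfin, x e := by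
    intro x
    rw [hφ, LinearMap.coe_sum, Finset.sum_apply]
    simp [LinearMap.proj_apply]
  have hφP : ∀ x ∈ genSet G, φ x = 2 := by
    rintro x ⟨i, j, hij, hi, hj, rfl⟩
    rw [hφapp]
    exact sum_leafEdges_pathVec hG hE hij hi hj
  have hφF : ∀ x ∈ genF, φ x = 2 := by
    rintro x ⟨i, j, hij, hi, hj, -, rfl⟩
    rw [hφapp]
    exact sum_leafEdges_pathVec hG hE hij hi hj
  -- polytope dimensions
  have hdimP : polyDim (pathPolytope G) + 1 = G.edgeSet.ncard := by
    rw [hgenP, polyDim, affineSpan_convexHull, direction_affineSpan, ← hrankP]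
    exact dimA (genSet G) φ 2 (by norm_num) hφP hx₀P
  have hdimF : polyDim (convexHull ℝ genF) + 2 = G.edgeSet.ncard := by
    rw [polyDim, affineSpan_convexHull, direction_affineSpan, ← hrankF]
    have := dimA genF φ 2 (by norm_num) hφF hx₀
    omega
  have hhull := hull_inter G u v
  rw [← hgenF] at hhull
  refine ⟨hhull, ⟨⟨-(LinearMap.proj s(u,v)), 0, ?_, ?_⟩, ?_⟩, ?_⟩
  · intro x hx
    have hP : pathPolytope G ⊆ {x : Sym2 V → ℝ | 0 ≤ x s(u,v)} := by
      apply convexHull_min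
      · rintro y ⟨i, j, -, -, -, rfl⟩
        exact pathVec_nonneg G i j _
      · exact convex_halfSpace_ge ⟨fun a b => rfl, fun c a => rfl⟩ 0
    simp only [LinearMap.neg_apply, LinearMap.proj_apply]
    have := hP hx
    simp only [Set.mem_setOf_eq] at this
    linarith
  · rw [hhull]
    ext x
    simp only [Set.mem_inter_iff, Set.mem_setOf_eq, LinearMap.neg_apply, LinearMap.proj_apply,
      neg_eq_zero]
  · omega
  · omega
end
end

section
/- Let T = (V,E) be a tree with at least 3 edges and no internal vertex of degree 2, let u be an internal vertex and v ∈ N(u). Then G_T^{(u,v)} := conv{ c^{i↔j} : i,j distinct leaves, and either {u,v} ∈ i↔j, or {u,w} ∉ i↔j for every w ∈ N(u) } equals P_T ∩ { x : −x_{{u,v}} + ∑_{w ∈ N(u)\{v}} x_{{u,w}} = 0 } and is a facet of P_T, i.e., has dimension |E| − 2. -/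
open Classical SimpleGraph

noncomputable section

variable {V : Type*}

set_option linter.unusedSectionVars false

namespace FacetAux

variable {G : SimpleGraph V}

/-! ### indicator vectors -/

/-- indicator of a list of edges -/
def eVec (l : List (Sym2 V)) : Sym2 V → ℝ := fun e => if e ∈ l then 1 else 0

/-- unit vector -/
def uVec (e : Sym2 V) : Sym2 V → ℝ := fun e' => if e' = e then 1 else 0

lemma eVec_congr {l₁ l₂ : List (Sym2 V)} (h : ∀ e, e ∈ l₁ ↔ e ∈ l₂) : eVec l₁ = eVec l₂ := by
  funext e; simp only [eVec, h]

lemma eVec_cons {e : Sym2 V} {l : List (Sym2 V)} (h : e ∉ l) :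
    eVec (e :: l) = uVec e + eVec l := by
  funext e'; simp only [eVec, uVec, List.mem_cons, Pi.add_apply]
  by_cases h1 : e' = e
  · subst h1; simp [h]
  · simp [h1]

lemma eVec_append {l₁ l₂ : List (Sym2 V)} (h : ∀ e, e ∈ l₁ → e ∉ l₂) :
    eVec (l₁ ++ l₂) = eVec l₁ + eVec l₂ := by
  funext e'; simp only [eVec, List.mem_append, Pi.add_apply]
  by_cases h1 : e' ∈ l₁
  · simp [h1, h e' h1]
  · by_cases h2 : e' ∈ l₂ <;> simp [h1, h2]

/-! ### tree paths -/

variable (hG : G.IsTree)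

/-- The unique path between two vertices of a tree. -/
def tpath (i j : V) : G.Walk i j := (hG.existsUnique_path i j).choose

lemma tpath_isPath (i j : V) : (tpath hG i j).IsPath :=
  (hG.existsUnique_path i j).choose_spec.1

lemma tpath_unique {i j : V} {p : G.Walk i j} (hp : p.IsPath) : p = tpath hG i j :=
  (hG.existsUnique_path i j).choose_spec.2 p hp

lemma tpath_self (i : V) : tpath hG i i = Walk.nil :=
  (tpath_unique hG (by simp : (Walk.nil : G.Walk i i).IsPath)).symm

lemma tpath_reverse (i j : V) : (tpath hG i j).reverse = tpath hG j i :=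
  tpath_unique hG ((tpath_isPath hG i j).reverse)

lemma mem_support_tpath_symm {i j x : V} :
    x ∈ (tpath hG i j).support ↔ x ∈ (tpath hG j i).support := by
  rw [← tpath_reverse hG i j, Walk.support_reverse, List.mem_reverse]

lemma mem_edges_tpath_symm {i j : V} {e : Sym2 V} :
    e ∈ (tpath hG i j).edges ↔ e ∈ (tpath hG j i).edges := by
  rw [← tpath_reverse hG i j, Walk.edges_reverse, List.mem_reverse]

lemma onPath_iff {i j : V} {e : Sym2 V} : onPath G i j e ↔ e ∈ (tpath hG i j).edges := by
  constructor
  · rintro ⟨p, hp, he⟩; rwa [tpath_unique hG hp] at he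
  · intro h; exact ⟨_, tpath_isPath hG i j, h⟩

lemma pathVec_eq (i j : V) : pathVec G i j = eVec (tpath hG i j).edges := by
  funext e; simp only [pathVec, eVec]
  by_cases h : e ∈ (tpath hG i j).edges <;> simp [onPath_iff hG, h]

lemma eVec_tpath_symm (i j : V) : eVec (tpath hG i j).edges = eVec (tpath hG j i).edges :=
  eVec_congr fun _ => mem_edges_tpath_symm hG

/-! ### edges at the head of a path -/

lemma edge_head_decomp {a y c : V} {r : G.Walk a y} (hr : r.IsPath) (h : s(a, c) ∈ r.edges) :
    ∃ (hadj : G.Adj a c) (rest : G.Walk c y), r = Walk.cons hadj rest ∧ a ∉ rest.support := by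
  cases r with
  | nil => simp at h
  | cons h' q =>
    rw [Walk.edges_cons, List.mem_cons] at h
    rw [Walk.cons_isPath_iff] at hr
    rcases h with h | h
    · rw [Sym2.eq_iff] at h
      rcases h with ⟨-, rfl⟩ | ⟨rfl, rfl⟩
      · exact ⟨h', q, rfl, hr.2⟩
      · exact absurd rfl h'.ne
    · exact absurd (q.fst_mem_support_of_mem_edges h) hr.2

lemma edge_head_unique {a y c c' : V} {r : G.Walk a y} (hr : r.IsPath)
    (h : s(a, c) ∈ r.edges) (h' : s(a, c') ∈ r.edges) : c = c' := by
  obtain ⟨hadj, rest, rfl, hns⟩ := edge_head_decomp hr h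
  rw [Walk.edges_cons, List.mem_cons] at h'
  rcases h' with h' | h'
  · rw [Sym2.eq_iff] at h'
    rcases h' with ⟨-, rfl⟩ | ⟨rfl, rfl⟩
    · rfl
    · rfl
  · exact absurd (rest.fst_mem_support_of_mem_edges h') hns

/-! ### directions in a tree -/

/-- `Dir hG a b x` : the tree path from `a` to `x` starts with the edge `{a,b}`. -/
def Dir (a b x : V) : Prop := s(a, b) ∈ (tpath hG a x).edges

variable {hG}

lemma Dir.adj {a b x : V} (h : Dir hG a b x) : G.Adj a b :=
  (tpath hG a x).adj_of_mem_edges h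

lemma Dir.ne {a b x : V} (h : Dir hG a b x) : x ≠ a := by
  rintro rfl; rw [Dir, tpath_self] at h; simp at h

lemma dir_unique {a b b' x : V} (h : Dir hG a b x) (h' : Dir hG a b' x) : b = b' :=
  edge_head_unique (tpath_isPath hG a x) h h'

lemma dir_exists {a x : V} (hx : x ≠ a) : ∃ b, Dir hG a b x := by
  obtain ⟨c, q, hadj, hq⟩ := Walk.exists_eq_cons_of_ne (Ne.symm hx) (tpath hG a x)
  exact ⟨c, by rw [Dir, hq, Walk.edges_cons]; exact List.mem_cons_self⟩

lemma dir_of_adj {a b : V} (h : G.Adj a b) : Dir hG a b b := by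
  have hp : (Walk.cons h Walk.nil : G.Walk a b).IsPath := by simp [h.ne]
  rw [Dir, ← tpath_unique hG hp, Walk.edges_cons]
  exact List.mem_cons_self

lemma tpath_adj {a b : V} (h : G.Adj a b) : tpath hG a b = Walk.cons h Walk.nil :=
  (tpath_unique hG (by simp [h.ne])).symm

lemma edges_tpath_adj {a b : V} (h : G.Adj a b) : (tpath hG a b).edges = [s(a, b)] := by
  rw [tpath_adj h, Walk.edges_cons, Walk.edges_nil]

lemma Dir.decomp {a b x : V} (h : Dir hG a b x) :
    ∃ (hadj : G.Adj a b), tpath hG a x = Walk.cons hadj (tpath hG b x) ∧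
      a ∉ (tpath hG b x).support := by
  obtain ⟨hadj, rest, hr, hns⟩ := edge_head_decomp (tpath_isPath hG a x) h
  have hrp : rest.IsPath := by
    have := tpath_isPath hG a x
    rw [hr, Walk.cons_isPath_iff] at this
    exact this.1
  rw [tpath_unique hG hrp] at hr hns
  exact ⟨hadj, hr, hns⟩

lemma Dir.not_mem_support {a b x : V} (h : Dir hG a b x) : a ∉ (tpath hG b x).support :=
  h.decomp.choose_spec.2

lemma dir_of_mem_support {a b x y : V} (h : Dir hG a b x)
    (hy : y ∈ (tpath hG a x).support) (hya : y ≠ a) : Dir hG a b y := by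
  obtain ⟨hadj, hdec, hns⟩ := h.decomp
  rw [hdec, Walk.support_cons, List.mem_cons] at hy
  rcases hy with rfl | hy
  · exact absurd rfl hya
  · classical
    have hq : (Walk.cons hadj ((tpath hG b x).takeUntil y hy)).IsPath := by
      rw [Walk.cons_isPath_iff]
      exact ⟨(tpath_isPath hG b x).takeUntil hy,
        fun hc => hns ((tpath hG b x).support_takeUntil_subset hy hc)⟩
    rw [Dir, ← tpath_unique hG hq, Walk.edges_cons]
    exact List.mem_cons_self

lemma dir_cons {a b c x : V} (hab : G.Adj a b) (hd : Dir hG b c x) (hc : c ≠ a) :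
    Dir hG a b x ∧ a ∉ (tpath hG b x).support := by
  have hns : a ∉ (tpath hG b x).support := by
    intro hmem
    have h1 : Dir hG b c a := dir_of_mem_support hd hmem hab.ne
    have h2 : Dir hG b a a := dir_of_adj hab.symm
    exact hc (dir_unique h1 h2)
  have hq : (Walk.cons hab (tpath hG b x)).IsPath := by
    rw [Walk.cons_isPath_iff]; exact ⟨tpath_isPath hG b x, hns⟩
  refine ⟨?_, hns⟩
  rw [Dir, ← tpath_unique hG hq, Walk.edges_cons]
  exact List.mem_cons_self

lemma dir_total {a b x : V} (hab : G.Adj a b) (hx : x ≠ a) (hnd : ¬ Dir hG a b x) :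
    Dir hG b a x ∧ b ∉ (tpath hG a x).support := by
  have hns : b ∉ (tpath hG a x).support := by
    intro hmem
    obtain ⟨c, hc⟩ := dir_exists (hG := hG) hx
    have hcb : Dir hG a c b := dir_of_mem_support hc hmem hab.ne'
    have hbb : Dir hG a b b := dir_of_adj hab
    exact hnd (by rwa [dir_unique hcb hbb] at hc)
  have hq : (Walk.cons hab.symm (tpath hG a x)).IsPath := by
    rw [Walk.cons_isPath_iff]; exact ⟨tpath_isPath hG a x, hns⟩
  refine ⟨?_, hns⟩
  rw [Dir, ← tpath_unique hG hq, Walk.edges_cons]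
  exact List.mem_cons_self

/-! ### joining paths -/

lemma join_isPath {x z y b c : V} (hbx : Dir hG z b x) (hcy : Dir hG z c y) (hbc : b ≠ c) :
    ((tpath hG x z).append (tpath hG z y)).IsPath := by
  have hdisj : ∀ w, w ∈ (tpath hG x z).support → w ∈ (tpath hG z y).support → w = z := by
    intro w h1 h2
    by_contra hw
    have d1 : Dir hG z b w := dir_of_mem_support hbx ((mem_support_tpath_symm hG).1 h1) hw
    have d2 : Dir hG z c w := dir_of_mem_support hcy h2 hw
    exact hbc (dir_unique d1 d2)
  rw [Walk.isPath_def, Walk.support_append]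
  refine List.Nodup.append (tpath_isPath hG x z).support_nodup
    ((tpath_isPath hG z y).support_nodup.tail) ?_
  intro w' hw1 hw2
  have hsupp := (tpath hG z y).support_eq_cons
  have hzw : w' ∈ (tpath hG z y).support := by rw [hsupp]; exact List.mem_cons_of_mem _ hw2
  have hwz : w' = z := hdisj w' hw1 hzw
  have hnd : (tpath hG z y).support.Nodup := (tpath_isPath hG z y).support_nodup
  rw [hsupp] at hnd
  exact (List.nodup_cons.1 hnd).1 (hwz ▸ hw2)

lemma join_eq {x z y b c : V} (hbx : Dir hG z b x) (hcy : Dir hG z c y) (hbc : b ≠ c) :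
    tpath hG x y = (tpath hG x z).append (tpath hG z y) :=
  (tpath_unique hG (join_isPath hbx hcy hbc)).symm

lemma join_mem {x z y b c : V} (hbx : Dir hG z b x) (hcy : Dir hG z c y) (hbc : b ≠ c)
    {e : Sym2 V} :
    e ∈ (tpath hG x y).edges ↔ e ∈ (tpath hG x z).edges ∨ e ∈ (tpath hG z y).edges := by
  rw [join_eq hbx hcy hbc, Walk.edges_append, List.mem_append]

lemma join_vec {x z y b c : V} (hbx : Dir hG z b x) (hcy : Dir hG z c y) (hbc : b ≠ c) :
    pathVec G x y = eVec (tpath hG x z).edges + eVec (tpath hG z y).edges := by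
  have hnd := (join_isPath hbx hcy hbc).edges_nodup
  rw [Walk.edges_append, List.nodup_append] at hnd
  rw [pathVec_eq hG, join_eq hbx hcy hbc, Walk.edges_append, eVec_append (fun e h1 h2 => hnd.2.2 e h1 e h2 rfl)]


/-! ### leaves -/

lemma leaf_nbr_unique {l x y : V} (hl : IsLeaf G l) (hx : G.Adj l x) (hy : G.Adj l y) :
    x = y := by
  obtain ⟨w, -, huniq⟩ := hl
  rw [huniq x hx, huniq y hy]

/-- the unique neighbour of a leaf -/
def nbr {l : V} (hl : IsLeaf G l) : V := hl.choose

lemma adj_nbr {l : V} (hl : IsLeaf G l) : G.Adj l (nbr hl) := hl.choose_spec.1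

/-- the unique edge at a leaf -/
def leafE {l : V} (hl : IsLeaf G l) : Sym2 V := s(l, nbr hl)

lemma eq_nbr {l x : V} (hl : IsLeaf G l) (hx : G.Adj l x) : x = nbr hl :=
  leaf_nbr_unique hl hx (adj_nbr hl)

section Finite
variable [Fintype V]

lemma exists_leaf_dir {a b : V} (hab : G.Adj a b) : ∃ l, IsLeaf G l ∧ Dir hG a b l := by
  classical
  set T : Finset V := Finset.univ.filter (fun x => Dir hG a b x) with hT
  have hbT : b ∈ T := by simp [hT, dir_of_adj hab]
  obtain ⟨l, hlT, hmax⟩ := T.exists_max_image (fun x => (tpath hG a x).length) ⟨b, hbT⟩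
  have hl : Dir hG a b l := by simpa [hT] using hlT
  obtain ⟨m, hm⟩ := dir_exists (hG := hG) (Ne.symm hl.ne)
  refine ⟨l, ⟨m, hm.adj, ?_⟩, hl⟩
  intro y hy
  by_contra hym
  have hyl : Dir hG l y y := dir_of_adj hy
  have hmy : m ≠ y := fun h => hym (h.symm)
  have hd : Dir hG a b y := by
    rw [Dir, join_mem hm hyl hmy]
    exact Or.inl hl
  have hyT : y ∈ T := by simp [hT, hd]
  have hlen := hmax y hyT
  rw [join_eq hm hyl hmy, Walk.length_append, tpath_adj hy] at hlen
  simp only [Walk.length_cons, Walk.length_nil] at hlen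
  omega

lemma not_adj_leaves (hG : G.IsTree) (hE : 3 ≤ G.edgeSet.ncard) {i j : V}
    (hi : IsLeaf G i) (hj : IsLeaf G j) : ¬ G.Adj i j := by
  intro hadj
  have hV : ∀ x : V, x = i ∨ x = j := by
    intro x
    by_cases hxi : x = i
    · exact Or.inl hxi
    by_cases hxj : x = j
    · exact Or.inr hxj
    obtain ⟨c, hc⟩ := dir_exists (hG := hG) hxi
    have hcj : c = j := leaf_nbr_unique hi hc.adj hadj
    rw [hcj] at hc
    obtain ⟨d, hd⟩ := dir_exists (hG := hG) hxj
    have hdi : d = i := leaf_nbr_unique hj hd.adj hadj.symm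
    rw [hdi] at hd
    have h1 : j ∉ (tpath hG i x).support := hd.not_mem_support
    have h2 : j ∈ (tpath hG i x).support := by
      obtain ⟨hadj', hdec, -⟩ := hc.decomp
      rw [hdec, Walk.support_cons]
      exact List.mem_cons_of_mem _ (Walk.start_mem_support _)
    exact (h1 h2).elim
  have hsub : G.edgeSet ⊆ {s(i, j)} := by
    intro e he
    rw [Set.mem_singleton_iff]
    induction e using Sym2.ind with
    | _ x y =>
      rw [SimpleGraph.mem_edgeSet] at he
      rcases hV x with rfl | rfl <;> rcases hV y with rfl | rfl
      · exact absurd rfl he.ne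
      · rfl
      · rw [Sym2.eq_swap]
      · exact absurd rfl he.ne
  have hle := Set.ncard_le_ncard hsub (Set.finite_singleton _)
  rw [Set.ncard_singleton] at hle
  omega

omit [Fintype V] in
lemma exists_adj (hG : G.IsTree) (hE : 3 ≤ G.edgeSet.ncard) (u : V) : ∃ w, G.Adj u w := by
  have hne : G.edgeSet.Nonempty := by
    rcases G.edgeSet.eq_empty_or_nonempty with h | h
    · rw [h, Set.ncard_empty] at hE; omega
    · exact h
  obtain ⟨e, he⟩ := hne
  induction e using Sym2.ind with
  | _ x y =>
    rw [SimpleGraph.mem_edgeSet] at he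
    by_cases hux : u = x
    · exact ⟨y, hux ▸ he⟩
    obtain ⟨b, hb⟩ := dir_exists (hG := hG) (Ne.symm hux)
    exact ⟨b, hb.adj⟩

lemma three_nbrs (hG : G.IsTree) (hE : 3 ≤ G.edgeSet.ncard)
    (hdeg2 : ∀ w, ¬ IsLeaf G w → (G.neighborSet w).ncard ≠ 2) {u : V} (hu : ¬ IsLeaf G u) :
    ∃ a b c, G.Adj u a ∧ G.Adj u b ∧ G.Adj u c ∧ a ≠ b ∧ a ≠ c ∧ b ≠ c := by
  obtain ⟨n₁, hn₁⟩ := exists_adj hG hE u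
  have hex : ∃ n₂, G.Adj u n₂ ∧ n₂ ≠ n₁ := by
    by_contra h
    push_neg at h
    exact hu ⟨n₁, hn₁, fun y hy => h y hy⟩
  obtain ⟨n₂, hn₂, hne⟩ := hex
  have h2 : 2 ≤ (G.neighborSet u).ncard := by
    have hsub : ({n₂, n₁} : Set V) ⊆ G.neighborSet u := by
      rintro z hz
      rcases hz with rfl | hz
      · exact hn₂
      · rw [Set.mem_singleton_iff] at hz; subst hz; exact hn₁
    calc 2 = ({n₂, n₁} : Set V).ncard := (Set.ncard_pair hne).symm
    _ ≤ _ := Set.ncard_le_ncard hsub (Set.toFinite _)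
  have h3 : 2 < (G.neighborSet u).ncard := by
    have := hdeg2 u hu; omega
  rw [Set.two_lt_ncard (Set.toFinite _)] at h3
  obtain ⟨a, ha, b, hb, c, hc, hab, hac, hbc⟩ := h3
  exact ⟨a, b, c, ha, hb, hc, hab, hac, hbc⟩


/-! ### edges at endpoints and interior vertices of paths -/

omit [Fintype V] in
lemma head_edge_char {a y : V} {r : G.Walk a y} (hr : r.IsPath) (hay : a ≠ y) :
    ∃ c, s(a, c) ∈ r.edges ∧ ∀ w, s(a, w) ∈ r.edges → w = c := by
  obtain ⟨c, q, hadj, hq⟩ := Walk.exists_eq_cons_of_ne hay r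
  refine ⟨c, ?_, fun w hw => edge_head_unique hr hw ?_⟩ <;>
    rw [hq, Walk.edges_cons] <;> exact List.mem_cons_self

omit [Fintype V] in
lemma last_edge_char {a y : V} {r : G.Walk y a} (hr : r.IsPath) (hay : a ≠ y) :
    ∃ c, s(a, c) ∈ r.edges ∧ ∀ w, s(a, w) ∈ r.edges → w = c := by
  obtain ⟨c, hc, huniq⟩ := head_edge_char hr.reverse hay
  rw [Walk.edges_reverse, List.mem_reverse] at hc
  refine ⟨c, hc, fun w hw => huniq w ?_⟩
  rwa [Walk.edges_reverse, List.mem_reverse]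

omit [Fintype V] in
lemma two_nbrs {i j x : V} {p : G.Walk i j} (hp : p.IsPath) (hm : x ∈ p.support)
    (hxi : x ≠ i) (hxj : x ≠ j) :
    ∃ w₁ w₂, w₁ ≠ w₂ ∧ ∀ w, (s(x, w) ∈ p.edges ↔ w = w₁ ∨ w = w₂) := by
  classical
  have hspec : (p.takeUntil x hm).append (p.dropUntil x hm) = p := p.take_spec hm
  set q := p.takeUntil x hm with hq
  set r := p.dropUntil x hm with hr
  have hqp : q.IsPath := hp.takeUntil hm
  have hrp : r.IsPath := hp.dropUntil hm
  obtain ⟨w₁, hw₁, hu₁⟩ := last_edge_char hqp hxi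
  obtain ⟨w₂, hw₂, hu₂⟩ := head_edge_char hrp hxj
  have hedges : p.edges = q.edges ++ r.edges := by rw [← hspec, Walk.edges_append]
  have hnd : p.edges.Nodup := hp.edges_nodup
  rw [hedges, List.nodup_append] at hnd
  refine ⟨w₁, w₂, ?_, fun w => ⟨fun hw => ?_, fun hw => ?_⟩⟩
  · rintro rfl
    exact hnd.2.2 _ hw₁ _ hw₂ rfl
  · rw [hedges, List.mem_append] at hw
    rcases hw with hw | hw
    · exact Or.inl (hu₁ w hw)
    · exact Or.inr (hu₂ w hw)
  · rw [hedges, List.mem_append]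
    rcases hw with rfl | rfl
    · exact Or.inl hw₁
    · exact Or.inr hw₂

omit [Fintype V] in
lemma leaf_mem_support {i j l : V} {p : G.Walk i j} (hp : p.IsPath) (hl : IsLeaf G l)
    (hm : l ∈ p.support) : l = i ∨ l = j := by
  by_contra h
  push_neg at h
  obtain ⟨w₁, w₂, hne, hchar⟩ := two_nbrs hp hm h.1 h.2
  have h1 : G.Adj l w₁ := p.adj_of_mem_edges ((hchar w₁).2 (Or.inl rfl))
  have h2 : G.Adj l w₂ := p.adj_of_mem_edges ((hchar w₂).2 (Or.inr rfl))
  exact hne (leaf_nbr_unique hl h1 h2)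

omit [Fintype V] in
/-- the leaf edge is on any path out of the leaf -/
lemma leafE_mem_edges {i x : V} (hi : IsLeaf G i) (hix : i ≠ x) :
    leafE hi ∈ (tpath hG i x).edges := by
  obtain ⟨c, hc, -⟩ := head_edge_char (tpath_isPath hG i x) hix
  have : c = nbr hi := eq_nbr hi ((tpath hG i x).adj_of_mem_edges hc)
  rw [leafE, ← this]
  exact hc

omit [Fintype V] in
lemma eq_leafE {i x w : V} (hi : IsLeaf G i)
    (hw : s(i, w) ∈ (tpath hG i x).edges) : s(i, w) = leafE hi := by
  have : w = nbr hi := eq_nbr hi ((tpath hG i x).adj_of_mem_edges hw)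
  rw [leafE, this]

omit [Fintype V] in
/-- classification of edges on a path between two leaves -/
lemma edges_tpath_classify {i j : V} (hi : IsLeaf G i)
    (hj : IsLeaf G j) {e : Sym2 V} (he : e ∈ (tpath hG i j).edges) :
    e = leafE hi ∨ e = leafE hj ∨ ∀ x ∈ e, ¬ IsLeaf G x := by
  induction e using Sym2.ind with
  | _ x y =>
    by_cases hx : IsLeaf G x
    · rcases leaf_mem_support (tpath_isPath hG i j) hx
        ((tpath hG i j).fst_mem_support_of_mem_edges he) with h | h
      · subst h
        exact Or.inl (eq_leafE hx he)
      · subst h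
        exact Or.inr (Or.inl (eq_leafE hx ((mem_edges_tpath_symm hG).1 he)))
    by_cases hy : IsLeaf G y
    · rw [Sym2.eq_swap] at he ⊢
      rcases leaf_mem_support (tpath_isPath hG i j) hy
        ((tpath hG i j).fst_mem_support_of_mem_edges he) with h | h
      · subst h
        exact Or.inl (eq_leafE hy he)
      · subst h
        exact Or.inr (Or.inl (eq_leafE hy ((mem_edges_tpath_symm hG).1 he)))
    · refine Or.inr (Or.inr ?_)
      intro z hz
      rw [Sym2.mem_iff] at hz
      rcases hz with rfl | rfl <;> assumption

/-! ### the linear functional -/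

section ALin

variable (G) in
/-- the facet functional `-x_{uv} + ∑_{w ∈ N(u)\{v}} x_{uw}` -/
def aLin (u v : V) : (Sym2 V → ℝ) →ₗ[ℝ] ℝ :=
  (∑ w ∈ (G.neighborSet u).toFinite.toFinset.erase v, LinearMap.proj s(u, w)) -
    LinearMap.proj s(u, v)

variable {u v : V}

lemma aLin_apply (x : Sym2 V → ℝ) :
    aLin G u v x =
      (∑ w ∈ (G.neighborSet u).toFinite.toFinset.erase v, x s(u, w)) - x s(u, v) := by
  simp [aLin]

lemma finsum_eq_aLin (x : Sym2 V → ℝ) :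
    - x s(u, v) + ∑ᶠ w ∈ G.neighborSet u \ {v}, x s(u, w) = aLin G u v x := by
  have h : G.neighborSet u \ {v} = ↑((G.neighborSet u).toFinite.toFinset.erase v) := by
    ext w
    simp [Set.Finite.mem_toFinset, Finset.mem_erase, and_comm]
  rw [h, finsum_mem_coe_finset, aLin_apply]
  ring

lemma aLin_pathVec (hG : G.IsTree) (hu : ¬ IsLeaf G u) {i j : V} (hi : IsLeaf G i)
    (hj : IsLeaf G j) :
    (aLin G u v (pathVec G i j) = 0 ∧
      (onPath G i j s(u, v) ∨ ∀ w ∈ G.neighborSet u, ¬ onPath G i j s(u, w))) ∨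
    (aLin G u v (pathVec G i j) = 2 ∧ ¬ onPath G i j s(u, v) ∧
      ∃ w ∈ G.neighborSet u, onPath G i j s(u, w)) := by
  classical
  have hval : ∀ e, pathVec G i j e = if e ∈ (tpath hG i j).edges then 1 else 0 := by
    intro e
    rw [pathVec_eq hG]; rfl
  have honP : ∀ e, onPath G i j e ↔ e ∈ (tpath hG i j).edges := fun _ => onPath_iff hG
  by_cases hus : u ∈ (tpath hG i j).support
  · have hui : u ≠ i := fun h => hu (h ▸ hi)
    have huj : u ≠ j := fun h => hu (h ▸ hj)
    obtain ⟨w₁, w₂, hne, hchar⟩ := two_nbrs (tpath_isPath hG i j) hus hui huj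
    have ha₁ : G.Adj u w₁ := (tpath hG i j).adj_of_mem_edges ((hchar w₁).2 (Or.inl rfl))
    have ha₂ : G.Adj u w₂ := (tpath hG i j).adj_of_mem_edges ((hchar w₂).2 (Or.inr rfl))
    have hsum : (∑ w ∈ (G.neighborSet u).toFinite.toFinset.erase v, pathVec G i j s(u, w)) =
        (if w₁ ∈ (G.neighborSet u).toFinite.toFinset.erase v then (1:ℝ) else 0) +
        (if w₂ ∈ (G.neighborSet u).toFinite.toFinset.erase v then (1:ℝ) else 0) := by
      rw [← Finset.sum_ite_eq' _ w₁ (fun _ => (1:ℝ)), ← Finset.sum_ite_eq' _ w₂ (fun _ => (1:ℝ)),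
        ← Finset.sum_add_distrib]
      refine Finset.sum_congr rfl fun w _ => ?_
      rw [hval]
      simp only [hchar w]
      by_cases h1 : w = w₁
      · subst h1; simp [hne]
      · by_cases h2 : w = w₂ <;> simp [h1, h2, Ne.symm hne]
    have hmem : ∀ w, G.Adj u w → ∀ hwv : w ≠ v,
        w ∈ (G.neighborSet u).toFinite.toFinset.erase v := by
      intro w hw hwv
      simp [Finset.mem_erase, Set.Finite.mem_toFinset, hwv, hw]
    by_cases hv1 : v = w₁
    · left
      constructor
      · rw [aLin_apply, hsum, hval]
        have h1 : w₁ ∉ (G.neighborSet u).toFinite.toFinset.erase v := by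
          rw [← hv1]; exact Finset.notMem_erase v _
        have h2 : w₂ ∈ (G.neighborSet u).toFinite.toFinset.erase v :=
          hmem w₂ ha₂ (fun h => hne (hv1 ▸ h ▸ rfl))
        have huv : s(u, v) ∈ (tpath hG i j).edges := (hchar v).2 (Or.inl hv1)
        rw [if_neg h1, if_pos h2, if_pos huv]
        ring
      · exact Or.inl ((honP _).2 ((hchar v).2 (Or.inl hv1)))
    by_cases hv2 : v = w₂
    · left
      constructor
      · rw [aLin_apply, hsum, hval]
        have h1 : w₁ ∈ (G.neighborSet u).toFinite.toFinset.erase v :=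
          hmem w₁ ha₁ (fun h => hne (h ▸ hv2))
        have h2 : w₂ ∉ (G.neighborSet u).toFinite.toFinset.erase v := by
          rw [← hv2]; exact Finset.notMem_erase v _
        have huv : s(u, v) ∈ (tpath hG i j).edges := (hchar v).2 (Or.inr hv2)
        rw [if_pos h1, if_neg h2, if_pos huv]
        ring
      · exact Or.inl ((honP _).2 ((hchar v).2 (Or.inr hv2)))
    · right
      have huv : s(u, v) ∉ (tpath hG i j).edges := by
        intro h
        rcases (hchar v).1 h with h | h
        · exact hv1 h
        · exact hv2 h
      refine ⟨?_, fun h => huv ((honP _).1 h), w₁, ha₁, (honP _).2 ((hchar w₁).2 (Or.inl rfl))⟩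
      rw [aLin_apply, hsum, hval]
      have h1 : w₁ ∈ (G.neighborSet u).toFinite.toFinset.erase v :=
        hmem w₁ ha₁ (fun h => hv1 h.symm)
      have h2 : w₂ ∈ (G.neighborSet u).toFinite.toFinset.erase v :=
        hmem w₂ ha₂ (fun h => hv2 h.symm)
      rw [if_pos h1, if_pos h2, if_neg huv]
      norm_num
  · left
    have hno : ∀ w, s(u, w) ∉ (tpath hG i j).edges := by
      intro w hw
      exact hus ((tpath hG i j).fst_mem_support_of_mem_edges hw)
    constructor
    · rw [aLin_apply]
      rw [Finset.sum_eq_zero fun w _ => by rw [hval]; simp [hno w]]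
      rw [hval]
      simp [hno v]
    · exact Or.inr fun w _ h => hno w ((honP _).1 h)

end ALin

/-! ### the generator sets and Part 1 -/

variable (G) in
/-- generators of the path polytope -/
def genAll : Set (Sym2 V → ℝ) :=
  {x | ∃ i j : V, i ≠ j ∧ IsLeaf G i ∧ IsLeaf G j ∧ x = pathVec G i j}

variable (G) in
/-- generators of the facet -/
def genS (u v : V) : Set (Sym2 V → ℝ) :=
  {x | ∃ i j : V, i ≠ j ∧ IsLeaf G i ∧ IsLeaf G j ∧
    (onPath G i j s(u, v) ∨ ∀ w ∈ G.neighborSet u, ¬ onPath G i j s(u, w)) ∧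
    x = pathVec G i j}

section Part1

variable {u v : V}

omit [Fintype V] in
lemma genS_subset : genS G u v ⊆ genAll G := by
  rintro x ⟨i, j, hij, hi, hj, -, rfl⟩
  exact ⟨i, j, hij, hi, hj, rfl⟩

lemma mem_genS_aLin (hG : G.IsTree) (hu : ¬ IsLeaf G u) {x : Sym2 V → ℝ}
    (hx : x ∈ genS G u v) : aLin G u v x = 0 := by
  obtain ⟨i, j, hij, hi, hj, hcond, rfl⟩ := hx
  rcases aLin_pathVec (v := v) hG hu hi hj with ⟨h, -⟩ | ⟨-, h1, h2⟩
  · exact h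
  · rcases hcond with hc | hc
    · exact absurd hc h1
    · obtain ⟨w, hw, hw'⟩ := h2
      exact absurd hw' (hc w hw)

lemma mem_genAll_nonneg (hG : G.IsTree) (hu : ¬ IsLeaf G u) {x : Sym2 V → ℝ}
    (hx : x ∈ genAll G) : 0 ≤ aLin G u v x := by
  obtain ⟨i, j, hij, hi, hj, rfl⟩ := hx
  rcases aLin_pathVec (v := v) hG hu hi hj with ⟨h, -⟩ | ⟨h, -⟩ <;> rw [h] <;> norm_num

lemma mem_genAll_zero (hG : G.IsTree) (hu : ¬ IsLeaf G u) {x : Sym2 V → ℝ}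
    (hx : x ∈ genAll G) (h0 : aLin G u v x = 0) : x ∈ genS G u v := by
  obtain ⟨i, j, hij, hi, hj, rfl⟩ := hx
  rcases aLin_pathVec (v := v) hG hu hi hj with ⟨-, h⟩ | ⟨h, -⟩
  · exact ⟨i, j, hij, hi, hj, h, rfl⟩
  · rw [h0] at h; norm_num at h

theorem part1 (hG : G.IsTree) (hu : ¬ IsLeaf G u) :
    convexHull ℝ (genS G u v) = convexHull ℝ (genAll G) ∩ {x | aLin G u v x = 0} := by
  apply Set.Subset.antisymm
  · apply convexHull_min
    · intro x hx
      exact ⟨subset_convexHull ℝ _ (genS_subset hx), mem_genS_aLin hG hu hx⟩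
    · exact (convex_convexHull ℝ _).inter (convex_hyperplane (aLin G u v).isLinear 0)
  · rintro x ⟨hxP, hx0⟩
    rw [convexHull_eq] at hxP
    obtain ⟨ι, t, wt, z, hw0, hw1, hz, hcm⟩ := hxP
    have hx : x = ∑ i ∈ t, wt i • z i := by
      rw [← hcm, Finset.centerMass_eq_of_sum_1 _ _ hw1]
    have hsum : (∑ i ∈ t, wt i * aLin G u v (z i)) = 0 := by
      rw [← hx0, hx, map_sum]
      exact Finset.sum_congr rfl fun i _ => by rw [map_smul, smul_eq_mul]
    have hzero : ∀ i ∈ t, wt i * aLin G u v (z i) = 0 :=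
      (Finset.sum_eq_zero_iff_of_nonneg fun i hi =>
        mul_nonneg (hw0 i hi) (mem_genAll_nonneg hG hu (hz i hi))).1 hsum
    have hmem := Finset.centerMass_mem_convexHull (s := genS G u v)
      (t.filter (fun i => wt i ≠ 0)) (w := wt)
      (fun i hi => hw0 i (Finset.mem_filter.1 hi).1) ?_ (z := z) ?_
    · rwa [Finset.centerMass_filter_ne_zero, hcm] at hmem
    · rw [Finset.sum_filter_ne_zero, hw1]
      norm_num
    · intro i hi
      obtain ⟨hit, hwi⟩ := Finset.mem_filter.1 hi
      refine mem_genAll_zero hG hu (hz i hit) ?_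
      rcases mul_eq_zero.1 (hzero i hit) with h | h
      · exact absurd h hwi
      · exact h

end Part1

/-! ### the ambient submodules and their dimensions -/

section Dim

variable (G) in
/-- edge finset -/
def EF : Finset (Sym2 V) := G.edgeSet.toFinite.toFinset

variable (G) in
/-- leaf edge finset -/
def LF : Finset (Sym2 V) := (EF G).filter (fun e => ∃ x ∈ e, IsLeaf G x)

lemma mem_EF {e : Sym2 V} : e ∈ EF G ↔ e ∈ G.edgeSet := Set.Finite.mem_toFinset _

variable (G) in
/-- the sum over leaf edges functional -/
def LLin : (Sym2 V → ℝ) →ₗ[ℝ] ℝ := ∑ e ∈ LF G, LinearMap.proj e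

lemma LLin_apply (x : Sym2 V → ℝ) : LLin G x = ∑ e ∈ LF G, x e := by
  simp [LLin]

variable (G) in
/-- extension by zero from coordinates indexed by edges -/
def Ext : (↥(EF G) → ℝ) →ₗ[ℝ] (Sym2 V → ℝ) where
  toFun y := fun e => if h : e ∈ EF G then y ⟨e, h⟩ else 0
  map_add' a b := by funext e; by_cases h : e ∈ EF G <;> simp [h]
  map_smul' c a := by funext e; by_cases h : e ∈ EF G <;> simp [h]

lemma Ext_injective : Function.Injective (Ext G) := by
  intro a b hab
  funext e
  have := congrFun hab e.1
  simpa [Ext, e.2] using this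

lemma Ext_eq_self {x : Sym2 V → ℝ} (hx : ∀ e, e ∉ G.edgeSet → x e = 0) :
    Ext G (fun e => x e.1) = x := by
  funext e
  by_cases h : e ∈ EF G
  · simp [Ext, h]
  · simp [Ext, h, hx e (fun hc => h (mem_EF.2 hc))]

lemma Ext_supp (y : ↥(EF G) → ℝ) {e : Sym2 V} (he : e ∉ G.edgeSet) : Ext G y e = 0 := by
  have h : e ∉ EF G := fun hc => he (mem_EF.1 hc)
  simp [Ext, h]

variable (G) in
/-- functions supported on edges with zero leaf-edge sum -/
def Wsub : Submodule ℝ (Sym2 V → ℝ) where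
  carrier := {x | (∀ e, e ∉ G.edgeSet → x e = 0) ∧ LLin G x = 0}
  add_mem' := by
    rintro a b ⟨ha1, ha2⟩ ⟨hb1, hb2⟩
    exact ⟨fun e he => by simp [ha1 e he, hb1 e he], by simp [ha2, hb2]⟩
  zero_mem' := ⟨fun e _ => rfl, map_zero _⟩
  smul_mem' := by
    rintro c a ⟨ha1, ha2⟩
    exact ⟨fun e he => by simp [ha1 e he], by simp [ha2]⟩

variable (G) in
/-- functions supported on edges with zero leaf-edge sum and zero facet functional -/
def Wsub' (u v : V) : Submodule ℝ (Sym2 V → ℝ) where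
  carrier := {x | ((∀ e, e ∉ G.edgeSet → x e = 0) ∧ LLin G x = 0) ∧ aLin G u v x = 0}
  add_mem' := by
    rintro a b ⟨⟨ha1, ha2⟩, ha3⟩ ⟨⟨hb1, hb2⟩, hb3⟩
    exact ⟨⟨fun e he => by simp [ha1 e he, hb1 e he], by simp [ha2, hb2]⟩, by simp [ha3, hb3]⟩
  zero_mem' := ⟨⟨fun e _ => rfl, map_zero _⟩, map_zero _⟩
  smul_mem' := by
    rintro c a ⟨⟨ha1, ha2⟩, ha3⟩
    exact ⟨⟨fun e he => by simp [ha1 e he], by simp [ha2]⟩, by simp [ha3]⟩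

lemma mem_Wsub {x : Sym2 V → ℝ} :
    x ∈ Wsub G ↔ (∀ e, e ∉ G.edgeSet → x e = 0) ∧ LLin G x = 0 := Iff.rfl

lemma mem_Wsub' {x : Sym2 V → ℝ} {u v : V} :
    x ∈ Wsub' G u v ↔
      ((∀ e, e ∉ G.edgeSet → x e = 0) ∧ LLin G x = 0) ∧ aLin G u v x = 0 := Iff.rfl

lemma Wsub_eq_map : Wsub G = Submodule.map (Ext G) (LinearMap.ker ((LLin G).comp (Ext G))) := by
  ext x
  simp only [Submodule.mem_map, LinearMap.mem_ker, LinearMap.comp_apply, mem_Wsub]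
  constructor
  · rintro ⟨h1, h2⟩
    exact ⟨fun e => x e.1, by rw [Ext_eq_self h1]; exact h2, Ext_eq_self h1⟩
  · rintro ⟨y, hy, rfl⟩
    exact ⟨fun e he => Ext_supp y he, hy⟩

lemma Wsub'_eq_map {u v : V} : Wsub' G u v = Submodule.map (Ext G)
    (LinearMap.ker ((LLin G).comp (Ext G)) ⊓ LinearMap.ker ((aLin G u v).comp (Ext G))) := by
  ext x
  simp only [Submodule.mem_map, Submodule.mem_inf, LinearMap.mem_ker, LinearMap.comp_apply,
    mem_Wsub']
  constructor
  · rintro ⟨⟨h1, h2⟩, h3⟩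
    exact ⟨fun e => x e.1, ⟨by rw [Ext_eq_self h1]; exact h2, by rw [Ext_eq_self h1]; exact h3⟩,
      Ext_eq_self h1⟩
  · rintro ⟨y, ⟨hy1, hy2⟩, rfl⟩
    exact ⟨⟨fun e he => Ext_supp y he, hy1⟩, hy2⟩

lemma finrank_ker_add_one {W : Type*} [AddCommGroup W] [Module ℝ W] [FiniteDimensional ℝ W]
    (f : W →ₗ[ℝ] ℝ) (hy : ∃ y, f y = 1) :
    Module.finrank ℝ (LinearMap.ker f) + 1 = Module.finrank ℝ W := by
  obtain ⟨y, hy⟩ := hy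
  have hsurj : Function.Surjective f := by
    intro c
    exact ⟨c • y, by simp [hy]⟩
  have := LinearMap.finrank_range_add_finrank_ker f
  rw [LinearMap.range_eq_top_of_surjective f hsurj, finrank_top, Module.finrank_self] at this
  omega

lemma finrank_Wsub (hy : ∃ y : ↥(EF G) → ℝ, LLin G (Ext G y) = 1) :
    Module.finrank ℝ (Wsub G) + 1 = (EF G).card := by
  rw [Wsub_eq_map]
  rw [← LinearEquiv.finrank_eq (Submodule.equivMapOfInjective _ Ext_injective _)]
  have := finrank_ker_add_one ((LLin G).comp (Ext G)) hy
  rw [Module.finrank_pi, Fintype.card_coe] at this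
  exact this

set_option synthInstance.maxHeartbeats 1000000 in
set_option maxHeartbeats 1000000 in
lemma finrank_Wsub' {u v : V}
    (hy1 : ∃ y : ↥(EF G) → ℝ, LLin G (Ext G y) = 1)
    (hy2 : ∃ y : ↥(EF G) → ℝ, LLin G (Ext G y) = 0 ∧ aLin G u v (Ext G y) = 1) :
    Module.finrank ℝ (Wsub' G u v) + 2 = (EF G).card := by
  rw [Wsub'_eq_map]
  rw [← LinearEquiv.finrank_eq (Submodule.equivMapOfInjective _ Ext_injective _)]
  set K := LinearMap.ker ((LLin G).comp (Ext G)) with hK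
  set A := ((aLin G u v).comp (Ext G)).domRestrict K with hA
  have h1 : Module.finrank ℝ (LinearMap.ker A) + 1 = Module.finrank ℝ K := by
    apply finrank_ker_add_one
    obtain ⟨y, hyL, hya⟩ := hy2
    exact ⟨⟨y, by simpa [hK] using hyL⟩, by simpa [hA] using hya⟩
  have h2 : Module.finrank ℝ K + 1 = (EF G).card := by
    have := finrank_ker_add_one ((LLin G).comp (Ext G)) hy1
    rwa [Module.finrank_pi, Fintype.card_coe] at this
  have hker : LinearMap.ker A = Submodule.comap K.subtype
      (K ⊓ LinearMap.ker ((aLin G u v).comp (Ext G))) := by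
    ext z
    simp only [hA, LinearMap.mem_ker, LinearMap.domRestrict_apply, Submodule.mem_comap,
      Submodule.mem_inf, Submodule.coe_subtype]
    exact ⟨fun h => ⟨z.2, h⟩, fun h => h.2⟩
  have h3 : Module.finrank ℝ (LinearMap.ker A) = Module.finrank ℝ
      (K ⊓ LinearMap.ker ((aLin G u v).comp (Ext G)) : Submodule ℝ (↥(EF G) → ℝ)) := by
    rw [hker]
    exact LinearEquiv.finrank_eq (Submodule.comapSubtypeEquivOfLe inf_le_left)
  omega

end Dim

/-! ### values of the functionals on path vectors -/

section Values

omit [Fintype V] in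
lemma pathVec_supp {i j : V} (hG : G.IsTree) {e : Sym2 V} (he : e ∉ G.edgeSet) :
    pathVec G i j e = 0 := by
  rw [pathVec, if_neg]
  rintro ⟨p, -, hep⟩
  exact he (p.edges_subset_edgeSet hep)

lemma leafE_mem_LF {i : V} (hi : IsLeaf G i) : leafE hi ∈ LF G := by
  rw [LF, Finset.mem_filter, mem_EF]
  exact ⟨(adj_nbr hi), i, Sym2.mem_mk_left _ _, hi⟩

lemma leafE_ne (hG : G.IsTree) (hE : 3 ≤ G.edgeSet.ncard) {i j : V} (hi : IsLeaf G i)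
    (hj : IsLeaf G j) (hij : i ≠ j) : leafE hi ≠ leafE hj := by
  intro h
  rw [leafE, leafE, Sym2.eq_iff] at h
  rcases h with ⟨h, -⟩ | ⟨h1, -⟩
  · exact hij h
  · exact not_adj_leaves hG hE hj hi (h1 ▸ adj_nbr hj)

lemma LLin_pathVec (hG : G.IsTree) (hE : 3 ≤ G.edgeSet.ncard) {i j : V} (hi : IsLeaf G i)
    (hj : IsLeaf G j) (hij : i ≠ j) : LLin G (pathVec G i j) = 2 := by
  classical
  rw [LLin_apply]
  have hval : ∀ e, pathVec G i j e = if e ∈ (tpath hG i j).edges then (1:ℝ) else 0 := by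
    intro e
    rw [pathVec_eq hG]; rfl
  rw [Finset.sum_congr rfl (fun e _ => hval e), ← Finset.sum_filter]
  have hset : (LF G).filter (fun e => e ∈ (tpath hG i j).edges) = {leafE hi, leafE hj} := by
    ext e
    rw [Finset.mem_filter, Finset.mem_insert, Finset.mem_singleton]
    constructor
    · rintro ⟨heL, hep⟩
      rcases edges_tpath_classify hi hj hep with h | h | h
      · exact Or.inl h
      · exact Or.inr h
      · rw [LF, Finset.mem_filter] at heL
        obtain ⟨-, x, hx, hlx⟩ := heL
        exact absurd hlx (h x hx)
    · rintro (rfl | rfl)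
      · exact ⟨leafE_mem_LF hi, leafE_mem_edges hi hij⟩
      · exact ⟨leafE_mem_LF hj, (mem_edges_tpath_symm hG).1 (leafE_mem_edges hj hij.symm)⟩
  rw [hset, Finset.sum_const, Finset.card_insert_of_notMem
    (by simpa using leafE_ne hG hE hi hj hij), Finset.card_singleton]
  norm_num

lemma vectorSpan_genAll_le (hG : G.IsTree) (hE : 3 ≤ G.edgeSet.ncard) :
    vectorSpan ℝ (genAll G) ≤ Wsub G := by
  rw [vectorSpan_def]
  apply Submodule.span_le.2
  rintro d hd
  obtain ⟨x, hx, y, hy, rfl⟩ := Set.mem_vsub.1 hd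
  obtain ⟨i, j, hij, hi, hj, rfl⟩ := hx
  obtain ⟨i', j', hij', hi', hj', rfl⟩ := hy
  refine ⟨fun e he => ?_, ?_⟩
  · show pathVec G i j e - pathVec G i' j' e = 0
    rw [pathVec_supp hG he, pathVec_supp hG he, sub_zero]
  · show LLin G (pathVec G i j - pathVec G i' j') = 0
    rw [map_sub, LLin_pathVec hG hE hi hj hij, LLin_pathVec hG hE hi' hj' hij', sub_self]

lemma vectorSpan_genS_le (hG : G.IsTree) (hE : 3 ≤ G.edgeSet.ncard) {u v : V}
    (hu : ¬ IsLeaf G u) :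
    vectorSpan ℝ (genS G u v) ≤ Wsub' G u v := by
  rw [vectorSpan_def]
  apply Submodule.span_le.2
  rintro d hd
  obtain ⟨x, hx, y, hy, rfl⟩ := Set.mem_vsub.1 hd
  have hx0 := mem_genS_aLin hG hu hx
  have hy0 := mem_genS_aLin hG hu hy
  obtain ⟨i, j, hij, hi, hj, -, rfl⟩ := hx
  obtain ⟨i', j', hij', hi', hj', -, rfl⟩ := hy
  refine ⟨⟨fun e he => ?_, ?_⟩, ?_⟩
  · show pathVec G i j e - pathVec G i' j' e = 0
    rw [pathVec_supp hG he, pathVec_supp hG he, sub_zero]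
  · show LLin G (pathVec G i j - pathVec G i' j') = 0
    rw [map_sub, LLin_pathVec hG hE hi hj hij, LLin_pathVec hG hE hi' hj' hij', sub_self]
  · show aLin G u v (pathVec G i j - pathVec G i' j') = 0
    rw [map_sub, hx0, hy0, sub_self]

end Values

/-! ### splitting a tree path at an interior vertex -/

section Split

omit [Fintype V] in
lemma tpath_split {i j u : V} (hG : G.IsTree) (hm : u ∈ (tpath hG i j).support) :
    tpath hG i j = (tpath hG i u).append (tpath hG u j) := by
  classical
  have h1 : (tpath hG i j).takeUntil u hm = tpath hG i u :=
    tpath_unique hG ((tpath_isPath hG i j).takeUntil hm)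
  have h2 : (tpath hG i j).dropUntil u hm = tpath hG u j :=
    tpath_unique hG ((tpath_isPath hG i j).dropUntil hm)
  rw [← h1, ← h2, (tpath hG i j).take_spec hm]

omit [Fintype V] in
lemma u_edge_char {i j u w : V} (hG : G.IsTree) (hm : u ∈ (tpath hG i j).support) :
    s(u, w) ∈ (tpath hG i j).edges ↔ Dir hG u w i ∨ Dir hG u w j := by
  conv_lhs => rw [tpath_split hG hm]
  rw [Walk.edges_append, List.mem_append]
  constructor
  · rintro (h | h)
    · exact Or.inl ((mem_edges_tpath_symm hG).1 h)
    · exact Or.inr h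
  · rintro (h | h)
    · exact Or.inl ((mem_edges_tpath_symm hG).2 h)
    · exact Or.inr h

omit [Fintype V] in
/-- the two directions out of an interior vertex of a path are distinct -/
lemma dir_split_ne {i j u : V} (hG : G.IsTree) (hm : u ∈ (tpath hG i j).support)
    (hui : u ≠ i) (huj : u ≠ j) {w : V} (h1 : Dir hG u w i) (h2 : Dir hG u w j) : False := by
  have hnd := (tpath_isPath hG i j).edges_nodup
  rw [tpath_split hG hm, Walk.edges_append, List.nodup_append] at hnd
  exact hnd.2.2 _ ((mem_edges_tpath_symm hG).2 h1) _ h2 rfl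

omit [Fintype V] in
/-- decomposition data of a path through `u` avoiding `s(u,v)` -/
lemma bad_decomp {i j u v : V} (hG : G.IsTree) (hu : ¬ IsLeaf G u)
    (hi : IsLeaf G i) (hj : IsLeaf G j)
    (hnuv : ¬ onPath G i j s(u, v)) (hw : ∃ w ∈ G.neighborSet u, onPath G i j s(u, w)) :
    ∃ w₁ w₂, w₁ ≠ w₂ ∧ w₁ ≠ v ∧ w₂ ≠ v ∧ Dir hG u w₁ i ∧ Dir hG u w₂ j := by
  obtain ⟨w, -, hwP⟩ := hw
  rw [onPath_iff hG] at hwP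
  have hm : u ∈ (tpath hG i j).support := (tpath hG i j).fst_mem_support_of_mem_edges hwP
  have hui : u ≠ i := fun h => hu (h ▸ hi)
  have huj : u ≠ j := fun h => hu (h ▸ hj)
  obtain ⟨w₁, h1⟩ := dir_exists (hG := hG) (Ne.symm hui)
  obtain ⟨w₂, h2⟩ := dir_exists (hG := hG) (Ne.symm huj)
  have hne : w₁ ≠ w₂ := by
    rintro rfl
    exact dir_split_ne hG hm hui huj h1 h2
  have hv1 : w₁ ≠ v := by
    rintro rfl
    exact hnuv ((onPath_iff hG).2 ((u_edge_char hG hm).2 (Or.inl h1)))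
  have hv2 : w₂ ≠ v := by
    rintro rfl
    exact hnuv ((onPath_iff hG).2 ((u_edge_char hG hm).2 (Or.inr h2)))
  exact ⟨w₁, w₂, hne, hv1, hv2, h1, h2⟩

end Split

/-! ### membership of unit vectors in the vector span -/

omit [Fintype V] in
lemma sub_mem_vspan {s : Set (Sym2 V → ℝ)} {x y : Sym2 V → ℝ} (hx : x ∈ s) (hy : y ∈ s) :
    x - y ∈ vectorSpan ℝ s := by
  have := vsub_mem_vectorSpan ℝ hx hy
  rwa [vsub_eq_sub] at this

omit [Fintype V] in
lemma eVec_eq_sum (l : List (Sym2 V)) : eVec l = ∑ e ∈ l.toFinset, uVec e := by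
  funext e'
  rw [Finset.sum_apply]
  have hc : ∀ e ∈ l.toFinset, uVec e e' = if e' = e then (1:ℝ) else 0 := fun _ _ => rfl
  rw [Finset.sum_congr rfl hc, Finset.sum_ite_eq l.toFinset e' (fun _ => (1:ℝ))]
  simp [eVec, List.mem_toFinset]

omit [Fintype V] in
lemma dir_eVec {a b x : V} {hG : G.IsTree} (h : Dir hG a b x) :
    eVec (tpath hG a x).edges = uVec s(a, b) + eVec (tpath hG b x).edges := by
  obtain ⟨hadj, hdec, hns⟩ := h.decomp
  rw [hdec, Walk.edges_cons,
    eVec_cons (fun hc => hns ((tpath hG b x).fst_mem_support_of_mem_edges hc))]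

omit [Fintype V] in
lemma pick_two {α : Type*} {n₁ n₂ n₃ b : α} (p : α → Prop) (h1 : p n₁) (h2 : p n₂) (h3 : p n₃)
    (h12 : n₁ ≠ n₂) (h13 : n₁ ≠ n₃) (h23 : n₂ ≠ n₃) :
    ∃ c₁ c₂, p c₁ ∧ p c₂ ∧ c₁ ≠ c₂ ∧ c₁ ≠ b ∧ c₂ ≠ b := by
  by_cases e1 : n₁ = b
  · exact ⟨n₂, n₃, h2, h3, h23, fun h => h12 (h.trans e1.symm).symm,
      fun h => h13 (h.trans e1.symm).symm⟩
  by_cases e2 : n₂ = b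
  · exact ⟨n₁, n₃, h1, h3, h13, e1, fun h => h23 (h.trans e2.symm).symm⟩
  · exact ⟨n₁, n₂, h1, h2, h12, e1, e2⟩

lemma uVec_internal_mem (hG : G.IsTree) (hE : 3 ≤ G.edgeSet.ncard)
    (hdeg2 : ∀ w, ¬ IsLeaf G w → (G.neighborSet w).ncard ≠ 2) {a b : V} (hab : G.Adj a b)
    (ha : ¬ IsLeaf G a) (hb : ¬ IsLeaf G b) :
    uVec s(a, b) ∈ vectorSpan ℝ (genAll G) := by
  obtain ⟨n₁, n₂, n₃, hn₁, hn₂, hn₃, h12, h13, h23⟩ := three_nbrs hG hE hdeg2 ha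
  obtain ⟨c₁, c₂, hc₁, hc₂, hcc, hc₁b, hc₂b⟩ := pick_two (G.Adj a) hn₁ hn₂ hn₃ h12 h13 h23
  obtain ⟨m₁, m₂, m₃, hm₁, hm₂, hm₃, g12, g13, g23⟩ := three_nbrs hG hE hdeg2 hb
  obtain ⟨d₁, d₂, hd₁, hd₂, hdd, hd₁a, hd₂a⟩ := pick_two (G.Adj b) hm₁ hm₂ hm₃ g12 g13 g23
  obtain ⟨i₁, hi₁, hdi₁⟩ := exists_leaf_dir (hG := hG) hc₁
  obtain ⟨i₂, hi₂, hdi₂⟩ := exists_leaf_dir (hG := hG) hc₂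
  obtain ⟨j₁, hj₁, hdj₁⟩ := exists_leaf_dir (hG := hG) hd₁
  obtain ⟨j₂, hj₂, hdj₂⟩ := exists_leaf_dir (hG := hG) hd₂
  have hbj₁ : Dir hG a b j₁ := (dir_cons hab hdj₁ hd₁a).1
  have hbj₂ : Dir hG a b j₂ := (dir_cons hab hdj₂ hd₂a).1
  have e11 := join_vec hdi₁ hbj₁ hc₁b
  have e22 := join_vec hdi₂ hbj₂ hc₂b
  have eII := join_vec hdi₁ hdi₂ hcc
  have eJJ := join_vec hdj₁ hdj₂ hdd
  have f1 := dir_eVec hbj₁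
  have f2 := dir_eVec hbj₂
  have s1 := eVec_tpath_symm hG a i₂
  have s2 := eVec_tpath_symm hG j₁ b
  have m11 : pathVec G i₁ j₁ ∈ genAll G :=
    ⟨i₁, j₁, fun h => hc₁b (dir_unique (h ▸ hdi₁) hbj₁), hi₁, hj₁, rfl⟩
  have m22 : pathVec G i₂ j₂ ∈ genAll G :=
    ⟨i₂, j₂, fun h => hc₂b (dir_unique (h ▸ hdi₂) hbj₂), hi₂, hj₂, rfl⟩
  have mII : pathVec G i₁ i₂ ∈ genAll G :=
    ⟨i₁, i₂, fun h => hcc (dir_unique (h ▸ hdi₁) hdi₂), hi₁, hi₂, rfl⟩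
  have mJJ : pathVec G j₁ j₂ ∈ genAll G :=
    ⟨j₁, j₂, fun h => hdd (dir_unique (h ▸ hdj₁) hdj₂), hj₁, hj₂, rfl⟩
  have key : uVec s(a, b) = (2⁻¹ : ℝ) •
      ((pathVec G i₁ j₁ - pathVec G i₁ i₂) + (pathVec G i₂ j₂ - pathVec G j₁ j₂)) := by
    rw [e11, e22, eII, eJJ, f1, f2, s1, s2]
    funext e
    simp only [Pi.add_apply, Pi.sub_apply, Pi.smul_apply, smul_eq_mul]
    ring
  rw [key]
  exact Submodule.smul_mem _ _ (add_mem (sub_mem_vspan m11 mII) (sub_mem_vspan m22 mJJ))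

lemma pathVec_sub_leafE_mem (hG : G.IsTree) (hE : 3 ≤ G.edgeSet.ncard)
    (hdeg2 : ∀ w, ¬ IsLeaf G w → (G.neighborSet w).ncard ≠ 2) {l k : V}
    (hl : IsLeaf G l) (hk : IsLeaf G k) (hlk : l ≠ k) :
    pathVec G l k - uVec (leafE hl) - uVec (leafE hk) ∈ vectorSpan ℝ (genAll G) := by
  classical
  set T := (tpath hG l k).edges.toFinset with hT
  have hEl : leafE hl ∈ T := List.mem_toFinset.2 (leafE_mem_edges hl hlk)
  have hEk : leafE hk ∈ T :=
    List.mem_toFinset.2 ((mem_edges_tpath_symm hG).1 (leafE_mem_edges hk hlk.symm))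
  have hne := leafE_ne hG hE hl hk hlk
  have hsum : pathVec G l k = uVec (leafE hl) + (uVec (leafE hk) +
      ∑ e ∈ (T.erase (leafE hl)).erase (leafE hk), uVec e) := by
    rw [pathVec_eq hG, eVec_eq_sum, ← hT, ← Finset.add_sum_erase T _ hEl,
      ← Finset.add_sum_erase (T.erase (leafE hl)) _
        (Finset.mem_erase.2 ⟨Ne.symm hne, hEk⟩)]
  have hmem : ∀ e ∈ (T.erase (leafE hl)).erase (leafE hk),
      uVec e ∈ vectorSpan ℝ (genAll G) := by
    intro e he
    induction e using Sym2.ind with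
    | _ x y =>
      rw [Finset.mem_erase, Finset.mem_erase] at he
      obtain ⟨hek, hel', heT⟩ := he
      have heE : s(x, y) ∈ (tpath hG l k).edges := List.mem_toFinset.1 heT
      rcases edges_tpath_classify hl hk heE with h | h | h
      · exact absurd h hel'
      · exact absurd h hek
      · exact uVec_internal_mem hG hE hdeg2 ((tpath hG l k).adj_of_mem_edges heE)
          (h x (Sym2.mem_mk_left _ _)) (h y (Sym2.mem_mk_right _ _))
  have hkey : pathVec G l k - uVec (leafE hl) - uVec (leafE hk) =
      ∑ e ∈ (T.erase (leafE hl)).erase (leafE hk), uVec e := by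
    rw [hsum]; abel
  rw [hkey]
  exact Submodule.sum_mem _ hmem

lemma exists_third_leaf (hG : G.IsTree) (hE : 3 ≤ G.edgeSet.ncard)
    (hdeg2 : ∀ w, ¬ IsLeaf G w → (G.neighborSet w).ncard ≠ 2) {i j : V}
    (hi : IsLeaf G i) (hj : IsLeaf G j) : ∃ k, IsLeaf G k ∧ k ≠ i ∧ k ≠ j := by
  have hm : ¬ IsLeaf G (nbr hi) := fun h => not_adj_leaves hG hE hi h (adj_nbr hi)
  obtain ⟨n₁, n₂, n₃, hn₁, hn₂, hn₃, h12, h13, h23⟩ := three_nbrs hG hE hdeg2 hm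
  obtain ⟨l₁, hl₁, hd₁⟩ := exists_leaf_dir (hG := hG) hn₁
  obtain ⟨l₂, hl₂, hd₂⟩ := exists_leaf_dir (hG := hG) hn₂
  obtain ⟨l₃, hl₃, hd₃⟩ := exists_leaf_dir (hG := hG) hn₃
  have hne12 : l₁ ≠ l₂ := fun h => h12 (dir_unique (h ▸ hd₁) hd₂)
  have hne13 : l₁ ≠ l₃ := fun h => h13 (dir_unique (h ▸ hd₁) hd₃)
  have hne23 : l₂ ≠ l₃ := fun h => h23 (dir_unique (h ▸ hd₂) hd₃)
  by_cases e1 : l₁ ≠ i ∧ l₁ ≠ j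
  · exact ⟨l₁, hl₁, e1.1, e1.2⟩
  by_cases e2 : l₂ ≠ i ∧ l₂ ≠ j
  · exact ⟨l₂, hl₂, e2.1, e2.2⟩
  · push_neg at e1 e2
    refine ⟨l₃, hl₃, fun h3i => ?_, fun h3j => ?_⟩
    · by_cases q1 : l₁ = i
      · exact hne13 (q1.trans h3i.symm)
      · have hj1 : l₁ = j := e1 q1
        by_cases q2 : l₂ = i
        · exact hne23 (q2.trans h3i.symm)
        · exact hne12 (hj1.trans (e2 q2).symm)
    · by_cases q1 : l₁ = j
      · exact hne13 (q1.trans h3j.symm)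
      · have hi1 : l₁ = i := by by_contra q; exact q1 (e1 q)
        by_cases q2 : l₂ = j
        · exact hne23 (q2.trans h3j.symm)
        · have hi2 : l₂ = i := by by_contra q; exact q2 (e2 q)
          exact hne12 (hi1.trans hi2.symm)

lemma uVec_leafE_sub_mem (hG : G.IsTree) (hE : 3 ≤ G.edgeSet.ncard)
    (hdeg2 : ∀ w, ¬ IsLeaf G w → (G.neighborSet w).ncard ≠ 2) {i j : V}
    (hi : IsLeaf G i) (hj : IsLeaf G j) :
    uVec (leafE hi) - uVec (leafE hj) ∈ vectorSpan ℝ (genAll G) := by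
  by_cases hij : i = j
  · subst hij
    rw [show leafE hj = leafE hi from rfl, sub_self]
    exact zero_mem _
  obtain ⟨k, hk, hki, hkj⟩ := exists_third_leaf hG hE hdeg2 hi hj
  have hA := pathVec_sub_leafE_mem hG hE hdeg2 hi hk (Ne.symm hki)
  have hB := pathVec_sub_leafE_mem hG hE hdeg2 hj hk (Ne.symm hkj)
  have hC : pathVec G i k - pathVec G j k ∈ vectorSpan ℝ (genAll G) :=
    sub_mem_vspan ⟨i, k, Ne.symm hki, hi, hk, rfl⟩ ⟨j, k, Ne.symm hkj, hj, hk, rfl⟩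
  have hkey : uVec (leafE hi) - uVec (leafE hj) =
      ((pathVec G i k - pathVec G j k) -
        (pathVec G i k - uVec (leafE hi) - uVec (leafE hk))) +
      ((pathVec G j k - uVec (leafE hj) - uVec (leafE hk)) - (pathVec G j k - pathVec G j k)) := by
    abel
  rw [hkey]
  exact add_mem (sub_mem hC hA) (sub_mem hB (by rw [sub_self]; exact zero_mem _))

lemma Wsub_le_vectorSpan (hG : G.IsTree) (hE : 3 ≤ G.edgeSet.ncard)
    (hdeg2 : ∀ w, ¬ IsLeaf G w → (G.neighborSet w).ncard ≠ 2) :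
    Wsub G ≤ vectorSpan ℝ (genAll G) := by
  classical
  rintro x ⟨hsupp, hL⟩
  obtain ⟨l₀, hl₀⟩ : ∃ l, IsLeaf G l := by
    obtain ⟨e, he⟩ : G.edgeSet.Nonempty := by
      rcases G.edgeSet.eq_empty_or_nonempty with h | h
      · rw [h, Set.ncard_empty] at hE; omega
      · exact h
    induction e using Sym2.ind with
    | _ p q =>
      obtain ⟨l, hl, -⟩ := exists_leaf_dir (hG := hG) ((SimpleGraph.mem_edgeSet G).1 he)
      exact ⟨l, hl⟩
  set E₀ := leafE hl₀ with hE₀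
  set g : Sym2 V → (Sym2 V → ℝ) :=
    fun e => if e ∈ LF G then uVec e - uVec E₀ else uVec e with hg
  have hgmem : ∀ e ∈ EF G, g e ∈ vectorSpan ℝ (genAll G) := by
    intro e heEF
    induction e using Sym2.ind with
    | _ p q =>
      have hadj : G.Adj p q := (SimpleGraph.mem_edgeSet G).1 (mem_EF.1 heEF)
      by_cases hLFe : s(p, q) ∈ LF G
      · rw [hg]
        simp only [if_pos hLFe]
        obtain ⟨-, z, hz, hlz⟩ := Finset.mem_filter.1 hLFe
        rcases Sym2.mem_iff.1 hz with rfl | rfl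
        · have hE1 : s(z, q) = leafE hlz := by rw [leafE, eq_nbr hlz hadj]
          rw [hE1]
          exact uVec_leafE_sub_mem hG hE hdeg2 hlz hl₀
        · have hE1 : s(p, z) = leafE hlz := by
            rw [Sym2.eq_swap, leafE, eq_nbr hlz hadj.symm]
          rw [hE1]
          exact uVec_leafE_sub_mem hG hE hdeg2 hlz hl₀
      · rw [hg]
        simp only [if_neg hLFe]
        refine uVec_internal_mem hG hE hdeg2 hadj ?_ ?_
        · exact fun hlx => hLFe (Finset.mem_filter.2 ⟨heEF, p, Sym2.mem_mk_left _ _, hlx⟩)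
        · exact fun hly => hLFe (Finset.mem_filter.2 ⟨heEF, q, Sym2.mem_mk_right _ _, hly⟩)
  have hrepr : x = ∑ e ∈ EF G, x e • g e := by
    have h1 : ∀ e, x e • g e = x e • uVec e - (if e ∈ LF G then x e else 0) • uVec E₀ := by
      intro e
      rw [hg]
      by_cases h : e ∈ LF G
      · simp [h, smul_sub]
      · simp [h]
    rw [Finset.sum_congr rfl (fun e _ => h1 e), Finset.sum_sub_distrib, ← Finset.sum_smul]
    have h2 : (∑ e ∈ EF G, if e ∈ LF G then x e else 0) = LLin G x := by
      rw [LLin_apply, ← Finset.sum_filter]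
      congr 1
      ext e
      rw [Finset.mem_filter]
      exact ⟨fun h => h.2, fun h => ⟨Finset.filter_subset _ _ h, h⟩⟩
    rw [h2, hL, zero_smul, sub_zero]
    funext e'
    rw [Finset.sum_apply]
    have h3 : ∀ e ∈ EF G, (x e • uVec e) e' = if e' = e then x e else 0 := by
      intro e _
      rw [Pi.smul_apply, smul_eq_mul, uVec]
      by_cases h : e' = e <;> simp [h]
    rw [Finset.sum_congr rfl h3, Finset.sum_ite_eq (EF G) e' x]
    by_cases h : e' ∈ EF G
    · rw [if_pos h]
    · rw [if_neg h]
      exact hsupp e' (fun hc => h (mem_EF.2 hc))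
  rw [hrepr]
  exact Submodule.sum_mem _ (fun e he => Submodule.smul_mem _ _ (hgmem e he))

/-! ### the facet side spanning -/

section FacetSpan

variable {u v : V}

lemma exists_bad (hG : G.IsTree) (hE : 3 ≤ G.edgeSet.ncard)
    (hdeg2 : ∀ w, ¬ IsLeaf G w → (G.neighborSet w).ncard ≠ 2)
    (hu : ¬ IsLeaf G u) (hv : G.Adj u v) :
    ∃ i₀ j₀, IsLeaf G i₀ ∧ IsLeaf G j₀ ∧ i₀ ≠ j₀ ∧
      ¬ onPath G i₀ j₀ s(u, v) ∧ (∃ w ∈ G.neighborSet u, onPath G i₀ j₀ s(u, w)) := by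
  obtain ⟨n₁, n₂, n₃, hn₁, hn₂, hn₃, h12, h13, h23⟩ := three_nbrs hG hE hdeg2 hu
  obtain ⟨w₁, w₂, hw₁, hw₂, hne, hw₁v, hw₂v⟩ :=
    pick_two (b := v) (G.Adj u) hn₁ hn₂ hn₃ h12 h13 h23
  obtain ⟨i₀, hi₀, hd₁⟩ := exists_leaf_dir (hG := hG) hw₁
  obtain ⟨j₀, hj₀, hd₂⟩ := exists_leaf_dir (hG := hG) hw₂
  have hij : i₀ ≠ j₀ := fun h => hne (dir_unique (h ▸ hd₁) hd₂)
  have hjoin := join_eq hd₁ hd₂ hne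
  have hm : u ∈ (tpath hG i₀ j₀).support := by
    rw [hjoin, Walk.support_append]
    exact List.mem_append_left _ (Walk.end_mem_support _)
  refine ⟨i₀, j₀, hi₀, hj₀, hij, ?_, ⟨w₁, hw₁, ?_⟩⟩
  · intro h
    rw [onPath_iff hG] at h
    rcases (u_edge_char hG hm).1 h with h' | h'
    · exact hw₁v (dir_unique hd₁ h')
    · exact hw₂v (dir_unique hd₂ h')
  · exact (onPath_iff hG).2 ((u_edge_char hG hm).2 (Or.inl hd₁))

lemma bad_sub_mem (hG : G.IsTree) (hu : ¬ IsLeaf G u) (hv : G.Adj u v)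
    {i j i' j' : V} (hi : IsLeaf G i) (hj : IsLeaf G j) (hi' : IsLeaf G i')
    (hj' : IsLeaf G j')
    (hnuv : ¬ onPath G i j s(u, v)) (hw : ∃ w ∈ G.neighborSet u, onPath G i j s(u, w))
    (hnuv' : ¬ onPath G i' j' s(u, v)) (hw' : ∃ w ∈ G.neighborSet u, onPath G i' j' s(u, w)) :
    pathVec G i j - pathVec G i' j' ∈ vectorSpan ℝ (genS G u v) := by
  obtain ⟨k, hk, hdk⟩ := exists_leaf_dir (hG := hG) hv
  obtain ⟨w₁, w₂, hne, hv1, hv2, hd1, hd2⟩ := bad_decomp hG hu hi hj hnuv hw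
  obtain ⟨w₁', w₂', hne', hv1', hv2', hd1', hd2'⟩ := bad_decomp hG hu hi' hj' hnuv' hw'
  have hik : pathVec G i k ∈ genS G u v :=
    ⟨i, k, fun h => hv1 (dir_unique (h ▸ hd1) hdk), hi, hk,
      Or.inl ((onPath_iff hG).2 ((join_mem hd1 hdk hv1).2 (Or.inr hdk))), rfl⟩
  have hjk : pathVec G j k ∈ genS G u v :=
    ⟨j, k, fun h => hv2 (dir_unique (h ▸ hd2) hdk), hj, hk,
      Or.inl ((onPath_iff hG).2 ((join_mem hd2 hdk hv2).2 (Or.inr hdk))), rfl⟩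
  have hik' : pathVec G i' k ∈ genS G u v :=
    ⟨i', k, fun h => hv1' (dir_unique (h ▸ hd1') hdk), hi', hk,
      Or.inl ((onPath_iff hG).2 ((join_mem hd1' hdk hv1').2 (Or.inr hdk))), rfl⟩
  have hjk' : pathVec G j' k ∈ genS G u v :=
    ⟨j', k, fun h => hv2' (dir_unique (h ▸ hd2') hdk), hj', hk,
      Or.inl ((onPath_iff hG).2 ((join_mem hd2' hdk hv2').2 (Or.inr hdk))), rfl⟩
  have e_ij := join_vec hd1 hd2 hne
  have e_ij' := join_vec hd1' hd2' hne'
  have e_ik := join_vec hd1 hdk hv1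
  have e_jk := join_vec hd2 hdk hv2
  have e_ik' := join_vec hd1' hdk hv1'
  have e_jk' := join_vec hd2' hdk hv2'
  have key : pathVec G i j - pathVec G i' j' =
      (pathVec G i k - pathVec G i' k) + (pathVec G j k - pathVec G j' k) := by
    rw [e_ij, e_ij', e_ik, e_jk, e_ik', e_jk', eVec_tpath_symm hG u j, eVec_tpath_symm hG u j']
    funext e
    simp only [Pi.add_apply, Pi.sub_apply]
    ring
  rw [key]
  exact add_mem (sub_mem_vspan hik hik') (sub_mem_vspan hjk hjk')

lemma Wsub'_le_vectorSpan (hG : G.IsTree) (hE : 3 ≤ G.edgeSet.ncard)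
    (hdeg2 : ∀ w, ¬ IsLeaf G w → (G.neighborSet w).ncard ≠ 2)
    (hu : ¬ IsLeaf G u) (hv : G.Adj u v) :
    Wsub' G u v ≤ vectorSpan ℝ (genS G u v) := by
  rintro x ⟨hxW, hxa⟩
  obtain ⟨i₀, j₀, hi₀, hj₀, hij₀, hnuv₀, hw₀⟩ := exists_bad hG hE hdeg2 hu hv
  obtain ⟨k, hk, hdk⟩ := exists_leaf_dir (hG := hG) hv
  obtain ⟨w₁, w₂, hne, hv1, hv2, hd1, hd2⟩ := bad_decomp hG hu hi₀ hj₀ hnuv₀ hw₀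
  have hystar : pathVec G i₀ k ∈ genS G u v :=
    ⟨i₀, k, fun h => hv1 (dir_unique (h ▸ hd1) hdk), hi₀, hk,
      Or.inl ((onPath_iff hG).2 ((join_mem hd1 hdk hv1).2 (Or.inr hdk))), rfl⟩
  set ystar := pathVec G i₀ k with hys
  set d₀ := pathVec G i₀ j₀ - ystar with hd₀
  have haLind₀ : aLin G u v d₀ = 2 := by
    have h1 : aLin G u v (pathVec G i₀ j₀) = 2 := by
      rcases aLin_pathVec (v := v) hG hu hi₀ hj₀ with ⟨-, hc⟩ | ⟨h2, -⟩
      · rcases hc with hc | hc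
        · exact absurd hc hnuv₀
        · obtain ⟨w, hwn, hwp⟩ := hw₀
          exact absurd hwp (hc w hwn)
      · exact h2
    have h2 : aLin G u v ystar = 0 := mem_genS_aLin hG hu hystar
    rw [hd₀, map_sub, h1, h2, sub_zero]
  have hM_le : vectorSpan ℝ (genAll G) ≤ vectorSpan ℝ (genS G u v) ⊔ (ℝ ∙ d₀) := by
    rw [vectorSpan_def ℝ (genAll G)]
    apply Submodule.span_le.2
    rintro dd hdd
    obtain ⟨y, hy, y', hy', rfl⟩ := Set.mem_vsub.1 hdd
    have main : ∀ z ∈ genAll G, z - ystar ∈ vectorSpan ℝ (genS G u v) ⊔ (ℝ ∙ d₀) := by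
      rintro z ⟨i, j, hij, hi, hj, rfl⟩
      by_cases hcond : onPath G i j s(u, v) ∨ ∀ w ∈ G.neighborSet u, ¬ onPath G i j s(u, w)
      · exact Submodule.mem_sup_left (sub_mem_vspan ⟨i, j, hij, hi, hj, hcond, rfl⟩ hystar)
      · push_neg at hcond
        obtain ⟨hcnuv, hcw⟩ := hcond
        have hD := bad_sub_mem hG hu hv hi hj hi₀ hj₀ hcnuv hcw hnuv₀ hw₀
        have hkey : pathVec G i j - ystar = (pathVec G i j - pathVec G i₀ j₀) + d₀ := by
          rw [hd₀]; abel
        rw [hkey]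
        exact add_mem (Submodule.mem_sup_left hD)
          (Submodule.mem_sup_right (Submodule.mem_span_singleton_self d₀))
    have hkey : y -ᵥ y' = (y - ystar) - (y' - ystar) := by rw [vsub_eq_sub]; abel
    rw [hkey]
    exact sub_mem (main y hy) (main y' hy')
  have hxM : x ∈ vectorSpan ℝ (genAll G) := Wsub_le_vectorSpan hG hE hdeg2 hxW
  obtain ⟨m, hm, d, hd, rfl⟩ := Submodule.mem_sup.1 (hM_le hxM)
  obtain ⟨c, rfl⟩ := Submodule.mem_span_singleton.1 hd
  have hma : aLin G u v m = 0 := (vectorSpan_genS_le hG hE hu hm).2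
  rw [map_add, hma, map_smul, haLind₀, smul_eq_mul, zero_add] at hxa
  have hc : c = 0 := by linarith
  rw [hc, zero_smul, add_zero]
  exact hm

end FacetSpan

/-! ### existence of independent directions & final assembly -/

section Final

variable {u v : V}

lemma exists_y1 (hG : G.IsTree) (hE : 3 ≤ G.edgeSet.ncard) :
    ∃ y : ↥(EF G) → ℝ, LLin G (Ext G y) = 1 := by
  classical
  obtain ⟨l₀, hl₀⟩ : ∃ l, IsLeaf G l := by
    obtain ⟨e, he⟩ : G.edgeSet.Nonempty := by
      rcases G.edgeSet.eq_empty_or_nonempty with h | h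
      · rw [h, Set.ncard_empty] at hE; omega
      · exact h
    induction e using Sym2.ind with
    | _ p q =>
      obtain ⟨l, hl, -⟩ := exists_leaf_dir (hG := hG) ((SimpleGraph.mem_edgeSet G).1 he)
      exact ⟨l, hl⟩
  have hsupp : ∀ e, e ∉ G.edgeSet → uVec (leafE hl₀) e = 0 := by
    intro e he
    rw [uVec, if_neg]
    rintro rfl
    exact he (adj_nbr hl₀)
  refine ⟨fun e => uVec (leafE hl₀) e.1, ?_⟩
  rw [Ext_eq_self hsupp, LLin_apply]
  have hc : ∀ e ∈ LF G, uVec (leafE hl₀) e = if e = leafE hl₀ then (1:ℝ) else 0 :=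
    fun _ _ => rfl
  rw [Finset.sum_congr rfl hc, Finset.sum_ite_eq' (LF G) (leafE hl₀) (fun _ => (1:ℝ)),
    if_pos (leafE_mem_LF hl₀)]

lemma exists_y2 (hG : G.IsTree) (hE : 3 ≤ G.edgeSet.ncard)
    (hdeg2 : ∀ w, ¬ IsLeaf G w → (G.neighborSet w).ncard ≠ 2)
    (hu : ¬ IsLeaf G u) (hv : G.Adj u v) :
    ∃ y : ↥(EF G) → ℝ, LLin G (Ext G y) = 0 ∧ aLin G u v (Ext G y) = 1 := by
  obtain ⟨i₀, j₀, hi₀, hj₀, hij₀, hnuv₀, hw₀⟩ := exists_bad hG hE hdeg2 hu hv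
  obtain ⟨k, hk, hdk⟩ := exists_leaf_dir (hG := hG) hv
  obtain ⟨w₁, w₂, hne, hv1, hv2, hd1, hd2⟩ := bad_decomp hG hu hi₀ hj₀ hnuv₀ hw₀
  have hik : i₀ ≠ k := fun h => hv1 (dir_unique (h ▸ hd1) hdk)
  have hystar : pathVec G i₀ k ∈ genS G u v :=
    ⟨i₀, k, hik, hi₀, hk,
      Or.inl ((onPath_iff hG).2 ((join_mem hd1 hdk hv1).2 (Or.inr hdk))), rfl⟩
  set x := (2⁻¹ : ℝ) • (pathVec G i₀ j₀ - pathVec G i₀ k) with hx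
  have hsupp : ∀ e, e ∉ G.edgeSet → x e = 0 := by
    intro e he
    rw [hx, Pi.smul_apply, Pi.sub_apply, pathVec_supp hG he, pathVec_supp hG he]
    simp
  have hL : LLin G x = 0 := by
    rw [hx, map_smul, map_sub, LLin_pathVec hG hE hi₀ hj₀ hij₀, LLin_pathVec hG hE hi₀ hk hik]
    simp
  have ha : aLin G u v x = 1 := by
    have h1 : aLin G u v (pathVec G i₀ j₀) = 2 := by
      rcases aLin_pathVec (v := v) hG hu hi₀ hj₀ with ⟨-, hc⟩ | ⟨h2, -⟩
      · rcases hc with hc | hc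
        · exact absurd hc hnuv₀
        · obtain ⟨w, hwn, hwp⟩ := hw₀
          exact absurd hwp (hc w hwn)
      · exact h2
    have h2 : aLin G u v (pathVec G i₀ k) = 0 := mem_genS_aLin hG hu hystar
    rw [hx, map_smul, map_sub, h1, h2]
    norm_num
  exact ⟨fun e => x e.1, by rw [Ext_eq_self hsupp]; exact hL,
    by rw [Ext_eq_self hsupp]; exact ha⟩

omit [Fintype V] in
lemma polyDim_convexHull (s : Set (Sym2 V → ℝ)) :
    polyDim (convexHull ℝ s) = Module.finrank ℝ (vectorSpan ℝ s) := by
  rw [polyDim, affineSpan_convexHull, direction_affineSpan]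

lemma EF_card (hG : G.IsTree) : (EF G).card = G.edgeSet.ncard := by
  rw [EF, Set.ncard_eq_toFinset_card _ (G.edgeSet.toFinite)]

lemma main_dims (hG : G.IsTree) (hE : 3 ≤ G.edgeSet.ncard)
    (hdeg2 : ∀ w, ¬ IsLeaf G w → (G.neighborSet w).ncard ≠ 2)
    (hu : ¬ IsLeaf G u) (hv : G.Adj u v) :
    polyDim (convexHull ℝ (genAll G)) + 1 = G.edgeSet.ncard ∧
    polyDim (convexHull ℝ (genS G u v)) + 2 = G.edgeSet.ncard := by
  have h1 : vectorSpan ℝ (genAll G) = Wsub G :=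
    le_antisymm (vectorSpan_genAll_le hG hE) (Wsub_le_vectorSpan hG hE hdeg2)
  have h2 : vectorSpan ℝ (genS G u v) = Wsub' G u v :=
    le_antisymm (vectorSpan_genS_le hG hE hu) (Wsub'_le_vectorSpan hG hE hdeg2 hu hv)
  have h3 := finrank_Wsub (G := G) (exists_y1 hG hE)
  have h4 := finrank_Wsub' (G := G) (exists_y1 hG hE) (exists_y2 hG hE hdeg2 hu hv)
  rw [EF_card hG] at h3 h4
  constructor
  · rw [polyDim_convexHull, h1]; exact h3
  · rw [polyDim_convexHull, h2]; exact h4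

end Final

end Finite

end FacetAux

open FacetAux

/-- For a tree with at least 3 edges and no internal vertex of degree 2,
an internal vertex `u` and a neighbor `v` of `u`, the convex hull of the path vectors whose
path either uses `{u,v}` or avoids `u` entirely equals
`P_T ∩ {−x_{u,v} + ∑_{w ∈ N(u)∖{v}} x_{u,w} = 0}` and is a facet of `P_T` of dimension
`|E| − 2`. -/
theorem facet_G [Fintype V] (G : SimpleGraph V)
    (hG : G.IsTree) (hE : 3 ≤ G.edgeSet.ncard)
    (hdeg2 : ∀ w, ¬ IsLeaf G w → (G.neighborSet w).ncard ≠ 2)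
    (u v : V) (hu : ¬ IsLeaf G u) (hv : v ∈ G.neighborSet u) :
    convexHull ℝ {x : Sym2 V → ℝ | ∃ i j : V, i ≠ j ∧ IsLeaf G i ∧ IsLeaf G j ∧
        (onPath G i j s(u, v) ∨ ∀ w ∈ G.neighborSet u, ¬ onPath G i j s(u, w)) ∧
        x = pathVec G i j}
      = pathPolytope G ∩
          {x | - x s(u, v) + ∑ᶠ w ∈ G.neighborSet u \ {v}, x s(u, w) = 0} ∧
    IsFacetOf (pathPolytope G)
      (convexHull ℝ {x : Sym2 V → ℝ | ∃ i j : V, i ≠ j ∧ IsLeaf G i ∧ IsLeaf G j ∧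
        (onPath G i j s(u, v) ∨ ∀ w ∈ G.neighborSet u, ¬ onPath G i j s(u, w)) ∧
        x = pathVec G i j}) ∧
    polyDim (convexHull ℝ {x : Sym2 V → ℝ | ∃ i j : V, i ≠ j ∧ IsLeaf G i ∧ IsLeaf G j ∧
        (onPath G i j s(u, v) ∨ ∀ w ∈ G.neighborSet u, ¬ onPath G i j s(u, w)) ∧
        x = pathVec G i j}) + 2 = G.edgeSet.ncard := by
  have hadj : G.Adj u v := hv
  have hpart1 := part1 (u := u) (v := v) hG hu
  have hdims := main_dims hG hE hdeg2 hu hadj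
  have hset0 : {x : Sym2 V → ℝ | - x s(u, v) + ∑ᶠ w ∈ G.neighborSet u \ {v}, x s(u, w) = 0}
      = {x : Sym2 V → ℝ | aLin G u v x = 0} := by
    ext x
    rw [Set.mem_setOf_eq, Set.mem_setOf_eq, finsum_eq_aLin]
  have hgoal1 : convexHull ℝ (genS G u v) = pathPolytope G ∩
      {x | - x s(u, v) + ∑ᶠ w ∈ G.neighborSet u \ {v}, x s(u, w) = 0} := by
    rw [hset0]
    exact hpart1
  have hnn : ∀ x ∈ pathPolytope G, 0 ≤ aLin G u v x := by
    intro x hx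
    have hP : pathPolytope G ⊆ {y | 0 ≤ aLin G u v y} :=
      convexHull_min (fun y hy => mem_genAll_nonneg hG hu hy)
        (convex_halfSpace_ge (aLin G u v).isLinear 0)
    exact hP hx
  refine ⟨hgoal1, ⟨⟨-(aLin G u v), 0, ?_, ?_⟩, ?_⟩, ?_⟩
  · intro x hx
    have := hnn x hx
    simp only [LinearMap.neg_apply]
    linarith
  · show convexHull ℝ (genS G u v) = _
    rw [hgoal1, hset0]
    ext x
    simp only [Set.mem_inter_iff, Set.mem_setOf_eq, LinearMap.neg_apply, neg_eq_zero]
  · show polyDim (convexHull ℝ (genS G u v)) + 1 = polyDim (pathPolytope G)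
    have e1 : polyDim (pathPolytope G) = polyDim (convexHull ℝ (genAll G)) := rfl
    rw [e1]
    omega
  · show polyDim (convexHull ℝ (genS G u v)) + 2 = G.edgeSet.ncard
    exact hdims.2
end
end
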